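/- arXiv:1104.4563 — 7 statements merged into one kernel-verified Lean document; each statement's English description precedes it below -/
import Mathlib

section
/- Fix A ∈ ℝ. If g is C² on an open neighborhood of A and ∫_{(1,∞)} Π(du) · max_{A−u ≤ ζ ≤ A} |g(ζ) − g(A)| < ∞, then ρ̄_{g,A} := ∫_{(0,∞)} Π(du) ∫_0^u e^{−Φz} |g(z+A−u) − g(A)| dz < ∞. -/
open MeasureTheory Real Set Filter

/-- Under (C1) `g` is `C²` on an open neighborhood of `A` and
(C2) `∫_{(1,∞)} ν(du) · max_{A−u ≤ ζ ≤ A} |g(ζ) − g(A)| < ∞`, the quantity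
`ρ̄_{g,A} = ∫_{(0,∞)} ν(du) ∫_0^u e^{−Φz} |g(z+A−u) − g(A)| dz` is finite. -/
theorem rho_bar_finite
    (ν : Measure ℝ) (Φ A : ℝ) (g : ℝ → ℝ)
    (hν : ∫⁻ z in Set.Ioi (0:ℝ), ENNReal.ofReal (min 1 (z ^ 2)) ∂ν < ⊤)
    (hΦ : 0 < Φ)
    (hgm : Measurable g)
    (hgb : ∀ K : Set ℝ, IsCompact K → ∃ M : ℝ, ∀ x ∈ K, |g x| ≤ M)
    (hC1 : ∃ ε > (0:ℝ), ContDiffOn ℝ 2 g (Set.Ioo (A - ε) (A + ε)))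
    (hC2 : ∫⁻ u in Set.Ioi (1:ℝ),
        ENNReal.ofReal (sSup ((fun ζ => |g ζ - g A|) '' Set.Icc (A - u) A)) ∂ν < ⊤) :
    ∫⁻ u in Set.Ioi (0:ℝ),
      (∫⁻ z in Set.Ioo (0:ℝ) u,
        ENNReal.ofReal (Real.exp (-Φ * z) * |g (z + A - u) - g A|)) ∂ν < ⊤ := by
  obtain ⟨ε, hε, hg2⟩ := hC1
  -- Lipschitz bound near A
  have hA : A ∈ Set.Ioo (A - ε) (A + ε) := by constructor <;> linarith
  have hca : ContDiffAt ℝ 1 g A :=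
    (hg2.contDiffAt (isOpen_Ioo.mem_nhds hA)).of_le one_le_two
  obtain ⟨K, t, ht, hlip⟩ := hca.exists_lipschitzOnWith
  obtain ⟨δ', hδ'pos, hball⟩ := Metric.mem_nhds_iff.1 ht
  set δ : ℝ := min (δ' / 2) 1 with hδdef
  have hδ0 : 0 < δ := lt_min (by linarith) one_pos
  have hδ1 : δ ≤ 1 := min_le_right _ _
  have hsub : Metric.closedBall A δ ⊆ t :=
    (Metric.closedBall_subset_ball (lt_of_le_of_lt (min_le_left _ _) (by linarith))).trans hball
  have hAt : A ∈ t := hsub (Metric.mem_closedBall_self hδ0.le)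
  have hlipd : ∀ x : ℝ, |x - A| ≤ δ → |g x - g A| ≤ K * |x - A| := by
    intro x hx
    have hxt : x ∈ t := hsub (by simpa [Metric.mem_closedBall, Real.dist_eq] using hx)
    have := hlip.dist_le_mul x hxt A hAt
    simpa [Real.dist_eq] using this
  -- bound on [A-1, A]
  obtain ⟨M, hM⟩ := hgb (Set.Icc (A - 1) A) isCompact_Icc
  set M' : ℝ := M + |g A| with hM'def
  have hM'bd : ∀ x ∈ Set.Icc (A - 1) A, |g x - g A| ≤ M' := fun x hx =>
    (abs_sub _ _).trans (add_le_add (hM x hx) le_rfl)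
  -- finiteness of the exponential lintegral
  have hexp : (∫⁻ z in Set.Ioi (0:ℝ), ENNReal.ofReal (Real.exp (-Φ * z))) < ⊤ :=
    (exp_neg_integrableOn_Ioi 0 hΦ).lintegral_lt_top
  set C : ENNReal := ∫⁻ z in Set.Ioi (0:ℝ), ENNReal.ofReal (Real.exp (-Φ * z)) with hCdef
  set F : ℝ → ENNReal := fun u =>
    ∫⁻ z in Set.Ioo (0:ℝ) u,
      ENNReal.ofReal (Real.exp (-Φ * z) * |g (z + A - u) - g A|) with hFdef
  -- pointwise exp bound
  have hexp1 : ∀ z : ℝ, 0 ≤ z → Real.exp (-Φ * z) ≤ 1 := by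
    intro z hz
    rw [Real.exp_le_one_iff]
    nlinarith
  -- Bound on the small piece
  have hsmall : ∫⁻ u in Set.Ioc 0 δ, F u ∂ν < ⊤ := by
    have hFb : ∀ u ∈ Set.Ioc (0:ℝ) δ,
        F u ≤ ENNReal.ofReal (K : ℝ) * ENNReal.ofReal (min 1 (u ^ 2)) := by
      intro u hu
      obtain ⟨hu0, huδ⟩ := hu
      have h1 : F u ≤ ∫⁻ _ in Set.Ioo (0:ℝ) u, ENNReal.ofReal ((K : ℝ) * u) := by
        apply setLIntegral_mono' measurableSet_Ioo
        intro z hz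
        obtain ⟨hz0, hzu⟩ := hz
        apply ENNReal.ofReal_le_ofReal
        have habs : |z + A - u - A| = u - z := by
          rw [show z + A - u - A = -(u - z) by ring, abs_neg, abs_of_nonneg (by linarith)]
        have h2 : |g (z + A - u) - g A| ≤ K * (u - z) := by
          have := hlipd (z + A - u) (by rw [habs]; linarith)
          rwa [habs] at this
        have h3 := hexp1 z hz0.le
        have hK0 : (0:ℝ) ≤ K := K.coe_nonneg
        nlinarith [abs_nonneg (g (z + A - u) - g A), Real.exp_pos (-Φ * z)]
      rw [setLIntegral_const, Real.volume_Ioo] at h1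
      refine h1.trans ?_
      rw [← ENNReal.ofReal_mul (mul_nonneg K.coe_nonneg hu0.le), ← ENNReal.ofReal_mul K.coe_nonneg]
      apply ENNReal.ofReal_le_ofReal
      have hmin : min 1 (u ^ 2) = u ^ 2 := min_eq_right (by nlinarith)
      rw [hmin]
      nlinarith [K.coe_nonneg]
    calc ∫⁻ u in Set.Ioc 0 δ, F u ∂ν
        ≤ ∫⁻ u in Set.Ioc 0 δ,
            ENNReal.ofReal (K : ℝ) * ENNReal.ofReal (min 1 (u ^ 2)) ∂ν :=
          setLIntegral_mono' measurableSet_Ioc hFb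
      _ = ENNReal.ofReal (K : ℝ) *
            ∫⁻ u in Set.Ioc 0 δ, ENNReal.ofReal (min 1 (u ^ 2)) ∂ν :=
          lintegral_const_mul' _ _ ENNReal.ofReal_ne_top
      _ ≤ ENNReal.ofReal (K : ℝ) *
            ∫⁻ u in Set.Ioi 0, ENNReal.ofReal (min 1 (u ^ 2)) ∂ν := by
          gcongr
          exact Set.Ioc_subset_Ioi_self
      _ < ⊤ := ENNReal.mul_lt_top ENNReal.ofReal_lt_top hν
  -- finiteness of ν (Ioc δ 1)
  have hνδ : ν (Set.Ioc δ 1) < ⊤ := by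
    have hle : ENNReal.ofReal (δ ^ 2) * ν (Set.Ioc δ 1)
        ≤ ∫⁻ z in Set.Ioi (0:ℝ), ENNReal.ofReal (min 1 (z ^ 2)) ∂ν := by
      rw [← setLIntegral_const]
      calc ∫⁻ _ in Set.Ioc δ 1, ENNReal.ofReal (δ ^ 2) ∂ν
          ≤ ∫⁻ z in Set.Ioc δ 1, ENNReal.ofReal (min 1 (z ^ 2)) ∂ν := by
            apply setLIntegral_mono' measurableSet_Ioc
            intro z hz
            apply ENNReal.ofReal_le_ofReal
            refine le_min (by nlinarith [hz.1, hz.2]) (by nlinarith [hz.1, hz.2])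
        _ ≤ ∫⁻ z in Set.Ioi 0, ENNReal.ofReal (min 1 (z ^ 2)) ∂ν :=
            lintegral_mono_set (fun z hz => lt_of_lt_of_le hδ0 hz.1.le)
    by_contra h
    push_neg at h
    have hT : ν (Set.Ioc δ 1) = ⊤ := top_le_iff.mp h
    rw [hT, ENNReal.mul_top (by simp [hδ0, pow_pos, hδ0.ne'])] at hle
    exact (lt_of_le_of_lt hle hν).ne rfl
  -- Bound on the middle piece
  have hmid : ∫⁻ u in Set.Ioc δ 1, F u ∂ν < ⊤ := by
    have hFb : ∀ u ∈ Set.Ioc δ (1:ℝ), F u ≤ ENNReal.ofReal M' := by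
      intro u hu
      obtain ⟨huδ, hu1⟩ := hu
      have hu0 : 0 < u := lt_of_le_of_lt hδ0.le huδ
      have h1 : F u ≤ ∫⁻ _ in Set.Ioo (0:ℝ) u, ENNReal.ofReal M' := by
        apply setLIntegral_mono' measurableSet_Ioo
        intro z hz
        obtain ⟨hz0, hzu⟩ := hz
        apply ENNReal.ofReal_le_ofReal
        have h2 : |g (z + A - u) - g A| ≤ M' :=
          hM'bd _ ⟨by linarith, by linarith⟩
        have h3 := hexp1 z hz0.le
        nlinarith [abs_nonneg (g (z + A - u) - g A), Real.exp_pos (-Φ * z)]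
      rw [setLIntegral_const, Real.volume_Ioo] at h1
      refine h1.trans ?_
      have hle1 : ENNReal.ofReal (u - 0) ≤ 1 := ENNReal.ofReal_le_one.mpr (by linarith)
      exact (mul_le_mul_right hle1 _).trans_eq (mul_one _)
    calc ∫⁻ u in Set.Ioc δ 1, F u ∂ν
        ≤ ∫⁻ (_u : ℝ) in Set.Ioc δ 1, ENNReal.ofReal M' ∂ν :=
          setLIntegral_mono' measurableSet_Ioc hFb
      _ = ENNReal.ofReal M' * ν (Set.Ioc δ 1) := setLIntegral_const _ _
      _ < ⊤ := ENNReal.mul_lt_top ENNReal.ofReal_lt_top hνδ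
  -- Bound on the tail piece
  have htail : ∫⁻ u in Set.Ioi 1, F u ∂ν < ⊤ := by
    have hFb : ∀ u ∈ Set.Ioi (1:ℝ), F u ≤
        C * ENNReal.ofReal (sSup ((fun ζ => |g ζ - g A|) '' Set.Icc (A - u) A)) := by
      intro u hu
      set S : ℝ := sSup ((fun ζ => |g ζ - g A|) '' Set.Icc (A - u) A) with hSdef
      have hu0 : (0:ℝ) < u := lt_trans one_pos hu
      obtain ⟨Mu, hMu⟩ := hgb (Set.Icc (A - u) A) isCompact_Icc
      have hbdd : BddAbove ((fun ζ => |g ζ - g A|) '' Set.Icc (A - u) A) := by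
        refine ⟨Mu + |g A|, fun y hy => ?_⟩
        obtain ⟨x, hx, rfl⟩ := hy
        exact (abs_sub _ _).trans (add_le_add (hMu x hx) le_rfl)
      have h1 : F u ≤ ∫⁻ z in Set.Ioo (0:ℝ) u,
          ENNReal.ofReal (Real.exp (-Φ * z)) * ENNReal.ofReal S := by
        apply setLIntegral_mono' measurableSet_Ioo
        intro z hz
        obtain ⟨hz0, hzu⟩ := hz
        rw [← ENNReal.ofReal_mul (Real.exp_pos _).le]
        apply ENNReal.ofReal_le_ofReal
        have hmem : |g (z + A - u) - g A| ∈
            (fun ζ => |g ζ - g A|) '' Set.Icc (A - u) A :=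
          ⟨z + A - u, ⟨by linarith, by linarith⟩, rfl⟩
        have h2 : |g (z + A - u) - g A| ≤ S := le_csSup hbdd hmem
        nlinarith [Real.exp_pos (-Φ * z), abs_nonneg (g (z + A - u) - g A)]
      have h3 : (∫⁻ z in Set.Ioo (0:ℝ) u,
          ENNReal.ofReal (Real.exp (-Φ * z)) * ENNReal.ofReal S)
          = (∫⁻ z in Set.Ioo (0:ℝ) u, ENNReal.ofReal (Real.exp (-Φ * z)))
              * ENNReal.ofReal S := by
        apply lintegral_mul_const'
        exact ENNReal.ofReal_ne_top
      rw [h3] at h1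
      refine h1.trans ?_
      gcongr
      exact lintegral_mono_set (fun z hz => hz.1)
    calc ∫⁻ u in Set.Ioi 1, F u ∂ν
        ≤ ∫⁻ u in Set.Ioi 1,
            C * ENNReal.ofReal (sSup ((fun ζ => |g ζ - g A|) '' Set.Icc (A - u) A)) ∂ν :=
          setLIntegral_mono' measurableSet_Ioi hFb
      _ = C * ∫⁻ u in Set.Ioi 1,
            ENNReal.ofReal (sSup ((fun ζ => |g ζ - g A|) '' Set.Icc (A - u) A)) ∂ν :=
          lintegral_const_mul' _ _ hexp.ne
      _ < ⊤ := ENNReal.mul_lt_top hexp hC2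
  -- Combine
  have hsplit : Set.Ioi (0:ℝ) = Set.Ioc 0 δ ∪ (Set.Ioc δ 1 ∪ Set.Ioi 1) := by
    rw [Set.Ioc_union_Ioi_eq_Ioi hδ1, Set.Ioc_union_Ioi_eq_Ioi hδ0.le]
  calc ∫⁻ u in Set.Ioi (0:ℝ), F u ∂ν
      = ∫⁻ u in Set.Ioc 0 δ ∪ (Set.Ioc δ 1 ∪ Set.Ioi 1), F u ∂ν := by rw [← hsplit]
    _ ≤ (∫⁻ u in Set.Ioc 0 δ, F u ∂ν) + ∫⁻ u in Set.Ioc δ 1 ∪ Set.Ioi 1, F u ∂ν :=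
        lintegral_union_le _ _ _
    _ ≤ (∫⁻ u in Set.Ioc 0 δ, F u ∂ν) +
          ((∫⁻ u in Set.Ioc δ 1, F u ∂ν) + ∫⁻ u in Set.Ioi 1, F u ∂ν) := by
        gcongr
        exact lintegral_union_le _ _ _
    _ < ⊤ := ENNReal.add_lt_top.mpr ⟨hsmall, ENNReal.add_lt_top.mpr ⟨hmid, htail⟩⟩
end

section
/- Fix A ∈ ℝ and x > A. Then the function B ↦ W(x−B) ∫_0^∞ e^{−Φy} h(y+B) dy − ∫_B^x W(x−y) h(y) dy (defined for B < x) is differentiable at B = A, with derivative −Θ(x−A) ∫_0^∞ e^{−Φy} h(y+A) dy, where Θ(y) := W'(y) − Φ W(y). -/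
open MeasureTheory Real Set Filter

lemma aux_Ioi_split (f : ℝ → ℝ) (a b : ℝ) (ha : IntegrableOn f (Set.Ioi a))
    (hb : IntegrableOn f (Set.Ioi b)) :
    ∫ u in Set.Ioi b, f u = (∫ u in Set.Ioi a, f u) - ∫ u in a..b, f u := by
  have key : ∀ c d : ℝ, c ≤ d → IntegrableOn f (Set.Ioi c) → IntegrableOn f (Set.Ioi d) →
      ∫ u in Set.Ioi c, f u = (∫ u in Set.Ioc c d, f u) + ∫ u in Set.Ioi d, f u := by
    intro c d hcd hc hd
    rw [← MeasureTheory.setIntegral_union (Set.Ioc_disjoint_Ioi le_rfl) measurableSet_Ioi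
      (hc.mono_set Set.Ioc_subset_Ioi_self) hd, Set.Ioc_union_Ioi_eq_Ioi hcd]
  rcases le_total a b with hab | hab
  · rw [intervalIntegral.integral_of_le hab, key a b hab ha hb]; ring
  · rw [intervalIntegral.integral_symm, intervalIntegral.integral_of_le hab,
      key b a hab hb ha]; ring

lemma aux_II (g : ℝ → ℝ) (hgm : Measurable g)
    (hgb : ∀ a b : ℝ, ∃ M : ℝ, ∀ y ∈ Set.uIcc a b, |g y| ≤ M) (a b : ℝ) :
    IntervalIntegrable g volume a b := by
  obtain ⟨M, hM⟩ := hgb a b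
  rw [intervalIntegrable_iff]
  apply MeasureTheory.Measure.integrableOn_of_bounded (M := M)
  · exact (measure_Ioc_lt_top).ne
  · exact hgm.aestronglyMeasurable
  · filter_upwards [ae_restrict_mem measurableSet_uIoc] with y hy
    exact (Real.norm_eq_abs _) ▸ hM y (Set.uIoc_subset_uIcc hy)

lemma aux_translate (Φ B : ℝ) (h : ℝ → ℝ)
    (hint : IntegrableOn (fun y => Real.exp (-Φ * y) * h (y + B)) (Set.Ioi 0)) :
    IntegrableOn (fun u => Real.exp (-Φ * u) * h u) (Set.Ioi B) ∧
    (∫ y in Set.Ioi (0:ℝ), Real.exp (-Φ * y) * h (y + B)) =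
      Real.exp (Φ * B) * ∫ u in Set.Ioi B, Real.exp (-Φ * u) * h u := by
  have hmp := measurePreserving_add_right (volume : Measure ℝ) B
  have hemb := measurableEmbedding_addRight B
  have hpre : (fun y : ℝ => y + B) ⁻¹' Set.Ioi B = Set.Ioi (0:ℝ) := by ext y; simp
  have hptw : ∀ y : ℝ, Real.exp (-Φ * y) * h (y + B) =
      Real.exp (Φ * B) * (Real.exp (-Φ * (y + B)) * h (y + B)) := by
    intro y
    rw [← mul_assoc, ← Real.exp_add, show Φ * B + -Φ * (y + B) = -Φ * y by ring]
  constructor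
  · have h2 : IntegrableOn ((fun u => Real.exp (-Φ * u) * h u) ∘ (· + B)) (Set.Ioi 0) := by
      have heq : ((fun u => Real.exp (-Φ * u) * h u) ∘ (· + B)) =
          fun y => Real.exp (-Φ * B) * (Real.exp (-Φ * y) * h (y + B)) := by
        funext y
        show Real.exp (-Φ * (y + B)) * h (y + B) = _
        rw [← mul_assoc, ← Real.exp_add, show -Φ * B + -Φ * y = -Φ * (y + B) by ring]
      rw [heq]
      exact hint.const_mul _
    have := hmp.integrableOn_comp_preimage hemb
      (f := fun u => Real.exp (-Φ * u) * h u) (s := Set.Ioi B)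
    rw [hpre] at this
    exact this.mp h2
  · have h2 := hmp.setIntegral_preimage_emb hemb
      (fun u => Real.exp (-Φ * u) * h u) (Set.Ioi B)
    rw [hpre] at h2
    calc (∫ y in Set.Ioi (0:ℝ), Real.exp (-Φ * y) * h (y + B))
        = ∫ y in Set.Ioi (0:ℝ), Real.exp (Φ * B) * (Real.exp (-Φ * (y + B)) * h (y + B)) :=
          integral_congr_ae (Filter.Eventually.of_forall (fun y => hptw y))
      _ = Real.exp (Φ * B) * ∫ y in Set.Ioi (0:ℝ), Real.exp (-Φ * (y + B)) * h (y + B) :=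
          integral_const_mul _ _
      _ = Real.exp (Φ * B) * ∫ u in Set.Ioi B, Real.exp (-Φ * u) * h u := by rw [h2]

/-- For `x > A`, the function
`B ↦ W(x−B) ∫_0^∞ e^{−Φy} h(y+B) dy − ∫_B^x W(x−y) h(y) dy`
is differentiable at `B = A` with derivative
`−Θ(x−A) ∫_0^∞ e^{−Φy} h(y+A) dy`, where `Θ(y) = W'(y) − Φ W(y)`. -/
theorem gamma3_hasDerivAt_in_A
    (Φ A x : ℝ) (W h : ℝ → ℝ)
    (hΦ : 0 < Φ)
    (hW0 : ∀ y < (0:ℝ), W y = 0)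
    (hWc : ContinuousOn W (Set.Ici 0))
    (hWd : ∀ y ∈ Set.Ioi (0:ℝ), DifferentiableAt ℝ W y)
    (hWd' : ContinuousOn (deriv W) (Set.Ioi 0))
    (hhm : Measurable h)
    (hhb : ∀ K : Set ℝ, IsCompact K → ∃ M : ℝ, ∀ y ∈ K, |h y| ≤ M)
    (hhint : ∀ B : ℝ, IntegrableOn (fun y => Real.exp (-Φ * y) * h (y + B)) (Set.Ioi 0))
    (hx : A < x) :
    HasDerivAt
      (fun B => W (x - B) * (∫ y in Set.Ioi (0:ℝ), Real.exp (-Φ * y) * h (y + B)) -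
        ∫ y in B..x, W (x - y) * h y)
      (-(deriv W (x - A) - Φ * W (x - A)) *
        ∫ y in Set.Ioi (0:ℝ), Real.exp (-Φ * y) * h (y + A))
      A := by
  -- basic notation
  set f : ℝ → ℝ := fun u => Real.exp (-Φ * u) * h u with hfdef
  set K : ℝ → ℝ := fun B => Real.exp (Φ * B) * W (x - B) with hKdef
  set J : ℝ → ℝ := fun B => ∫ u in Set.Ioi B, f u with hJdef
  set S : ℝ → ℝ := fun B => ∫ u in A..B, f u with hSdef
  set Wxh : ℝ → ℝ := fun y => W (x - y) * h y with hWxhdef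
  -- measurability of W
  have hWm : Measurable W := by
    apply measurable_of_continuousOn_compl_singleton (0:ℝ)
    intro y hy
    rcases (show y ≠ 0 from hy).lt_or_gt with hlt | hgt
    · have hev : W =ᶠ[nhds y] fun _ => 0 :=
        Filter.eventuallyEq_of_mem (Iio_mem_nhds hlt) (fun z hz => hW0 z hz)
      exact ((continuousAt_congr hev).mpr continuousAt_const).continuousWithinAt
    · exact (hWc.continuousAt (Ici_mem_nhds hgt)).continuousWithinAt
  -- boundedness of W on compact intervals
  have hWbdd : ∀ c d : ℝ, ∃ M, 0 ≤ M ∧ ∀ y ∈ Set.Icc c d, |W y| ≤ M := by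
    intro c d
    obtain ⟨C, hC⟩ := (isCompact_Icc (a := (0:ℝ)) (b := max d 0)).exists_bound_of_continuousOn
      (hWc.mono (fun y hy => hy.1))
    refine ⟨max C 0, le_max_right _ _, fun y hy => ?_⟩
    rcases lt_or_ge y 0 with hy0 | hy0
    · simp [hW0 y hy0]
    · have := hC y ⟨hy0, le_trans hy.2 (le_max_left _ _)⟩
      exact le_trans ((Real.norm_eq_abs _) ▸ this) (le_max_left _ _)
  -- measurability / integrability of f
  have hfm : Measurable f := ((measurable_id.const_mul (-Φ)).exp).mul hhm
  have hfint : ∀ B : ℝ, IntegrableOn f (Set.Ioi B) := fun B => (aux_translate Φ B h (hhint B)).1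
  have hIeq : ∀ B : ℝ, (∫ y in Set.Ioi (0:ℝ), Real.exp (-Φ * y) * h (y + B)) =
      Real.exp (Φ * B) * J B := fun B => (aux_translate Φ B h (hhint B)).2
  -- interval integrability of f and Wxh
  have hfII : ∀ a b : ℝ, IntervalIntegrable f volume a b := by
    apply aux_II f hfm
    intro a b
    obtain ⟨Mh, hMh⟩ := hhb (Set.uIcc a b) isCompact_uIcc
    have hcont : Continuous fun y : ℝ => Real.exp (-Φ * y) :=
      Real.continuous_exp.comp (continuous_const.mul continuous_id)
    obtain ⟨C, hC⟩ := (isCompact_uIcc (a := a) (b := b)).exists_bound_of_continuousOn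
      hcont.continuousOn
    refine ⟨max C 0 * max Mh 0, fun y hy => ?_⟩
    rw [hfdef, abs_mul]
    apply mul_le_mul (le_trans ((Real.norm_eq_abs _) ▸ hC y hy) (le_max_left _ _))
      (le_trans (hMh y hy) (le_max_left _ _)) (abs_nonneg _) (le_max_right _ _)
  have hWxhII : ∀ a b : ℝ, IntervalIntegrable Wxh volume a b := by
    apply aux_II Wxh ((hWm.comp (measurable_const.sub measurable_id)).mul hhm)
    intro a b
    obtain ⟨Mh, hMh⟩ := hhb (Set.uIcc a b) isCompact_uIcc
    obtain ⟨MW, hMW0, hMW⟩ := hWbdd (x - (a ⊔ b)) (x - (a ⊓ b))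
    refine ⟨MW * max Mh 0, fun y hy => ?_⟩
    rw [hWxhdef, abs_mul]
    have h1 : a ⊓ b ≤ y ∧ y ≤ a ⊔ b := by rwa [Set.uIcc, Set.mem_Icc] at hy
    have hy' : x - y ∈ Set.Icc (x - (a ⊔ b)) (x - (a ⊓ b)) :=
      Set.mem_Icc.mpr ⟨by linarith [h1.2], by linarith [h1.1]⟩
    exact mul_le_mul (hMW _ hy') (le_trans (hMh y hy) (le_max_left _ _)) (abs_nonneg _) hMW0
  -- derivative of K at A
  have hWA : HasDerivAt W (deriv W (x - A)) (x - A) :=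
    (hWd (x - A) (by simp; linarith)).hasDerivAt
  have hKd : HasDerivAt K
      (Real.exp (Φ * A) * Φ * W (x - A) + Real.exp (Φ * A) * (deriv W (x - A) * (-1))) A := by
    have hexp : HasDerivAt (fun B => Real.exp (Φ * B)) (Real.exp (Φ * A) * Φ) A := by
      simpa using ((hasDerivAt_id A).const_mul Φ).exp
    have hin : HasDerivAt (fun B : ℝ => x - B) (-1) A := by
      simpa using (hasDerivAt_id A).const_sub x
    have hWx : HasDerivAt (fun B => W (x - B)) (deriv W (x - A) * (-1)) A := hWA.comp A hin
    exact hexp.mul hWx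
  -- continuity of S at A through the zero value
  have hScont : Tendsto S (nhds A) (nhds 0) := by
    obtain ⟨Mf, hMf⟩ : ∃ Mf : ℝ, ∀ u ∈ Set.Icc (A - 1) (A + 1), |f u| ≤ Mf := by
      obtain ⟨Mh, hMh⟩ := hhb (Set.Icc (A - 1) (A + 1)) isCompact_Icc
      have hcont : Continuous fun y : ℝ => Real.exp (-Φ * y) :=
        Real.continuous_exp.comp (continuous_const.mul continuous_id)
      obtain ⟨C, hC⟩ := (isCompact_Icc (a := A - 1) (b := A + 1)).exists_bound_of_continuousOn
        hcont.continuousOn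
      refine ⟨max C 0 * max Mh 0, fun u hu => ?_⟩
      rw [hfdef, abs_mul]
      exact mul_le_mul (le_trans ((Real.norm_eq_abs _) ▸ hC u hu) (le_max_left _ _))
        (le_trans (hMh u hu) (le_max_left _ _)) (abs_nonneg _) (le_max_right _ _)
    have hb : ∀ᶠ B in nhds A, ‖S B‖ ≤ (max Mf 0) * |B - A| := by
      filter_upwards [Metric.ball_mem_nhds A one_pos] with B hB
      have hdist : |B - A| < 1 := by simpa [Real.dist_eq] using hB
      have habs := abs_lt.mp hdist
      have hsub : ∀ u ∈ Set.uIoc A B, ‖f u‖ ≤ max Mf 0 := by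
        intro u hu
        rw [Set.uIoc, Set.mem_Ioc] at hu
        have h2 : A - 1 ≤ A ⊓ B := le_inf (by linarith) (by linarith [habs.1])
        have h3 : A ⊔ B ≤ A + 1 := sup_le (by linarith) (by linarith [habs.2])
        exact le_trans ((Real.norm_eq_abs _) ▸
          hMf u ⟨by linarith [hu.1], by linarith [hu.2]⟩) (le_max_left _ _)
      exact intervalIntegral.norm_integral_le_of_norm_le_const hsub
    apply squeeze_zero_norm' hb
    have : Tendsto (fun B : ℝ => (max Mf 0) * |B - A|) (nhds A)
        (nhds ((max Mf 0) * |A - A|)) :=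
      tendsto_const_nhds.mul ((continuous_id.sub continuous_const).abs.tendsto A)
    simpa using this
  -- the three pieces
  have H1 : HasDerivAt (fun B => K B * J A)
      ((Real.exp (Φ * A) * Φ * W (x - A) + Real.exp (Φ * A) * (deriv W (x - A) * (-1))) * J A) A :=
    hKd.mul_const (J A)
  have H2 : HasDerivAt (fun B => ∫ u in A..B, (Wxh u - K A * f u)) 0 A := by
    set δ : ℝ := min 1 ((x - A) / 2) with hddef
    have hδpos : 0 < δ := lt_min one_pos (by linarith)
    have hδ1 : δ ≤ 1 := min_le_left _ _
    have hδ2 : δ ≤ (x - A) / 2 := min_le_right _ _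
    obtain ⟨Mh, hMh⟩ := hhb (Set.Icc (A - δ) (A + δ)) isCompact_Icc
    set M : ℝ := max Mh 0 with hMdef
    have hM0 : (0:ℝ) ≤ M := le_max_right _ _
    have hMh' : ∀ u ∈ Set.Icc (A - δ) (A + δ), |h u| ≤ M :=
      fun u hu => le_trans (hMh u hu) (le_max_left _ _)
    set g : ℝ → ℝ := fun u => M * |W (x - u) - K A * Real.exp (-Φ * u)| with hgdef
    have hexpc : Continuous fun u : ℝ => K A * Real.exp (-Φ * u) :=
      continuous_const.mul (Real.continuous_exp.comp (continuous_const.mul continuous_id))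
    have hgc : ContinuousOn g (Set.Iio x) := by
      intro u hu
      have hWcu : ContinuousAt (fun v : ℝ => W (x - v)) u := by
        have h1 : ContinuousAt W (x - u) := by
          apply hWc.continuousAt
          apply Ici_mem_nhds
          simp only [Set.mem_Iio] at hu
          linarith
        exact h1.comp ((continuous_const.sub continuous_id).continuousAt)
      exact (continuousAt_const.mul ((hWcu.sub hexpc.continuousAt).abs)).continuousWithinAt
    have hgA : ContinuousAt g A := hgc.continuousAt (Iio_mem_nhds hx)
    have hgsm : StronglyMeasurableAtFilter g (nhds A) volume :=
      ContinuousOn.stronglyMeasurableAtFilter isOpen_Iio hgc A hx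
    have hPsi : HasDerivAt (fun b => ∫ u in A..b, g u) (g A) A :=
      intervalIntegral.integral_hasDerivAt_right IntervalIntegrable.refl hgsm hgA
    have hgA0 : g A = 0 := by
      have hKA : K A * Real.exp (-Φ * A) = W (x - A) := by
        show Real.exp (Φ * A) * W (x - A) * Real.exp (-Φ * A) = _
        rw [mul_comm (Real.exp (Φ * A)) (W (x - A)), mul_assoc, ← Real.exp_add]
        simp
      show M * |W (x - A) - K A * Real.exp (-Φ * A)| = 0
      rw [hKA]
      simp
    rw [hasDerivAt_iff_tendsto_slope]
    have hslopePsi : Tendsto (slope (fun b => ∫ u in A..b, g u) A)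
        (nhdsWithin A {A}ᶜ) (nhds 0) := by
      have := hasDerivAt_iff_tendsto_slope.mp hPsi
      rwa [hgA0] at this
    have htend : Tendsto (fun B => ‖slope (fun b => ∫ u in A..b, g u) A B‖)
        (nhdsWithin A {A}ᶜ) (nhds 0) := by
      simpa using hslopePsi.norm
    apply squeeze_zero_norm' ?_ htend
    filter_upwards [mem_nhdsWithin_of_mem_nhds (Metric.ball_mem_nhds A hδpos),
      self_mem_nhdsWithin] with B hB hBA
    have hdist : |B - A| < δ := by simpa [Real.dist_eq] using hB
    have habs := abs_lt.mp hdist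
    have hinf : A - δ ≤ A ⊓ B := le_inf (by linarith) (by linarith [habs.1])
    have hsup : A ⊔ B ≤ A + δ := sup_le (by linarith) (by linarith [habs.2])
    have hsub : Set.uIoc A B ⊆ Set.Icc (A - δ) (A + δ) := by
      intro u hu
      rw [Set.uIoc, Set.mem_Ioc] at hu
      exact ⟨by linarith [hu.1], by linarith [hu.2]⟩
    have hptw : ∀ᵐ t ∂(volume.restrict (Set.uIoc A B)), ‖Wxh t - K A * f t‖ ≤ g t := by
      filter_upwards [ae_restrict_mem measurableSet_uIoc] with t ht
      have ht' := hsub ht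
      show ‖W (x - t) * h t - K A * (Real.exp (-Φ * t) * h t)‖ ≤
        M * |W (x - t) - K A * Real.exp (-Φ * t)|
      rw [show W (x - t) * h t - K A * (Real.exp (-Φ * t) * h t)
            = h t * (W (x - t) - K A * Real.exp (-Φ * t)) by ring,
        Real.norm_eq_abs, abs_mul]
      exact mul_le_mul (hMh' t ht') le_rfl (abs_nonneg _) hM0
    have hgII : IntervalIntegrable g volume A B := by
      apply ContinuousOn.intervalIntegrable
      apply hgc.mono
      intro u hu
      have h1 : A ⊓ B ≤ u ∧ u ≤ A ⊔ B := by rwa [Set.uIcc, Set.mem_Icc] at hu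
      simp only [Set.mem_Iio]
      have := h1.2
      linarith
    have hRB : ‖∫ u in A..B, (Wxh u - K A * f u)‖ ≤ |∫ u in A..B, g u| :=
      intervalIntegral.norm_integral_le_abs_of_norm_le hptw hgII
    have hRA : (∫ u in A..A, (Wxh u - K A * f u)) = 0 := intervalIntegral.integral_same
    have hPsiA : (∫ u in A..A, g u) = 0 := intervalIntegral.integral_same
    simp only [slope_def_field, hRA, hPsiA, sub_zero]
    rw [div_eq_mul_inv, div_eq_mul_inv, norm_mul, norm_mul]
    apply mul_le_mul_of_nonneg_right ?_ (norm_nonneg _)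
    calc ‖∫ u in A..B, (Wxh u - K A * f u)‖ ≤ |∫ u in A..B, g u| := hRB
      _ = ‖∫ u in A..B, g u‖ := (Real.norm_eq_abs _).symm
  have H3 : HasDerivAt (fun B => (K A - K B) * S B) 0 A := by
    rw [hasDerivAt_iff_tendsto_slope]
    have hslope : Tendsto (slope K A) (nhdsWithin A {A}ᶜ) (nhds
        (Real.exp (Φ * A) * Φ * W (x - A) + Real.exp (Φ * A) * (deriv W (x - A) * (-1)))) :=
      hasDerivAt_iff_tendsto_slope.mp hKd
    have h0 : Tendsto (fun B => -slope K A B * S B) (nhdsWithin A {A}ᶜ)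
        (nhds (-(Real.exp (Φ * A) * Φ * W (x - A) +
          Real.exp (Φ * A) * (deriv W (x - A) * (-1))) * 0)) :=
      (hslope.neg).mul (hScont.mono_left nhdsWithin_le_nhds)
    rw [mul_zero] at h0
    refine h0.congr' ?_
    filter_upwards [self_mem_nhdsWithin] with B hB
    have hBA : B - A ≠ 0 := sub_ne_zero.mpr hB
    have hSA : S A = 0 := intervalIntegral.integral_same
    simp only [slope_def_field, hSA]
    field_simp
    ring
  -- assemble
  have hsum : HasDerivAt (fun B => K B * J A - (∫ y in A..x, Wxh y) +
      (∫ u in A..B, (Wxh u - K A * f u)) + (K A - K B) * S B)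
      ((Real.exp (Φ * A) * Φ * W (x - A) + Real.exp (Φ * A) * (deriv W (x - A) * (-1))) * J A
        + 0 + 0) A :=
    ((H1.sub_const _).add H2).add H3
  have hfun : (fun B => W (x - B) * (∫ y in Set.Ioi (0:ℝ), Real.exp (-Φ * y) * h (y + B)) -
        ∫ y in B..x, W (x - y) * h y)
      = (fun B => K B * J A - (∫ y in A..x, Wxh y) +
        (∫ u in A..B, (Wxh u - K A * f u)) + (K A - K B) * S B) := by
    funext B
    have hG : (∫ y in B..x, Wxh y) = (∫ y in A..x, Wxh y) - ∫ y in A..B, Wxh y := by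
      rw [← intervalIntegral.integral_add_adjacent_intervals (hWxhII B A) (hWxhII A x),
        intervalIntegral.integral_symm]
      ring
    have hJB : J B = J A - S B := aux_Ioi_split f A B (hfint A) (hfint B)
    have hR : (∫ u in A..B, (Wxh u - K A * f u)) = (∫ u in A..B, Wxh u) - K A * S B := by
      rw [intervalIntegral.integral_sub (hWxhII A B) ((hfII A B).const_mul (K A)),
        intervalIntegral.integral_const_mul]
    show W (x - B) * (∫ y in Set.Ioi (0:ℝ), Real.exp (-Φ * y) * h (y + B)) -
        ∫ y in B..x, Wxh y = _
    rw [hIeq B, hG, hR, hJB]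
    show W (x - B) * (Real.exp (Φ * B) * (J A - S B)) - _ = _
    rw [hKdef]
    ring
  rw [hfun, hIeq A]
  convert hsum using 1
  ring
end

section
/- Fix A ∈ ℝ and assume: (C1) g is C² on an open neighborhood of A; (C2) ∫_{(1,∞)} Π(du) · max_{A−u ≤ ζ ≤ A} |g(ζ) − g(A)| < ∞. Then lim_{x↓A} φ_{g,A}(x) = 0. -/
open MeasureTheory Real Set Filter
open scoped Topology

/-- under (C1)-(C2),
`φ_{g,A}(x) = ∫_{(0,∞)} ν(du) ∫_0^{min(u,x−A)} W(x−z−A)(g(z+A−u) − g(A)) dz → 0`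
as `x ↓ A`. -/
theorem phi_tendsto_zero
    (ν : Measure ℝ) (Φ A C : ℝ) (g W : ℝ → ℝ)
    (hν : ∫⁻ z in Set.Ioi (0:ℝ), ENNReal.ofReal (min 1 (z ^ 2)) ∂ν < ⊤)
    (hΦ : 0 < Φ)
    (hgm : Measurable g)
    (hgb : ∀ K : Set ℝ, IsCompact K → ∃ M : ℝ, ∀ y ∈ K, |g y| ≤ M)
    (hW0 : ∀ y < (0:ℝ), W y = 0)
    (hWc : ContinuousOn W (Set.Ici 0))
    (hWm : MonotoneOn W (Set.Ici 0))
    (hWΦm : MonotoneOn (fun y => Real.exp (-Φ * y) * W y) (Set.Ici 0))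
    (hWΦb : ∀ y ∈ Set.Ici (0:ℝ), Real.exp (-Φ * y) * W y ≤ C)
    (hC1 : ∃ ε > (0:ℝ), ContDiffOn ℝ 2 g (Set.Ioo (A - ε) (A + ε)))
    (hC2 : ∫⁻ u in Set.Ioi (1:ℝ),
        ENNReal.ofReal (sSup ((fun ζ => |g ζ - g A|) '' Set.Icc (A - u) A)) ∂ν < ⊤) :
    Filter.Tendsto
      (fun x => ∫ u in Set.Ioi (0:ℝ),
        (∫ z in (0:ℝ)..(min u (x - A)), W (x - z - A) * (g (z + A - u) - g A)) ∂ν)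
      (nhdsWithin A (Set.Ioi A)) (nhds 0) := by
  classical
  -- Lipschitz constant near A
  obtain ⟨ε₀, hε₀, hg2⟩ := hC1
  have hAmem : A ∈ Ioo (A - ε₀) (A + ε₀) := by constructor <;> linarith
  have hopen : Ioo (A - ε₀) (A + ε₀) ∈ 𝓝 A := isOpen_Ioo.mem_nhds hAmem
  have hgA : ContDiffAt ℝ 1 g A :=
    (hg2.contDiffAt hopen).of_le (by norm_num)
  obtain ⟨K, t, ht, hlip⟩ := hgA.exists_lipschitzOnWith
  obtain ⟨δ, hδ, hball⟩ := Metric.mem_nhds_iff.1 ht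
  set ε : ℝ := min (δ / 2) 1 with hεdef
  have hεpos : 0 < ε := lt_min (by linarith) one_pos
  have hε1 : ε ≤ 1 := min_le_right _ _
  have hsub : Icc (A - ε) A ⊆ t := by
    intro ζ hζ
    apply hball
    rw [Metric.mem_ball, Real.dist_eq]
    have h1 : |ζ - A| ≤ ε := by
      rw [abs_le]; exact ⟨by linarith [hζ.1], by linarith [hζ.2]⟩
    have h2 : ε ≤ δ / 2 := min_le_left _ _
    linarith
  -- The sup function S
  set S : ℝ → ℝ := fun u => sSup ((fun ζ => |g ζ - g A|) '' Icc (A - u) A) with hSdef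
  have hbdd : ∀ u : ℝ, BddAbove ((fun ζ => |g ζ - g A|) '' Icc (A - u) A) := by
    intro u
    obtain ⟨M, hM⟩ := hgb (Icc (A - u) A) isCompact_Icc
    refine ⟨M + |g A|, ?_⟩
    rintro b ⟨ζ, hζ, rfl⟩
    have h1 : |g ζ - g A| ≤ |g ζ| + |g A| := by
      simpa [sub_eq_add_neg] using abs_add_le (g ζ) (-(g A))
    have h2 := hM ζ hζ
    linarith
  have hmem : ∀ u : ℝ, 0 ≤ u → ∀ ζ ∈ Icc (A - u) A, |g ζ - g A| ≤ S u := by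
    intro u hu ζ hζ
    exact le_csSup (hbdd u) ⟨ζ, hζ, rfl⟩
  have hS0 : ∀ u : ℝ, 0 ≤ u → 0 ≤ S u := by
    intro u hu
    have := hmem u hu A ⟨by linarith, le_refl A⟩
    simpa using this
  have hSmono : Monotone S := by
    intro u v huv
    by_cases hu : 0 ≤ u
    · exact csSup_le_csSup (hbdd v)
        ⟨_, Set.mem_image_of_mem _ (⟨by linarith, le_refl A⟩ : A ∈ Icc (A - u) A)⟩
        (Set.image_mono (Icc_subset_Icc (by linarith) le_rfl))
    · have hu' : Icc (A - u) A = ∅ := Icc_eq_empty (by intro h; exact hu (by linarith))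
      have hSu : S u = 0 := by rw [hSdef]; simp [hu']
      by_cases hv : 0 ≤ v
      · rw [hSu]; exact hS0 v hv
      · have hv' : Icc (A - v) A = ∅ := Icc_eq_empty (by intro h; exact hv (by linarith))
        rw [hSu]; simp [hSdef, hv']
  have hSK : ∀ u : ℝ, 0 ≤ u → u ≤ ε → S u ≤ (K : ℝ) * u := by
    intro u hu huε
    simp only [hSdef]
    refine csSup_le ⟨_, Set.mem_image_of_mem _ (⟨by linarith, le_refl A⟩ : A ∈ Icc (A - u) A)⟩ ?_
    rintro b ⟨ζ, hζ, rfl⟩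
    have hζt : ζ ∈ t := hsub ⟨by linarith [hζ.1], hζ.2⟩
    have hAt : A ∈ t := hsub ⟨by linarith, le_refl A⟩
    have := hlip.dist_le_mul ζ hζt A hAt
    rw [Real.dist_eq, Real.dist_eq] at this
    have hd : |ζ - A| ≤ u := by rw [abs_le]; exact ⟨by linarith [hζ.1], by linarith [hζ.2]⟩
    calc |g ζ - g A| ≤ (K : ℝ) * |ζ - A| := this
      _ ≤ (K : ℝ) * u := mul_le_mul_of_nonneg_left hd K.2
  -- measurability of W
  have hW2c : Continuous fun y => W (max y 0) :=
    hWc.comp_continuous (continuous_id.max continuous_const) fun y => mem_Ici.2 (le_max_right _ _)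
  have hWeq : W = fun y => Set.indicator (Ici (0:ℝ)) (fun y => W (max y 0)) y := by
    funext y
    by_cases hy : (0:ℝ) ≤ y
    · rw [Set.indicator_of_mem (mem_Ici.2 hy), max_eq_left hy]
    · rw [Set.indicator_of_notMem (by simpa using hy), hW0 y (lt_of_not_ge hy)]
  have hWmeas : Measurable W := by
    rw [hWeq]; exact hW2c.measurable.indicator measurableSet_Ici
  -- bound on W on [0,1]
  set W1 : ℝ := max |W 0| |W 1| with hW1def
  have hW1nn : 0 ≤ W1 := le_trans (abs_nonneg _) (le_max_left _ _)
  have hWb : ∀ y : ℝ, 0 ≤ y → y ≤ 1 → |W y| ≤ W1 := by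
    intro y h0 h1
    rcases le_total 0 (W y) with h | h
    · rw [abs_of_nonneg h]
      calc W y ≤ W 1 := hWm (mem_Ici.2 h0) (mem_Ici.2 zero_le_one) h1
        _ ≤ |W 1| := le_abs_self _
        _ ≤ W1 := le_max_right _ _
    · rw [abs_of_nonpos h]
      have h2 : W 0 ≤ W y := hWm (mem_Ici.2 le_rfl) (mem_Ici.2 h0) h0
      calc -W y ≤ -W 0 := neg_le_neg h2
        _ ≤ |W 0| := neg_le_abs _
        _ ≤ W1 := le_max_left _ _
  -- core bound
  have hcore : ∀ x : ℝ, A < x → x ≤ A + 1 → ∀ u : ℝ, 0 < u →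
      |∫ z in (0:ℝ)..(min u (x - A)), W (x - z - A) * (g (z + A - u) - g A)|
        ≤ W1 * S u * min u (x - A) := by
    intro x hx1 hx2 u hu
    have hm0 : 0 ≤ min u (x - A) := le_min hu.le (by linarith)
    have key : ‖∫ z in (0:ℝ)..(min u (x - A)), W (x - z - A) * (g (z + A - u) - g A)‖
        ≤ (W1 * S u) * |min u (x - A) - 0| := by
      apply intervalIntegral.norm_integral_le_of_norm_le_const
      intro z hz
      rw [Set.uIoc_of_le hm0] at hz
      obtain ⟨hz0, hzm⟩ := hz
      have hzx : z ≤ x - A := le_trans hzm (min_le_right _ _)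
      have hzu : z ≤ u := le_trans hzm (min_le_left _ _)
      rw [Real.norm_eq_abs, abs_mul]
      have h1 : |W (x - z - A)| ≤ W1 := hWb _ (by linarith) (by linarith)
      have h2 : |g (z + A - u) - g A| ≤ S u :=
        hmem u hu.le _ ⟨by linarith, by linarith⟩
      exact mul_le_mul h1 h2 (abs_nonneg _) hW1nn
    rw [Real.norm_eq_abs, sub_zero, abs_of_nonneg hm0] at key
    exact key
  -- the dominating function
  set bound : ℝ → ℝ := fun u => W1 * S u * min u 1 with hbdef
  have hbmeas : Measurable bound :=
    (measurable_const.mul hSmono.measurable).mul (measurable_id.min measurable_const)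
  have hbnn : ∀ u : ℝ, 0 < u → 0 ≤ bound u := fun u hu =>
    mul_nonneg (mul_nonneg hW1nn (hS0 u hu.le)) (le_min hu.le zero_le_one)
  -- integrability of bound
  have hint : Integrable bound (ν.restrict (Ioi 0)) := by
    refine ⟨hbmeas.aestronglyMeasurable, ?_⟩
    rw [hasFiniteIntegral_iff_ofReal
      ((ae_restrict_iff' measurableSet_Ioi).2 (ae_of_all _ fun u hu => hbnn u hu))]
    have hsplit1 : Ioc (0:ℝ) 1 ∪ Ioi 1 = Ioi 0 := Set.Ioc_union_Ioi_eq_Ioi zero_le_one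
    have hsplit2 : Ioc (0:ℝ) ε ∪ Ioc ε 1 = Ioc 0 1 := Set.Ioc_union_Ioc_eq_Ioc hεpos.le hε1
    rw [← hsplit1, lintegral_union measurableSet_Ioi (Set.Ioc_disjoint_Ioi le_rfl),
      ← hsplit2, lintegral_union measurableSet_Ioc (Set.Ioc_disjoint_Ioc_of_le le_rfl)]
    have P1 : ∫⁻ u in Ioc (0:ℝ) ε, ENNReal.ofReal (bound u) ∂ν < ⊤ := by
      have h1 : ∀ u ∈ Ioc (0:ℝ) ε, ENNReal.ofReal (bound u)
          ≤ ENNReal.ofReal (W1 * (K : ℝ)) * ENNReal.ofReal (min 1 (u ^ 2)) := by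
        intro u hu
        rw [← ENNReal.ofReal_mul (by positivity)]
        apply ENNReal.ofReal_le_ofReal
        have hu0 := hu.1
        have huε := hu.2
        have hu1 : u ≤ 1 := le_trans huε hε1
        have hmin : min u 1 = u := min_eq_left hu1
        have hmin2 : min 1 (u ^ 2) = u ^ 2 := min_eq_right (by nlinarith)
        rw [hbdef]
        simp only
        rw [hmin, hmin2]
        have hSu : S u ≤ (K : ℝ) * u := hSK u hu0.le huε
        calc W1 * S u * u ≤ W1 * ((K : ℝ) * u) * u := by
              apply mul_le_mul_of_nonneg_right _ hu0.le
              exact mul_le_mul_of_nonneg_left hSu hW1nn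
          _ = W1 * (K : ℝ) * u ^ 2 := by ring
      calc ∫⁻ u in Ioc (0:ℝ) ε, ENNReal.ofReal (bound u) ∂ν
          ≤ ∫⁻ u in Ioc (0:ℝ) ε,
              ENNReal.ofReal (W1 * (K : ℝ)) * ENNReal.ofReal (min 1 (u ^ 2)) ∂ν :=
            setLIntegral_mono' measurableSet_Ioc h1
        _ = ENNReal.ofReal (W1 * (K : ℝ)) *
              ∫⁻ u in Ioc (0:ℝ) ε, ENNReal.ofReal (min 1 (u ^ 2)) ∂ν :=
            lintegral_const_mul' _ _ ENNReal.ofReal_ne_top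
        _ ≤ ENNReal.ofReal (W1 * (K : ℝ)) *
              ∫⁻ u in Ioi (0:ℝ), ENNReal.ofReal (min 1 (u ^ 2)) ∂ν := by
            gcongr
            exact (fun u hu => lt_of_lt_of_le hu.1 le_rfl)
        _ < ⊤ := ENNReal.mul_lt_top ENNReal.ofReal_lt_top hν
    have hνmid : ν (Ioc ε 1) < ⊤ := by
      by_contra h
      push_neg at h
      have htop : ν (Ioc ε 1) = ⊤ := top_le_iff.1 h
      have h2 : ∫⁻ u in Ioc ε 1, ENNReal.ofReal (ε ^ 2) ∂ν
          ≤ ∫⁻ u in Ioc ε 1, ENNReal.ofReal (min 1 (u ^ 2)) ∂ν := by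
        apply setLIntegral_mono' measurableSet_Ioc
        intro u hu
        apply ENNReal.ofReal_le_ofReal
        have h3 : u ^ 2 ≤ 1 := by nlinarith [hu.1, hu.2, hεpos]
        rw [min_eq_right h3]
        nlinarith [hu.1, hεpos]
      rw [setLIntegral_const, htop, ENNReal.mul_top (by
        simp [ENNReal.ofReal_eq_zero]; positivity)] at h2
      have h4 : ∫⁻ u in Ioc ε 1, ENNReal.ofReal (min 1 (u ^ 2)) ∂ν
          ≤ ∫⁻ u in Ioi (0:ℝ), ENNReal.ofReal (min 1 (u ^ 2)) ∂ν :=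
        lintegral_mono_set (fun u hu => lt_trans hεpos hu.1)
      exact absurd (lt_of_le_of_lt (h2.trans h4) hν) (by simp)
    have P2 : ∫⁻ u in Ioc ε 1, ENNReal.ofReal (bound u) ∂ν < ⊤ := by
      have h1 : ∀ u ∈ Ioc ε 1, ENNReal.ofReal (bound u)
          ≤ ENNReal.ofReal (W1 * S 1) := by
        intro u hu
        apply ENNReal.ofReal_le_ofReal
        rw [hbdef]
        simp only
        have hS1 : S u ≤ S 1 := hSmono hu.2
        have hm1 : min u 1 ≤ 1 := min_le_right _ _
        have hm0 : 0 ≤ min u 1 := le_min (le_trans hεpos.le hu.1.le) zero_le_one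
        calc W1 * S u * min u 1 ≤ W1 * S 1 * min u 1 := by
              apply mul_le_mul_of_nonneg_right _ hm0
              exact mul_le_mul_of_nonneg_left hS1 hW1nn
          _ ≤ W1 * S 1 * 1 := by
              apply mul_le_mul_of_nonneg_left hm1
              exact mul_nonneg hW1nn (hS0 1 zero_le_one)
          _ = W1 * S 1 := mul_one _
      calc ∫⁻ u in Ioc ε 1, ENNReal.ofReal (bound u) ∂ν
          ≤ ∫⁻ _ in Ioc ε 1, ENNReal.ofReal (W1 * S 1) ∂ν :=
            setLIntegral_mono' measurableSet_Ioc h1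
        _ = ENNReal.ofReal (W1 * S 1) * ν (Ioc ε 1) := setLIntegral_const _ _
        _ < ⊤ := ENNReal.mul_lt_top ENNReal.ofReal_lt_top hνmid
    have P3 : ∫⁻ u in Ioi (1:ℝ), ENNReal.ofReal (bound u) ∂ν < ⊤ := by
      have h1 : ∀ u ∈ Ioi (1:ℝ), ENNReal.ofReal (bound u)
          ≤ ENNReal.ofReal W1 * ENNReal.ofReal (S u) := by
        intro u hu
        rw [← ENNReal.ofReal_mul hW1nn]
        apply ENNReal.ofReal_le_ofReal
        rw [hbdef]
        simp only
        have hm1 : min u 1 ≤ 1 := min_le_right _ _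
        have hm0 : 0 ≤ min u 1 := le_min (by linarith [mem_Ioi.1 hu]) zero_le_one
        calc W1 * S u * min u 1 ≤ W1 * S u * 1 := by
              apply mul_le_mul_of_nonneg_left hm1
              exact mul_nonneg hW1nn (hS0 u (by linarith [mem_Ioi.1 hu]))
          _ = W1 * S u := mul_one _
      calc ∫⁻ u in Ioi (1:ℝ), ENNReal.ofReal (bound u) ∂ν
          ≤ ∫⁻ u in Ioi (1:ℝ), ENNReal.ofReal W1 * ENNReal.ofReal (S u) ∂ν :=
            setLIntegral_mono' measurableSet_Ioi h1
        _ = ENNReal.ofReal W1 * ∫⁻ u in Ioi (1:ℝ), ENNReal.ofReal (S u) ∂ν :=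
            lintegral_const_mul' _ _ ENNReal.ofReal_ne_top
        _ < ⊤ := ENNReal.mul_lt_top ENNReal.ofReal_lt_top hC2
    exact ENNReal.add_lt_top.2 ⟨ENNReal.add_lt_top.2 ⟨P1, P2⟩, P3⟩
  -- measurability of the integrand
  have hmeasF : ∀ x : ℝ, A < x → AEStronglyMeasurable
      (fun u => ∫ z in (0:ℝ)..(min u (x - A)), W (x - z - A) * (g (z + A - u) - g A))
      (ν.restrict (Ioi 0)) := by
    intro x hx
    set f : ℝ × ℝ → ℝ := fun q =>
      Set.indicator {q : ℝ × ℝ | 0 < q.2 ∧ q.2 ≤ min q.1 (x - A)}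
        (fun q => W (x - q.2 - A) * (g (q.2 + A - q.1) - g A)) q with hfdef
    have hfmeas : Measurable f := by
      apply Measurable.indicator
      · exact (hWmeas.comp (by fun_prop : Measurable fun q : ℝ × ℝ => x - q.2 - A)).mul
          ((hgm.comp (by fun_prop : Measurable fun q : ℝ × ℝ => q.2 + A - q.1)).sub
            measurable_const)
      · exact (measurableSet_lt measurable_const measurable_snd).inter
          (measurableSet_le measurable_snd (measurable_fst.min measurable_const))
    have hH' : StronglyMeasurable fun u => ∫ z, f (u, z) :=
      hfmeas.stronglyMeasurable.integral_prod_right'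
    refine hH'.aestronglyMeasurable.congr ?_
    refine (ae_restrict_iff' measurableSet_Ioi).2 (ae_of_all _ fun u hu => ?_)
    have hu0 : (0:ℝ) < u := hu
    have hm0 : 0 ≤ min u (x - A) := le_min hu0.le (by linarith)
    show (∫ z, f (u, z)) = ∫ z in (0:ℝ)..(min u (x - A)), W (x - z - A) * (g (z + A - u) - g A)
    rw [intervalIntegral.integral_of_le hm0,
      ← MeasureTheory.integral_indicator measurableSet_Ioc]
    refine integral_congr_ae (ae_of_all _ fun z => ?_)
    simp only [hfdef]
    by_cases hz : z ∈ Ioc (0:ℝ) (min u (x - A))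
    · rw [Set.indicator_of_mem hz, Set.indicator_of_mem (show (u, z) ∈
        {q : ℝ × ℝ | 0 < q.2 ∧ q.2 ≤ min q.1 (x - A)} from ⟨hz.1, hz.2⟩)]
    · rw [Set.indicator_of_notMem hz, Set.indicator_of_notMem
        (show (u, z) ∉ {q : ℝ × ℝ | 0 < q.2 ∧ q.2 ≤ min q.1 (x - A)} from
          fun h => hz ⟨h.1, h.2⟩)]
  -- conclude by dominated convergence
  have hgoal : Filter.Tendsto
      (fun x => ∫ u in Set.Ioi (0:ℝ),
        (∫ z in (0:ℝ)..(min u (x - A)), W (x - z - A) * (g (z + A - u) - g A)) ∂ν)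
      (𝓝[>] A) (𝓝 (∫ u in Set.Ioi (0:ℝ), (0:ℝ) ∂ν)) := by
    apply tendsto_integral_filter_of_dominated_convergence bound
    · filter_upwards [self_mem_nhdsWithin] with x hx
      exact hmeasF x hx
    · filter_upwards [Ioo_mem_nhdsGT_of_mem (⟨le_refl A, by linarith⟩ : A ∈ Ico A (A + 1))]
        with x hx
      refine (ae_restrict_iff' measurableSet_Ioi).2 (ae_of_all _ fun u hu => ?_)
      have hu0 : (0:ℝ) < u := hu
      rw [Real.norm_eq_abs]
      calc |∫ z in (0:ℝ)..(min u (x - A)), W (x - z - A) * (g (z + A - u) - g A)|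
          ≤ W1 * S u * min u (x - A) := hcore x hx.1 hx.2.le u hu0
        _ ≤ bound u := by
            apply mul_le_mul_of_nonneg_left _ (mul_nonneg hW1nn (hS0 u hu0.le))
            exact min_le_min le_rfl (by linarith [hx.2])
    · exact hint
    · refine (ae_restrict_iff' measurableSet_Ioi).2 (ae_of_all _ fun u hu => ?_)
      have hu0 : (0:ℝ) < u := hu
      refine squeeze_zero_norm' (a := fun x => W1 * S u * (x - A)) ?_ ?_
      · filter_upwards [Ioo_mem_nhdsGT_of_mem (⟨le_refl A, by linarith⟩ : A ∈ Ico A (A + 1))]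
          with x hx
        rw [Real.norm_eq_abs]
        calc |∫ z in (0:ℝ)..(min u (x - A)), W (x - z - A) * (g (z + A - u) - g A)|
            ≤ W1 * S u * min u (x - A) := hcore x hx.1 hx.2.le u hu0
          _ ≤ W1 * S u * (x - A) :=
              mul_le_mul_of_nonneg_left (min_le_right _ _)
                (mul_nonneg hW1nn (hS0 u hu0.le))
      · have hcont : Filter.Tendsto (fun x : ℝ => W1 * S u * (x - A)) (𝓝 A)
            (𝓝 (W1 * S u * (A - A))) := by
          exact (continuous_const.mul (continuous_id.sub continuous_const)).tendsto A
        have := hcont.mono_left (nhdsWithin_le_nhds : 𝓝[Set.Ioi A] A ≤ 𝓝 A)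
        simpa using this
  simpa using hgoal
end

section
/- Fix A ∈ ℝ and assume: (C1) g is C² on an open neighborhood of A; (C2) ∫_{(1,∞)} Π(du) · max_{A−u ≤ ζ ≤ A} |g(ζ) − g(A)| < ∞. Then lim_{x↓A} U_A(x) = g(A) + W(0)·Ψ(A). Consequently, if W(0) > 0 then the continuous-fit condition lim_{x↓A} U_A(x) = g(A) holds if and only if Ψ(A) = 0, while if W(0) = 0 it holds automatically. -/
open MeasureTheory Real Set Filter

/-- `Z(x) = 1 + q ∫_0^{max(x,0)} W(y) dy`. -/
noncomputable def Zfun (q : ℝ) (W : ℝ → ℝ) (x : ℝ) : ℝ :=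
  1 + q * ∫ y in (0:ℝ)..(max x 0), W y

/-- `ρ_{g,B} = ∫_{(0,∞)} ν(du) ∫_0^u e^{−Φz}(g(z+B−u) − g(B)) dz`. -/
noncomputable def rhoFun (ν : Measure ℝ) (Φ : ℝ) (g : ℝ → ℝ) (B : ℝ) : ℝ :=
  ∫ u in Set.Ioi (0:ℝ), (∫ z in (0:ℝ)..u, Real.exp (-Φ * z) * (g (z + B - u) - g B)) ∂ν

/-- `φ_{g,B}(x) = ∫_{(0,∞)} ν(du) ∫_0^{min(u,x−B)} W(x−z−B)(g(z+B−u) − g(B)) dz`. -/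
noncomputable def phiFun (ν : Measure ℝ) (W g : ℝ → ℝ) (B x : ℝ) : ℝ :=
  ∫ u in Set.Ioi (0:ℝ),
    (∫ z in (0:ℝ)..(min u (x - B)), W (x - z - B) * (g (z + B - u) - g B)) ∂ν

/-- `∫_0^∞ e^{−Φy} h(y+B) dy`. -/
noncomputable def hInt (Φ : ℝ) (h : ℝ → ℝ) (B : ℝ) : ℝ :=
  ∫ y in Set.Ioi (0:ℝ), Real.exp (-Φ * y) * h (y + B)

/-- `Ψ(B) = −(q/Φ) g(B) + ρ_{g,B} + ∫_0^∞ e^{−Φy} h(y+B) dy`. -/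
noncomputable def PsiFun (q Φ : ℝ) (ν : Measure ℝ) (g h : ℝ → ℝ) (B : ℝ) : ℝ :=
  -(q / Φ) * g B + rhoFun ν Φ g B + hInt Φ h B

/-- Expected discounted payoff of the threshold strategy at level `B`, for `x > B`. -/
noncomputable def Ufun (q Φ : ℝ) (ν : Measure ℝ) (W g h : ℝ → ℝ) (B x : ℝ) : ℝ :=
  g B * (Zfun q W (x - B) - q / Φ * W (x - B)) + W (x - B) * rhoFun ν Φ g B -
    phiFun ν W g B x + W (x - B) * hInt Φ h B - ∫ y in B..x, W (x - y) * h y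

set_option maxHeartbeats 1000000

/-- Continuous fit: under (C1)-(C2),
`lim_{x↓A} U_A(x) = g(A) + W(0)Ψ(A)`; hence if `W(0) > 0` the continuous-fit
condition `lim_{x↓A} U_A(x) = g(A)` holds iff `Ψ(A) = 0`, while if `W(0) = 0` it
holds automatically. -/
theorem continuous_fit
    (ν : Measure ℝ) (q Φ A C : ℝ) (g W h : ℝ → ℝ)
    (hν : ∫⁻ z in Set.Ioi (0:ℝ), ENNReal.ofReal (min 1 (z ^ 2)) ∂ν < ⊤)
    (hq : 0 < q) (hΦ : 0 < Φ)
    (hgm : Measurable g)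
    (hgb : ∀ K : Set ℝ, IsCompact K → ∃ M : ℝ, ∀ y ∈ K, |g y| ≤ M)
    (hW0 : ∀ y < (0:ℝ), W y = 0)
    (hWc : ContinuousOn W (Set.Ici 0))
    (hWm : MonotoneOn W (Set.Ici 0))
    (hWΦm : MonotoneOn (fun y => Real.exp (-Φ * y) * W y) (Set.Ici 0))
    (hWΦb : ∀ y ∈ Set.Ici (0:ℝ), Real.exp (-Φ * y) * W y ≤ C)
    (hC1 : ∃ ε > (0:ℝ), ContDiffOn ℝ 2 g (Set.Ioo (A - ε) (A + ε)))
    (hC2 : ∫⁻ u in Set.Ioi (1:ℝ),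
        ENNReal.ofReal (sSup ((fun ζ => |g ζ - g A|) '' Set.Icc (A - u) A)) ∂ν < ⊤)
    (hhm : Measurable h)
    (hhb : ∀ K : Set ℝ, IsCompact K → ∃ M : ℝ, ∀ y ∈ K, |h y| ≤ M)
    (hhint : IntegrableOn (fun y => Real.exp (-Φ * y) * h (y + A)) (Set.Ioi 0)) :
    Filter.Tendsto (fun x => Ufun q Φ ν W g h A x) (nhdsWithin A (Set.Ioi A))
        (nhds (g A + W 0 * PsiFun q Φ ν g h A))
    ∧ (0 < W 0 →
        (Filter.Tendsto (fun x => Ufun q Φ ν W g h A x) (nhdsWithin A (Set.Ioi A))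
            (nhds (g A)) ↔ PsiFun q Φ ν g h A = 0))
    ∧ (W 0 = 0 →
        Filter.Tendsto (fun x => Ufun q Φ ν W g h A x) (nhdsWithin A (Set.Ioi A))
          (nhds (g A))) := by
  classical
  have hMemIoo : Ioo A (A+1) ∈ nhdsWithin A (Ioi A) :=
    Ioo_mem_nhdsGT_of_mem ⟨le_refl A, by linarith⟩
  have hsub : Tendsto (fun x : ℝ => x - A) (nhdsWithin A (Ioi A)) (nhds 0) := by
    simpa using ((continuous_sub_right A).tendsto A).mono_left nhdsWithin_le_nhds
  -- bound on h on [A, A+1]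
  obtain ⟨Mh, hMh⟩ := hhb (Icc A (A+1)) isCompact_Icc
  have hMh0 : 0 ≤ Mh := (abs_nonneg _).trans (hMh A ⟨le_refl A, by linarith⟩)
  -- bound on W on [0,1]
  set Wb : ℝ := |W 0| + |W 1| with hWbdef
  have hWb0 : 0 ≤ Wb := by positivity
  have hWb : ∀ y ∈ Icc (0:ℝ) 1, |W y| ≤ Wb := by
    intro y hy
    have h1 : W 0 ≤ W y := hWm self_mem_Ici hy.1 hy.1
    have h2 : W y ≤ W 1 := hWm hy.1 (by norm_num) hy.2
    have h3 : -|W 0| ≤ W 0 := neg_abs_le _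
    have h4 : W 1 ≤ |W 1| := le_abs_self _
    rw [abs_le]
    constructor <;> simp only [hWbdef] <;> linarith [abs_nonneg (W 0), abs_nonneg (W 1)]
  -- Lipschitz-type bound near A
  obtain ⟨ε, hε, hg2⟩ := hC1
  obtain ⟨Mg, hMg⟩ := hgb (Icc (A-1) A) isCompact_Icc
  have hMg0 : 0 ≤ Mg := (abs_nonneg _).trans (hMg A ⟨by linarith, le_refl A⟩)
  obtain ⟨K, t, ht, hK⟩ :=
    ((hg2.contDiffAt (Ioo_mem_nhds (show A - ε < A by linarith) (show A < A + ε by linarith))).of_le one_le_two).exists_lipschitzOnWith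
  obtain ⟨δ, hδ, hball⟩ := Metric.mem_nhds_iff.1 ht
  set δ' : ℝ := min (δ/2) 1 with hδ'def
  have hδ'0 : 0 < δ' := lt_min (by linarith) one_pos
  have hδ'δ : δ' < δ := lt_of_le_of_lt (min_le_left _ _) (by linarith)
  have hsubt : Icc (A - δ') A ⊆ t := by
    intro ζ hζ
    apply hball
    rw [Metric.mem_ball, Real.dist_eq, abs_lt]
    constructor <;> linarith [hζ.1, hζ.2]
  set L : ℝ := (K : ℝ) + 2*Mg/δ' with hLdef
  have hL0 : 0 ≤ L := by positivity
  have hLip : ∀ u ∈ Ioc (0:ℝ) 1, ∀ ζ ∈ Icc (A-u) A, |g ζ - g A| ≤ L * u := by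
    intro u hu ζ hζ
    by_cases hcase : u ≤ δ'
    · have hζt : ζ ∈ t := hsubt ⟨by linarith [hζ.1], hζ.2⟩
      have hAt : A ∈ t := hball (Metric.mem_ball_self hδ)
      have hd := hK.dist_le_mul ζ hζt A hAt
      rw [Real.dist_eq, Real.dist_eq] at hd
      have h1 : |ζ - A| ≤ u := by rw [abs_le]; constructor <;> linarith [hζ.1, hζ.2]
      have h2 : |g ζ - g A| ≤ (K:ℝ) * u :=
        hd.trans (mul_le_mul_of_nonneg_left h1 K.coe_nonneg)
      have h3 : 0 ≤ 2*Mg/δ' * u := mul_nonneg (div_nonneg (by linarith) hδ'0.le) hu.1.le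
      simp only [hLdef]; nlinarith
    · push_neg at hcase
      have h1 : |g ζ| ≤ Mg := hMg ζ ⟨by linarith [hζ.1, hu.2], hζ.2⟩
      have h2 : |g A| ≤ Mg := hMg A ⟨by linarith, le_refl A⟩
      have h3 : |g ζ - g A| ≤ 2*Mg := (abs_sub _ _).trans (by linarith)
      have h4 : 2*Mg/δ' * δ' ≤ 2*Mg/δ' * u :=
        mul_le_mul_of_nonneg_left hcase.le (by positivity)
      rw [div_mul_cancel₀ _ (ne_of_gt hδ'0)] at h4
      have h5 : 0 ≤ (K:ℝ) * u := mul_nonneg K.coe_nonneg (le_of_lt hu.1)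
      simp only [hLdef]; nlinarith
  -- the functions S, G, b
  set S : ℝ → ℝ := fun u => sSup ((fun ζ => |g ζ - g A|) '' Icc (A - u) A) with hSdef
  have hSbdd : ∀ u : ℝ, BddAbove ((fun ζ => |g ζ - g A|) '' Icc (A - u) A) := by
    intro u
    obtain ⟨M, hM⟩ := hgb (Icc (A-u) A) isCompact_Icc
    refine ⟨M + |g A|, ?_⟩
    rintro _ ⟨ζ, hζ, rfl⟩
    exact (abs_sub _ _).trans (by linarith [hM ζ hζ])
  have hSle : ∀ u : ℝ, ∀ ζ ∈ Icc (A-u) A, |g ζ - g A| ≤ S u := by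
    intro u ζ hζ
    exact le_csSup (hSbdd u) ⟨ζ, hζ, rfl⟩
  have hS0 : ∀ u : ℝ, 0 ≤ u → 0 ≤ S u := by
    intro u hu
    have : |g A - g A| ≤ S u := hSle u A ⟨by linarith, le_refl A⟩
    simpa using this
  have hSmono : Monotone S := by
    intro u v huv
    rcases lt_or_ge u 0 with hu | hu
    · have : Icc (A - u) A = ∅ := Icc_eq_empty (by intro hc; simp at hc; linarith)
      rcases lt_or_ge v 0 with hv | hv
      · have hv' : Icc (A - v) A = ∅ := Icc_eq_empty (by intro hc; simp at hc; linarith)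
        simp [hSdef, this, hv']
      · simp only [hSdef, this]
        simpa [Real.sSup_empty] using hS0 v hv
    · have hne : ((fun ζ => |g ζ - g A|) '' Icc (A - u) A).Nonempty :=
        ⟨|g A - g A|, A, ⟨by linarith, le_refl A⟩, rfl⟩
      exact csSup_le_csSup (hSbdd v) hne
        (image_mono (Icc_subset_Icc (by linarith) (le_refl A)))
  have hSmeas : Measurable S := hSmono.measurable
  set G : ℝ → ℝ := fun u => if u ≤ 1 then L * u else S u with hGdef
  have hGmeas : Measurable G := Measurable.ite measurableSet_Iic (measurable_const.mul measurable_id) hSmeas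
  have hG0 : ∀ u : ℝ, 0 < u → 0 ≤ G u := by
    intro u hu
    simp only [hGdef]
    split
    · positivity
    · exact hS0 u hu.le
  set b : ℝ → ℝ → ℝ := fun s u => Wb * (min u s * G u) with hbdef
  have hbmeas : ∀ s, Measurable (b s) :=
    fun s => measurable_const.mul ((measurable_id.min measurable_const).mul hGmeas)
  have hb_nonneg : ∀ s : ℝ, 0 < s → ∀ u : ℝ, 0 < u → 0 ≤ b s u := by
    intro s hs u hu
    have := hG0 u hu
    have : 0 ≤ min u s := le_min hu.le hs.le
    simp only [hbdef]
    exact mul_nonneg hWb0 (mul_nonneg this (hG0 u hu))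
  have hb_mono : ∀ s : ℝ, s ≤ 1 → ∀ u : ℝ, 0 < u → b s u ≤ b 1 u := by
    intro s hs u hu
    simp only [hbdef]
    have h1 : min u s ≤ min u 1 := min_le_min (le_refl u) hs
    exact mul_le_mul_of_nonneg_left (mul_le_mul_of_nonneg_right h1 (hG0 u hu)) hWb0
  -- integrability of b 1
  have hb1int : Integrable (b 1) (ν.restrict (Ioi 0)) := by
    refine ⟨(hbmeas 1).aestronglyMeasurable, ?_⟩
    rw [hasFiniteIntegral_iff_norm]
    have hsplit : Ioc (0:ℝ) 1 ∪ Ioi 1 = Ioi 0 := Ioc_union_Ioi_eq_Ioi (by norm_num)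
    have hdisj : Disjoint (Ioc (0:ℝ) 1) (Ioi 1) := Ioc_disjoint_Ioi le_rfl
    calc ∫⁻ u in Ioi (0:ℝ), ENNReal.ofReal ‖b 1 u‖ ∂ν
        = ∫⁻ u in Ioc (0:ℝ) 1, ENNReal.ofReal ‖b 1 u‖ ∂ν
          + ∫⁻ u in Ioi (1:ℝ), ENNReal.ofReal ‖b 1 u‖ ∂ν := by
          rw [← hsplit, lintegral_union measurableSet_Ioi hdisj]
      _ ≤ ENNReal.ofReal (Wb * L) * (∫⁻ u in Ioi (0:ℝ), ENNReal.ofReal (min 1 (u ^ 2)) ∂ν)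
          + ENNReal.ofReal Wb *
            (∫⁻ u in Ioi (1:ℝ),
              ENNReal.ofReal (sSup ((fun ζ => |g ζ - g A|) '' Icc (A - u) A)) ∂ν) := by
          gcongr ?_ + ?_
          · calc ∫⁻ u in Ioc (0:ℝ) 1, ENNReal.ofReal ‖b 1 u‖ ∂ν
                ≤ ∫⁻ u in Ioc (0:ℝ) 1,
                    ENNReal.ofReal (Wb * L) * ENNReal.ofReal (min 1 (u ^ 2)) ∂ν := by
                  apply setLIntegral_mono
                  · exact (measurable_const.mul
                      (ENNReal.measurable_ofReal.comp
                        (measurable_const.min (measurable_id.pow_const 2))))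
                  · intro u hu
                    have hu0 : 0 < u := hu.1
                    have hu1 : u ≤ 1 := hu.2
                    have hmin : min u (1:ℝ) = u := min_eq_left hu1
                    have hGu : G u = L * u := if_pos hu1
                    have hbval : b 1 u = (Wb * L) * u ^ 2 := by
                      simp only [hbdef, hmin, hGu]; ring
                    have hmin2 : min (1:ℝ) (u ^ 2) = u ^ 2 :=
                      min_eq_right (by nlinarith)
                    rw [Real.norm_eq_abs, hbval, abs_of_nonneg (by positivity),
                      hmin2, ← ENNReal.ofReal_mul (by positivity)]
              _ = ENNReal.ofReal (Wb * L)
                    * ∫⁻ u in Ioc (0:ℝ) 1, ENNReal.ofReal (min 1 (u ^ 2)) ∂ν := by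
                  rw [lintegral_const_mul]
                  exact ENNReal.measurable_ofReal.comp
                    (measurable_const.min (measurable_id.pow_const 2))
              _ ≤ ENNReal.ofReal (Wb * L)
                    * ∫⁻ u in Ioi (0:ℝ), ENNReal.ofReal (min 1 (u ^ 2)) ∂ν := by
                  gcongr
                  exact Ioc_subset_Ioi_self
          · calc ∫⁻ u in Ioi (1:ℝ), ENNReal.ofReal ‖b 1 u‖ ∂ν
                ≤ ∫⁻ u in Ioi (1:ℝ), ENNReal.ofReal Wb * ENNReal.ofReal (S u) ∂ν := by
                  apply setLIntegral_mono
                  · exact measurable_const.mul (ENNReal.measurable_ofReal.comp hSmeas)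
                  · intro u hu
                    have hu1 : (1:ℝ) < u := hu
                    have hmin : min u (1:ℝ) = 1 := min_eq_right hu1.le
                    have hGu : G u = S u := if_neg (not_le.2 hu1)
                    have hbval : b 1 u = Wb * S u := by
                      simp only [hbdef, hmin, hGu]; ring
                    rw [Real.norm_eq_abs, hbval,
                      abs_of_nonneg (mul_nonneg hWb0 (hS0 u (by linarith))),
                      ENNReal.ofReal_mul hWb0]
              _ = ENNReal.ofReal Wb * ∫⁻ u in Ioi (1:ℝ), ENNReal.ofReal (S u) ∂ν := by
                  rw [lintegral_const_mul]
                  exact ENNReal.measurable_ofReal.comp hSmeas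
              _ = ENNReal.ofReal Wb *
                    ∫⁻ u in Ioi (1:ℝ),
                      ENNReal.ofReal (sSup ((fun ζ => |g ζ - g A|) '' Icc (A - u) A)) ∂ν := rfl
      _ < ⊤ := by
          exact ENNReal.add_lt_top.2
            ⟨ENNReal.mul_lt_top ENNReal.ofReal_lt_top hν,
             ENNReal.mul_lt_top ENNReal.ofReal_lt_top hC2⟩
  -- inner integral bound
  have hinner : ∀ x ∈ Ioo A (A+1), ∀ u ∈ Ioi (0:ℝ),
      ‖∫ z in (0:ℝ)..(min u (x - A)), W (x - z - A) * (g (z + A - u) - g A)‖ ≤ b (x - A) u := by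
    intro x hx u hu
    have hs : 0 < x - A := sub_pos.2 hx.1
    have hs1 : x - A < 1 := by linarith [hx.2]
    have hm0 : 0 < min u (x - A) := lt_min hu hs
    have hbd : ∀ z ∈ Set.uIoc (0:ℝ) (min u (x - A)),
        ‖W (x - z - A) * (g (z + A - u) - g A)‖ ≤ Wb * G u := by
      intro z hz
      rw [Set.uIoc_of_le hm0.le] at hz
      have hz0 : 0 < z := hz.1
      have hzu : z ≤ u := hz.2.trans (min_le_left _ _)
      have hzs : z ≤ x - A := hz.2.trans (min_le_right _ _)
      have hWz : |W (x - z - A)| ≤ Wb := hWb _ ⟨by linarith, by linarith⟩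
      have hgbd : |g (z + A - u) - g A| ≤ G u := by
        simp only [hGdef]
        split
        · next hu1 => exact hLip u ⟨hu, hu1⟩ _ ⟨by linarith, by linarith⟩
        · exact hSle u _ ⟨by linarith, by linarith⟩
      rw [norm_mul, Real.norm_eq_abs, Real.norm_eq_abs]
      exact mul_le_mul hWz hgbd (abs_nonneg _) hWb0
    calc ‖∫ z in (0:ℝ)..(min u (x - A)), W (x - z - A) * (g (z + A - u) - g A)‖
        ≤ Wb * G u * |min u (x - A) - 0| :=
          intervalIntegral.norm_integral_le_of_norm_le_const hbd
      _ = b (x - A) u := by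
          rw [sub_zero, abs_of_pos hm0]; simp only [hbdef]; ring
  have hbsint : ∀ x ∈ Ioo A (A+1), Integrable (b (x - A)) (ν.restrict (Ioi 0)) := by
    intro x hx
    refine hb1int.mono (hbmeas _).aestronglyMeasurable ?_
    rw [ae_restrict_iff' measurableSet_Ioi]
    filter_upwards with u hu
    rw [Real.norm_eq_abs, Real.norm_eq_abs,
      abs_of_nonneg (hb_nonneg _ (sub_pos.2 hx.1) u hu),
      abs_of_nonneg (hb_nonneg 1 one_pos u hu)]
    exact hb_mono _ (by linarith [hx.2]) u hu
  have hphi_le : ∀ x ∈ Ioo A (A+1),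
      ‖phiFun ν W g A x‖ ≤ ∫ u in Ioi (0:ℝ), b (x - A) u ∂ν := by
    intro x hx
    calc ‖phiFun ν W g A x‖
        ≤ ∫ u in Ioi (0:ℝ),
            ‖∫ z in (0:ℝ)..(min u (x - A)), W (x - z - A) * (g (z + A - u) - g A)‖ ∂ν :=
          norm_integral_le_integral_norm _
      _ ≤ ∫ u in Ioi (0:ℝ), b (x - A) u ∂ν := by
          apply integral_mono_of_nonneg
          · filter_upwards with u
            exact norm_nonneg _
          · exact hbsint x hx
          · refine (ae_restrict_iff' measurableSet_Ioi).2 ?_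
            filter_upwards with u hu
            exact hinner x hx u hu
  -- dominated convergence for the bound integral
  have hbtend : Tendsto (fun x => ∫ u in Ioi (0:ℝ), b (x - A) u ∂ν)
      (nhdsWithin A (Ioi A)) (nhds 0) := by
    have hT : Tendsto (fun x => ∫ u in Ioi (0:ℝ), b (x - A) u ∂ν)
        (nhdsWithin A (Ioi A)) (nhds (∫ u in Ioi (0:ℝ), (0:ℝ) ∂ν)) := by
      refine tendsto_integral_filter_of_dominated_convergence (μ := ν.restrict (Ioi 0)) (l := nhdsWithin A (Ioi A))
        (F := fun x u => b (x - A) u) (f := fun _ => (0:ℝ)) (b 1) ?_ ?_ hb1int ?_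
      · filter_upwards with x
        exact (hbmeas _).aestronglyMeasurable
      · filter_upwards [hMemIoo] with x hx
        rw [ae_restrict_iff' measurableSet_Ioi]
        filter_upwards with u hu
        rw [Real.norm_eq_abs, abs_of_nonneg (hb_nonneg _ (sub_pos.2 hx.1) u hu)]
        exact hb_mono _ (by linarith [hx.2]) u hu
      · rw [ae_restrict_iff' measurableSet_Ioi]
        filter_upwards with u hu
        have hmin : Tendsto (fun x : ℝ => min u (x - A)) (nhdsWithin A (Ioi A)) (nhds 0) := by
          have h1 : Tendsto (fun x : ℝ => min u (x - A)) (nhdsWithin A (Ioi A))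
              (nhds (min u 0)) := tendsto_const_nhds.min hsub
          rwa [min_eq_right hu.le] at h1
        have h2 : Tendsto (fun x : ℝ => Wb * (min u (x - A) * G u)) (nhdsWithin A (Ioi A))
            (nhds (Wb * (0 * G u))) := (hmin.mul_const (G u)).const_mul Wb
        simpa [hbdef] using h2
    simpa using hT
  have hphi_tend : Tendsto (fun x => phiFun ν W g A x) (nhdsWithin A (Ioi A)) (nhds 0) := by
    apply squeeze_zero_norm' _ hbtend
    filter_upwards [hMemIoo] with x hx using hphi_le x hx
  -- W(x-A) → W 0
  have hsub' : Tendsto (fun x : ℝ => x - A) (nhdsWithin A (Ioi A)) (nhdsWithin 0 (Ici 0)) := by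
    rw [tendsto_nhdsWithin_iff]
    refine ⟨hsub, ?_⟩
    filter_upwards [self_mem_nhdsWithin] with x hx
    exact le_of_lt (sub_pos.2 (mem_Ioi.1 hx))
  have hWtend : Tendsto (fun x : ℝ => W (x - A)) (nhdsWithin A (Ioi A)) (nhds (W 0)) :=
    Filter.Tendsto.comp (hWc 0 self_mem_Ici) hsub'
  -- Z(x-A) → 1
  have hZint : Tendsto (fun x : ℝ => ∫ y in (0:ℝ)..(max (x - A) 0), W y)
      (nhdsWithin A (Ioi A)) (nhds 0) := by
    have hbnd : Tendsto (fun x : ℝ => Wb * (x - A)) (nhdsWithin A (Ioi A)) (nhds 0) := by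
      have h := hsub.const_mul Wb
      rwa [mul_zero] at h
    apply squeeze_zero_norm' (a := fun x => Wb * (x - A)) ?_ hbnd
    filter_upwards [hMemIoo] with x hx
    have hs : 0 < x - A := sub_pos.2 hx.1
    have hmax : max (x - A) 0 = x - A := max_eq_left hs.le
    rw [hmax]
    have hb2 : ∀ z ∈ Set.uIoc (0:ℝ) (x - A), ‖W z‖ ≤ Wb := by
      intro z hz
      rw [Set.uIoc_of_le hs.le] at hz
      rw [Real.norm_eq_abs]
      exact hWb z ⟨hz.1.le, by linarith [hz.2, hx.2]⟩
    calc ‖∫ y in (0:ℝ)..(x - A), W y‖ ≤ Wb * |x - A - 0| :=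
        intervalIntegral.norm_integral_le_of_norm_le_const hb2
      _ = Wb * (x - A) := by rw [sub_zero, abs_of_pos hs]
  have hZtend : Tendsto (fun x : ℝ => Zfun q W (x - A)) (nhdsWithin A (Ioi A)) (nhds 1) := by
    have h1 : Tendsto (fun x : ℝ => 1 + q * ∫ y in (0:ℝ)..(max (x - A) 0), W y)
        (nhdsWithin A (Ioi A)) (nhds (1 + q * 0)) := (hZint.const_mul q).const_add 1
    rw [mul_zero, add_zero] at h1
    exact h1
  -- last term → 0
  have hlast : Tendsto (fun x : ℝ => ∫ y in A..x, W (x - y) * h y)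
      (nhdsWithin A (Ioi A)) (nhds 0) := by
    have hbnd : Tendsto (fun x : ℝ => Wb * Mh * (x - A)) (nhdsWithin A (Ioi A)) (nhds 0) := by
      have h := hsub.const_mul (Wb * Mh)
      rwa [mul_zero] at h
    apply squeeze_zero_norm' (a := fun x => Wb * Mh * (x - A)) ?_ hbnd
    filter_upwards [hMemIoo] with x hx
    have hs : 0 < x - A := sub_pos.2 hx.1
    have hb2 : ∀ y ∈ Set.uIoc A x, ‖W (x - y) * h y‖ ≤ Wb * Mh := by
      intro y hy
      rw [Set.uIoc_of_le hx.1.le] at hy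
      rw [norm_mul, Real.norm_eq_abs, Real.norm_eq_abs]
      have h1 : |W (x - y)| ≤ Wb := hWb _ ⟨by linarith [hy.2], by linarith [hy.1, hx.2]⟩
      have h2 : |h y| ≤ Mh := hMh y ⟨hy.1.le, by linarith [hy.2, hx.2]⟩
      exact mul_le_mul h1 h2 (abs_nonneg _) hWb0
    calc ‖∫ y in A..x, W (x - y) * h y‖ ≤ Wb * Mh * |x - A| :=
        intervalIntegral.norm_integral_le_of_norm_le_const hb2
      _ = Wb * Mh * (x - A) := by rw [abs_of_pos hs]
  -- main limit
  have hmain : Tendsto (fun x => Ufun q Φ ν W g h A x) (nhdsWithin A (Ioi A))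
      (nhds (g A + W 0 * PsiFun q Φ ν g h A)) := by
    have T := (((((hZtend.sub (hWtend.const_mul (q / Φ))).const_mul (g A)).add
      (hWtend.mul_const (rhoFun ν Φ g A))).sub hphi_tend).add
      (hWtend.mul_const (hInt Φ h A))).sub hlast
    have hval : g A + W 0 * PsiFun q Φ ν g h A
        = g A * (1 - q / Φ * W 0) + W 0 * rhoFun ν Φ g A - 0 + W 0 * hInt Φ h A - 0 := by
      simp only [PsiFun]; ring
    rw [hval]
    simp only [Ufun]
    exact T
  refine ⟨hmain, ?_, ?_⟩
  · intro hW0pos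
    constructor
    · intro htend
      have huniq := tendsto_nhds_unique htend hmain
      have h0 : W 0 * PsiFun q Φ ν g h A = 0 := by linarith
      rcases mul_eq_zero.1 h0 with h' | h'
      · exact absurd h' (ne_of_gt hW0pos)
      · exact h'
    · intro hPsi
      have he : g A + W 0 * PsiFun q Φ ν g h A = g A := by rw [hPsi]; ring
      rwa [he] at hmain
  · intro hW00
    have he : g A + W 0 * PsiFun q Φ ν g h A = g A := by rw [hW00]; ring
    rwa [he] at hmain
end

section
/- Fix A ∈ ℝ and assume: (C1) g is C² on an open neighborhood of A; (C2) ∫_{(1,∞)} Π(du) · max_{A−u ≤ ζ ≤ A} |g(ζ) − g(A)| < ∞. Then lim_{x↓A} ∫_{(0,∞)} Π(du) ∫_0^{min(u, x−A)} W'(x−z−A)(g(z+A−u) − g(A)) dz = 0; that is, φ_{g,A}'(A+) = 0. -/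
open MeasureTheory Real Set Filter

private lemma derivNonneg_of_monotoneOn {W : ℝ → ℝ} (hWm : MonotoneOn W (Set.Ici 0))
    {y : ℝ} (hy : 0 < y) (hd : DifferentiableAt ℝ W y) : 0 ≤ deriv W y := by
  have hslope := hasDerivAt_iff_tendsto_slope.mp hd.hasDerivAt
  have h2 : Tendsto (slope W y) (nhdsWithin y (Set.Ioi y)) (nhds (deriv W y)) :=
    hslope.mono_left (nhdsWithin_mono _ (fun z hz => ne_of_gt hz))
  refine ge_of_tendsto h2 ?_
  filter_upwards [self_mem_nhdsWithin] with z hz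
  have hz' : y < z := hz
  have hW : W y ≤ W z := hWm hy.le (hy.trans hz').le hz'.le
  rw [slope_def_field]
  have hpos : (0:ℝ) < z - y := by linarith
  exact div_nonneg (by linarith) hpos.le

private lemma derivW_bound {W : ℝ → ℝ} {Φ C L : ℝ} (hΦ : 0 < Φ)
    (hWm : MonotoneOn W (Set.Ici 0))
    (hWd : ∀ y ∈ Set.Ioi (0:ℝ), DifferentiableAt ℝ W y)
    (hWΦb : ∀ y ∈ Set.Ici (0:ℝ), Real.exp (-Φ * y) * W y ≤ C)
    (hL : ∀ y ∈ Set.Ioi (0:ℝ), deriv (fun t => Real.exp (-Φ * t) * W t) y ≤ L) :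
    ∀ y ∈ Set.Ioc (0:ℝ) 1, |deriv W y| ≤ Real.exp Φ * (|L| + Φ * |C|) := by
  intro y hy
  have hy0 : 0 < y := hy.1
  have hdW : DifferentiableAt ℝ W y := hWd y hy0
  have hnn : 0 ≤ deriv W y := derivNonneg_of_monotoneOn hWm hy0 hdW
  rw [abs_of_nonneg hnn]
  have h1 : HasDerivAt (fun t : ℝ => Real.exp (-Φ * t)) (Real.exp (-Φ * y) * (-Φ)) y := by
    simpa [mul_comm] using (((hasDerivAt_id y).const_mul (-Φ)).exp)
  have h3 : HasDerivAt (fun t => Real.exp (-Φ * t) * W t)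
      (Real.exp (-Φ * y) * (-Φ) * W y + Real.exp (-Φ * y) * deriv W y) y :=
    h1.mul hdW.hasDerivAt
  have h5 := hL y hy0
  rw [h3.deriv] at h5
  have hb := hWΦb y hy0.le
  have key : Real.exp (-Φ * y) * deriv W y ≤ L + Φ * C := by nlinarith
  have hprod : Real.exp (Φ * y) * Real.exp (-Φ * y) = 1 := by
    rw [← Real.exp_add]; ring_nf; exact Real.exp_zero
  have h6 : deriv W y ≤ Real.exp (Φ * y) * (L + Φ * C) := by
    have := mul_le_mul_of_nonneg_left key (Real.exp_pos (Φ * y)).le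
    calc deriv W y = Real.exp (Φ * y) * Real.exp (-Φ * y) * deriv W y := by rw [hprod]; ring
      _ = Real.exp (Φ * y) * (Real.exp (-Φ * y) * deriv W y) := by ring
      _ ≤ Real.exp (Φ * y) * (L + Φ * C) := this
  calc deriv W y ≤ Real.exp (Φ * y) * (L + Φ * C) := h6
    _ ≤ Real.exp (Φ * y) * (|L| + Φ * |C|) := by
        refine mul_le_mul_of_nonneg_left ?_ (Real.exp_pos _).le
        have := le_abs_self L; have := le_abs_self C; nlinarith
    _ ≤ Real.exp Φ * (|L| + Φ * |C|) := by
        refine mul_le_mul_of_nonneg_right (Real.exp_le_exp.mpr ?_) (by positivity)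
        nlinarith [hy.2]

private lemma phi_inner_bound (W g : ℝ → ℝ) (A D ε₁ : ℝ) (hD0 : 0 ≤ D) (hε₁le1 : ε₁ ≤ 1)
    (hDbd : ∀ y ∈ Set.Ioc (0:ℝ) 1, |deriv W y| ≤ D) :
    ∀ x ∈ Set.Ioo A (A + ε₁), ∀ u : ℝ, 0 < u → ∀ J : ℝ,
      (∀ ζ ∈ Set.Icc (A - u) A, |g ζ - g A| ≤ J) →
      |∫ z in (0:ℝ)..(min u (x - A)), deriv W (x - z - A) * (g (z + A - u) - g A)|
        ≤ D * J * min u (x - A) := by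
  intro x hx u hu J hJ
  have hδ : 0 < x - A := by linarith [hx.1]
  have hδ1 : x - A ≤ 1 := by nlinarith [hx.2]
  set m : ℝ := min u (x - A) with hmdef
  have hm0 : 0 ≤ m := le_min hu.le hδ.le
  have hmu : m ≤ u := min_le_left _ _
  have hmδ : m ≤ x - A := min_le_right _ _
  have hJ0 : 0 ≤ J := le_trans (abs_nonneg _) (hJ A ⟨by linarith, le_refl A⟩)
  have hae : ∀ᵐ z : ℝ, z ∈ Set.uIoc (0:ℝ) m →
      ‖deriv W (x - z - A) * (g (z + A - u) - g A)‖ ≤ D * J := by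
    filter_upwards [measure_eq_zero_iff_ae_notMem.mp (Real.volume_singleton (a := m))] with z hzm hz
    rw [Set.uIoc_of_le hm0] at hz
    have hz1 : 0 < z := hz.1
    have hz2 : z < m := lt_of_le_of_ne hz.2 (by simpa using hzm)
    have h1 : |deriv W (x - z - A)| ≤ D := hDbd _ ⟨by linarith, by linarith⟩
    have h2 : |g (z + A - u) - g A| ≤ J := hJ _ ⟨by linarith, by linarith⟩
    rw [Real.norm_eq_abs, abs_mul]
    exact mul_le_mul h1 h2 (abs_nonneg _) hD0
  have := intervalIntegral.norm_integral_le_of_norm_le_const_ae hae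
  rw [Real.norm_eq_abs] at this
  calc |∫ z in (0:ℝ)..m, deriv W (x - z - A) * (g (z + A - u) - g A)|
      ≤ D * J * |m - 0| := this
    _ = D * J * m := by rw [sub_zero, abs_of_nonneg hm0]

private lemma phi_meas_aux (ν : Measure ℝ) (W g : ℝ → ℝ) (A ε₁ : ℝ) (hε₁pos : 0 < ε₁)
    (hgm : Measurable g) :
    ∀ᶠ x in nhdsWithin A (Set.Ioi A), AEStronglyMeasurable
      (fun u => ∫ z in (0:ℝ)..(min u (x - A)), deriv W (x - z - A) * (g (z + A - u) - g A))
      (ν.restrict (Set.Ioi 0)) := by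
  have hmem : Set.Ioo A (A + ε₁) ∈ nhdsWithin A (Set.Ioi A) :=
    Ioo_mem_nhdsGT_of_mem ⟨le_refl A, by linarith⟩
  filter_upwards [hmem] with x hx
  have hδ : 0 < x - A := by linarith [hx.1]
  set Q : ℝ × ℝ → ℝ := fun p =>
    Set.indicator {q : ℝ × ℝ | q.2 ∈ Set.Ioc 0 (min q.1 (x - A))}
      (fun q => deriv W (x - q.2 - A) * (g (q.2 + A - q.1) - g A)) p with hQdef
  have hSet : MeasurableSet {q : ℝ × ℝ | q.2 ∈ Set.Ioc 0 (min q.1 (x - A))} := by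
    have : {q : ℝ × ℝ | q.2 ∈ Set.Ioc 0 (min q.1 (x - A))}
        = {q : ℝ × ℝ | 0 < q.2} ∩ ({q : ℝ × ℝ | q.2 ≤ q.1} ∩ {q : ℝ × ℝ | q.2 ≤ x - A}) := by
      ext q; simp [Set.mem_Ioc, le_min_iff, and_assoc]
    rw [this]
    exact (measurableSet_lt measurable_const measurable_snd).inter
      ((measurableSet_le measurable_snd measurable_fst).inter
        (measurableSet_le measurable_snd measurable_const))
  have hQmeas : Measurable Q := by
    refine Measurable.indicator ?_ hSet
    exact (((measurable_deriv W).comp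
        ((measurable_const.sub measurable_snd).sub measurable_const)).mul
      ((hgm.comp ((measurable_snd.add measurable_const).sub measurable_fst)).sub
        measurable_const))
  have hG : StronglyMeasurable fun u => ∫ z, Q (u, z) :=
    hQmeas.stronglyMeasurable.integral_prod_right'
  refine hG.aestronglyMeasurable.congr ?_
  filter_upwards [ae_restrict_mem measurableSet_Ioi] with u hu
  have hu0 : (0:ℝ) < u := hu
  have hm0 : (0:ℝ) ≤ min u (x - A) := le_min hu0.le hδ.le
  have step1 : (∫ z, Q (u, z))
      = ∫ z in Set.Ioc (0:ℝ) (min u (x - A)), deriv W (x - z - A) * (g (z + A - u) - g A) := by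
    rw [← MeasureTheory.integral_indicator measurableSet_Ioc]
    congr 1
  rw [step1, intervalIntegral.integral_of_le hm0]

private lemma phi_bound_aux (ν : Measure ℝ) (W g : ℝ → ℝ) (A D ε₁ K M : ℝ) (S : ℝ → ℝ)
    (hD0 : 0 ≤ D) (hε₁pos : 0 < ε₁) (hε₁le1 : ε₁ ≤ 1) (hK0 : 0 ≤ K) (hM0 : 0 ≤ M)
    (hLip : ∀ ζ ∈ Set.Icc (A - ε₁) A, |g ζ - g A| ≤ K * (A - ζ))
    (hM : ∀ y ∈ Set.Icc (A - 1) A, |g y| ≤ M)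
    (hSle : ∀ u : ℝ, 0 ≤ u → ∀ ζ ∈ Set.Icc (A - u) A, |g ζ - g A| ≤ S u)
    (hSnn : ∀ u : ℝ, 0 ≤ u → 0 ≤ S u)
    (hIbnd : ∀ x ∈ Set.Ioo A (A + ε₁), ∀ u : ℝ, 0 < u → ∀ J : ℝ,
      (∀ ζ ∈ Set.Icc (A - u) A, |g ζ - g A| ≤ J) →
      |∫ z in (0:ℝ)..(min u (x - A)), deriv W (x - z - A) * (g (z + A - u) - g A)|
        ≤ D * J * min u (x - A)) :
    ∀ᶠ x in nhdsWithin A (Set.Ioi A), ∀ᵐ u ∂(ν.restrict (Set.Ioi 0)),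
      ‖∫ z in (0:ℝ)..(min u (x - A)), deriv W (x - z - A) * (g (z + A - u) - g A)‖
        ≤ (fun u => (D * max (max K (2 * M / ε₁)) 1) * (if u ≤ 1 then u ^ 2 else S u)) u := by
  set B₂ : ℝ := max K (2 * M / ε₁) with hB₂def
  have hB₂0 : 0 ≤ B₂ := le_trans hK0 (le_max_left _ _)
  have hmem : Set.Ioo A (A + ε₁) ∈ nhdsWithin A (Set.Ioi A) :=
    Ioo_mem_nhdsGT_of_mem ⟨le_refl A, by linarith⟩
  filter_upwards [hmem] with x hx
  rw [ae_restrict_iff' measurableSet_Ioi]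
  refine Eventually.of_forall fun u hu => ?_
  have hu0 : (0:ℝ) < u := hu
  have hδ : 0 < x - A := by linarith [hx.1]
  have hδε : x - A < ε₁ := by linarith [hx.2]
  have hm0 : (0:ℝ) ≤ min u (x - A) := le_min hu0.le hδ.le
  rw [Real.norm_eq_abs]
  by_cases hcase : u ≤ 1
  · have hJ : ∀ ζ ∈ Set.Icc (A - u) A, |g ζ - g A| ≤ B₂ * u := by
      intro ζ hζ
      by_cases hsm : u ≤ ε₁
      · have hζ' : ζ ∈ Set.Icc (A - ε₁) A := ⟨by linarith [hζ.1], hζ.2⟩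
        calc |g ζ - g A| ≤ K * (A - ζ) := hLip ζ hζ'
          _ ≤ K * u := mul_le_mul_of_nonneg_left (by linarith [hζ.1]) hK0
          _ ≤ B₂ * u := mul_le_mul_of_nonneg_right (le_max_left _ _) hu0.le
      · push_neg at hsm
        have hζ' : ζ ∈ Set.Icc (A - 1) A := ⟨by linarith [hζ.1], hζ.2⟩
        have h1 : |g ζ - g A| ≤ |g ζ| + |g A| := abs_sub _ _
        have h2 := hM ζ hζ'
        have h3 := hM A ⟨by linarith, le_refl A⟩
        have h4 : (2 * M / ε₁) * ε₁ = 2 * M := by field_simp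
        calc |g ζ - g A| ≤ 2 * M := by linarith
          _ = (2 * M / ε₁) * ε₁ := h4.symm
          _ ≤ (2 * M / ε₁) * u := mul_le_mul_of_nonneg_left hsm.le (by positivity)
          _ ≤ B₂ * u := mul_le_mul_of_nonneg_right (le_max_right _ _) hu0.le
    have h := hIbnd x hx u hu0 (B₂ * u) hJ
    rw [if_pos hcase]
    calc |∫ z in (0:ℝ)..(min u (x - A)), deriv W (x - z - A) * (g (z + A - u) - g A)|
        ≤ D * (B₂ * u) * min u (x - A) := h
      _ ≤ D * (B₂ * u) * u := by
          refine mul_le_mul_of_nonneg_left (min_le_left _ _) (by positivity)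
      _ = (D * B₂) * u ^ 2 := by ring
      _ ≤ (D * max B₂ 1) * u ^ 2 := by
          refine mul_le_mul_of_nonneg_right
            (mul_le_mul_of_nonneg_left (le_max_left _ _) hD0) (by positivity)
  · push_neg at hcase
    have hJ := hSle u hu0.le
    have h := hIbnd x hx u hu0 (S u) hJ
    rw [if_neg (not_le.mpr hcase)]
    have hS0 := hSnn u hu0.le
    calc |∫ z in (0:ℝ)..(min u (x - A)), deriv W (x - z - A) * (g (z + A - u) - g A)|
        ≤ D * S u * min u (x - A) := h
      _ ≤ D * S u * 1 := by
          refine mul_le_mul_of_nonneg_left (le_trans (min_le_right _ _) (by linarith)) (by positivity)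
      _ = (D * 1) * S u := by ring
      _ ≤ (D * max B₂ 1) * S u := by
          refine mul_le_mul_of_nonneg_right
            (mul_le_mul_of_nonneg_left (le_max_right _ _) hD0) hS0

private lemma phi_bint_aux (ν : Measure ℝ) (Dbig : ℝ) (S : ℝ → ℝ)
    (hDbig0 : 0 ≤ Dbig)
    (hν : ∫⁻ z in Set.Ioi (0:ℝ), ENNReal.ofReal (min 1 (z ^ 2)) ∂ν < ⊤)
    (hC2 : ∫⁻ u in Set.Ioi (1:ℝ), ENNReal.ofReal (S u) ∂ν < ⊤)
    (hSnn : ∀ u : ℝ, 0 ≤ u → 0 ≤ S u)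
    (hSmeas : Measurable S) :
    Integrable (fun u => Dbig * (if u ≤ 1 then u ^ 2 else S u)) (ν.restrict (Set.Ioi 0)) := by
  set bound : ℝ → ℝ := fun u => Dbig * (if u ≤ 1 then u ^ 2 else S u) with hbounddef
  have hbmeas : Measurable bound := by
    refine measurable_const.mul (Measurable.ite (measurableSet_le measurable_id measurable_const)
      ?_ hSmeas)
    exact measurable_id.pow_const 2
  have hbnn : ∀ u ∈ Set.Ioi (0:ℝ), 0 ≤ bound u := by
    intro u hu
    have hu0 : (0:ℝ) < u := hu
    by_cases h : u ≤ 1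
    · simp only [hbounddef, if_pos h]; positivity
    · simp only [hbounddef, if_neg h]
      exact mul_nonneg hDbig0 (hSnn u hu0.le)
  constructor
  · exact hbmeas.aestronglyMeasurable
  · rw [hasFiniteIntegral_iff_ofReal]
    swap
    · rw [EventuallyLE, ae_restrict_iff' measurableSet_Ioi]
      exact Eventually.of_forall fun u hu => hbnn u hu
    have hsplit : (Set.Ioi (0:ℝ)) = Set.Ioc (0:ℝ) 1 ∪ Set.Ioi 1 :=
      (Set.Ioc_union_Ioi_eq_Ioi zero_le_one).symm
    rw [hsplit, lintegral_union measurableSet_Ioi Set.Ioc_disjoint_Ioi_same]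
    have h1 : ∫⁻ u in Set.Ioc (0:ℝ) 1, ENNReal.ofReal (bound u) ∂ν
        ≤ ENNReal.ofReal Dbig * ∫⁻ u in Set.Ioi (0:ℝ), ENNReal.ofReal (min 1 (u ^ 2)) ∂ν := by
      rw [← lintegral_const_mul' _ _ ENNReal.ofReal_ne_top]
      refine le_trans (setLIntegral_mono' measurableSet_Ioc fun u hu => ?_)
        (lintegral_mono_set (Set.Ioc_subset_Ioi_self))
      have hu2 : u ^ 2 ≤ 1 := by nlinarith [hu.1, hu.2]
      have : min 1 (u ^ 2) = u ^ 2 := min_eq_right hu2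
      rw [this, hbounddef]
      simp only [if_pos hu.2]
      rw [ENNReal.ofReal_mul hDbig0]
    have h2 : ∫⁻ u in Set.Ioi (1:ℝ), ENNReal.ofReal (bound u) ∂ν
        ≤ ENNReal.ofReal Dbig * ∫⁻ u in Set.Ioi (1:ℝ), ENNReal.ofReal (S u) ∂ν := by
      rw [← lintegral_const_mul' _ _ ENNReal.ofReal_ne_top]
      refine setLIntegral_mono' measurableSet_Ioi fun u hu => ?_
      have hu1 : (1:ℝ) < u := hu
      rw [hbounddef]
      simp only [if_neg (not_le.mpr hu1)]
      rw [ENNReal.ofReal_mul hDbig0]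
    have := add_le_add h1 h2
    refine lt_of_le_of_lt this ?_
    exact ENNReal.add_lt_top.mpr ⟨ENNReal.mul_lt_top ENNReal.ofReal_lt_top hν,
      ENNReal.mul_lt_top ENNReal.ofReal_lt_top hC2⟩

private lemma phi_lim_aux (ν : Measure ℝ) (W g : ℝ → ℝ) (A D ε₁ : ℝ)
    (hD0 : 0 ≤ D) (hε₁pos : 0 < ε₁)
    (hgb : ∀ K : Set ℝ, IsCompact K → ∃ M : ℝ, ∀ y ∈ K, |g y| ≤ M)
    (hIbnd : ∀ x ∈ Set.Ioo A (A + ε₁), ∀ u : ℝ, 0 < u → ∀ J : ℝ,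
      (∀ ζ ∈ Set.Icc (A - u) A, |g ζ - g A| ≤ J) →
      |∫ z in (0:ℝ)..(min u (x - A)), deriv W (x - z - A) * (g (z + A - u) - g A)|
        ≤ D * J * min u (x - A)) :
    ∀ᵐ u ∂(ν.restrict (Set.Ioi 0)), Tendsto
      (fun x => ∫ z in (0:ℝ)..(min u (x - A)), deriv W (x - z - A) * (g (z + A - u) - g A))
      (nhdsWithin A (Set.Ioi A)) (nhds ((fun _ : ℝ => (0:ℝ)) u)) := by
  rw [ae_restrict_iff' measurableSet_Ioi]
  refine Eventually.of_forall fun u hu => ?_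
  have hu0 : (0:ℝ) < u := hu
  obtain ⟨Mu, hMu⟩ := hgb (Set.Icc (A - u) A) isCompact_Icc
  set J : ℝ := Mu + |g A| with hJdef
  have hJ : ∀ ζ ∈ Set.Icc (A - u) A, |g ζ - g A| ≤ J := by
    intro ζ hζ
    have h1 : |g ζ - g A| ≤ |g ζ| + |g A| := abs_sub _ _
    have := hMu ζ hζ
    rw [hJdef]; linarith
  have hJ0 : 0 ≤ J := le_trans (abs_nonneg _) (hJ A ⟨by linarith, le_refl A⟩)
  refine squeeze_zero_norm' (a := fun x : ℝ => D * J * (x - A)) ?_ ?_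
  · have hmem : Set.Ioo A (A + ε₁) ∈ nhdsWithin A (Set.Ioi A) :=
      Ioo_mem_nhdsGT_of_mem ⟨le_refl A, by linarith⟩
    filter_upwards [hmem] with x hx
    have hδ : 0 < x - A := by linarith [hx.1]
    rw [Real.norm_eq_abs]
    calc |∫ z in (0:ℝ)..(min u (x - A)), deriv W (x - z - A) * (g (z + A - u) - g A)|
        ≤ D * J * min u (x - A) := hIbnd x hx u hu0 J hJ
      _ ≤ D * J * (x - A) := mul_le_mul_of_nonneg_left (min_le_right _ _) (by positivity)
  · have hc : Tendsto (fun x : ℝ => D * J * (x - A)) (nhds A) (nhds (D * J * (A - A))) := by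
      exact Continuous.tendsto (by continuity) A
    have := hc.mono_left (nhdsWithin_le_nhds (s := Set.Ioi A))
    simpa using this

/-- under (C1)-(C2),
`φ_{g,A}'(A+) = lim_{x↓A} ∫_{(0,∞)} ν(du) ∫_0^{min(u,x−A)} W'(x−z−A)(g(z+A−u) − g(A)) dz = 0`. -/
theorem phi_deriv_tendsto_zero
    (ν : Measure ℝ) (Φ A C L : ℝ) (g W : ℝ → ℝ)
    (hν : ∫⁻ z in Set.Ioi (0:ℝ), ENNReal.ofReal (min 1 (z ^ 2)) ∂ν < ⊤)
    (hΦ : 0 < Φ)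
    (hgm : Measurable g)
    (hgb : ∀ K : Set ℝ, IsCompact K → ∃ M : ℝ, ∀ y ∈ K, |g y| ≤ M)
    (hW0 : ∀ y < (0:ℝ), W y = 0)
    (hWc : ContinuousOn W (Set.Ici 0))
    (hWm : MonotoneOn W (Set.Ici 0))
    (hWd : ∀ y ∈ Set.Ioi (0:ℝ), DifferentiableAt ℝ W y)
    (hWd' : ContinuousOn (deriv W) (Set.Ioi 0))
    (hWΦm : MonotoneOn (fun y => Real.exp (-Φ * y) * W y) (Set.Ici 0))
    (hWΦb : ∀ y ∈ Set.Ici (0:ℝ), Real.exp (-Φ * y) * W y ≤ C)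
    (hL : ∀ y ∈ Set.Ioi (0:ℝ), deriv (fun t => Real.exp (-Φ * t) * W t) y ≤ L)
    (hC1 : ∃ ε > (0:ℝ), ContDiffOn ℝ 2 g (Set.Ioo (A - ε) (A + ε)))
    (hC2 : ∫⁻ u in Set.Ioi (1:ℝ),
        ENNReal.ofReal (sSup ((fun ζ => |g ζ - g A|) '' Set.Icc (A - u) A)) ∂ν < ⊤) :
    Filter.Tendsto
      (fun x => ∫ u in Set.Ioi (0:ℝ),
        (∫ z in (0:ℝ)..(min u (x - A)), deriv W (x - z - A) * (g (z + A - u) - g A)) ∂ν)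
      (nhdsWithin A (Set.Ioi A)) (nhds 0) := by
  classical
  obtain ⟨ε, hεpos, hg2⟩ := hC1
  have hD0 : (0:ℝ) ≤ Real.exp Φ * (|L| + Φ * |C|) := by positivity
  have hDbd : ∀ y ∈ Set.Ioc (0:ℝ) 1, |deriv W y| ≤ Real.exp Φ * (|L| + Φ * |C|) :=
    derivW_bound hΦ hWm hWd hWΦb hL
  set D : ℝ := Real.exp Φ * (|L| + Φ * |C|) with hDdef
  set ε₁ : ℝ := min ε 1 / 2 with hε₁def
  have hε₁pos : 0 < ε₁ := by
    have := lt_min hεpos one_pos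
    rw [hε₁def]; positivity
  have hε₁le1 : ε₁ ≤ 1 := by
    have : min ε 1 ≤ 1 := min_le_right _ _
    rw [hε₁def]; linarith
  have hε₁ltε : ε₁ < ε := by
    have : min ε 1 ≤ ε := min_le_left _ _
    rw [hε₁def]; linarith
  have hsub : Set.Icc (A - ε₁) A ⊆ Set.Ioo (A - ε) (A + ε) := fun ζ hζ =>
    ⟨by linarith [hζ.1], by linarith [hζ.2]⟩
  -- Lipschitz constant near A
  have hgdiff : ∀ ζ ∈ Set.Ioo (A - ε) (A + ε), DifferentiableAt ℝ g ζ := by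
    intro ζ hζ
    exact (hg2.contDiffAt ((isOpen_Ioo).mem_nhds hζ)).differentiableAt (by norm_num)
  have hdc : ContinuousOn (deriv g) (Set.Ioo (A - ε) (A + ε)) :=
    hg2.continuousOn_deriv_of_isOpen isOpen_Ioo (by norm_num)
  obtain ⟨K, hK⟩ := (isCompact_Icc :
      IsCompact (Set.Icc (A - ε₁) A)).exists_bound_of_continuousOn (hdc.mono hsub)
  have hAmem : A ∈ Set.Icc (A - ε₁) A := ⟨by linarith, le_refl A⟩
  have hK0 : 0 ≤ K := le_trans (norm_nonneg _) (hK A hAmem)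
  have hLip : ∀ ζ ∈ Set.Icc (A - ε₁) A, |g ζ - g A| ≤ K * (A - ζ) := by
    intro ζ hζ
    have h := Convex.norm_image_sub_le_of_norm_deriv_le
      (fun x hx => hgdiff x (hsub hx)) hK (convex_Icc _ _) hζ hAmem
    rw [Real.norm_eq_abs, Real.norm_eq_abs,
      abs_of_nonneg (by linarith [hζ.2] : (0:ℝ) ≤ A - ζ)] at h
    rwa [abs_sub_comm] at h
  -- global bound on [A-1, A]
  obtain ⟨M, hM⟩ := hgb (Set.Icc (A - 1) A) isCompact_Icc
  have hM0 : 0 ≤ M := le_trans (abs_nonneg _) (hM A ⟨by linarith, le_refl A⟩)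
  -- sSup function
  set S : ℝ → ℝ := fun u => sSup ((fun ζ => |g ζ - g A|) '' Set.Icc (A - u) A) with hSdef
  have hSbdd : ∀ u : ℝ, BddAbove ((fun ζ => |g ζ - g A|) '' Set.Icc (A - u) A) := by
    intro u
    obtain ⟨Mu, hMu⟩ := hgb (Set.Icc (A - u) A) isCompact_Icc
    refine ⟨Mu + |g A|, ?_⟩
    rintro v ⟨ζ, hζ, rfl⟩
    have h1 : |g ζ - g A| ≤ |g ζ| + |g A| := abs_sub _ _
    have := hMu ζ hζ
    dsimp only
    linarith
  have hSle : ∀ u : ℝ, 0 ≤ u → ∀ ζ ∈ Set.Icc (A - u) A, |g ζ - g A| ≤ S u :=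
    fun u hu ζ hζ => le_csSup (hSbdd u) ⟨ζ, hζ, rfl⟩
  have hSnn : ∀ u : ℝ, 0 ≤ u → 0 ≤ S u := by
    intro u hu
    have := hSle u hu A ⟨by linarith, le_refl A⟩
    simpa using this
  have hSmono : Monotone S := by
    intro u₁ u₂ h
    by_cases h1 : 0 ≤ u₁
    · refine csSup_le_csSup (hSbdd u₂) ⟨|g A - g A|, A, ⟨by linarith, le_refl A⟩, rfl⟩
        (Set.image_mono (Set.Icc_subset_Icc (by linarith) le_rfl))
    · push_neg at h1
      have he : Set.Icc (A - u₁) A = ∅ := Set.Icc_eq_empty (by intro hc; linarith)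
      have hz : S u₁ = 0 := by rw [hSdef]; simp [he]
      rw [hz]
      by_cases h2 : 0 ≤ u₂
      · exact hSnn u₂ h2
      · push_neg at h2
        have he2 : Set.Icc (A - u₂) A = ∅ := Set.Icc_eq_empty (by intro hc; linarith)
        rw [hSdef]; simp [he2]
  have hSmeas : Measurable S := hSmono.measurable
  -- inner bound
  have hIbnd := phi_inner_bound W g A D ε₁ hD0 hε₁le1 hDbd
  -- pieces of dominated convergence
  have hFmeas := phi_meas_aux ν W g A ε₁ hε₁pos hgm
  have hbound := phi_bound_aux ν W g A D ε₁ K M S hD0 hε₁pos hε₁le1 hK0 hM0 hLip hM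
    hSle hSnn hIbnd
  have hbint := phi_bint_aux ν (D * max (max K (2 * M / ε₁)) 1) S
    (mul_nonneg hD0 (le_trans zero_le_one (le_max_right _ _))) hν hC2 hSnn hSmeas
  have hlim := phi_lim_aux ν W g A D ε₁ hD0 hε₁pos hgb hIbnd
  have hmain := MeasureTheory.tendsto_integral_filter_of_dominated_convergence
      (μ := ν.restrict (Set.Ioi 0)) (l := nhdsWithin A (Set.Ioi A))
      (F := fun x u => ∫ z in (0:ℝ)..(min u (x - A)), deriv W (x - z - A) * (g (z + A - u) - g A))
      (f := fun _ => (0:ℝ))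
      (fun u => (D * max (max K (2 * M / ε₁)) 1) * (if u ≤ 1 then u ^ 2 else S u))
      hFmeas hbound hbint hlim
  simpa using hmain
end

section
/- Fix A ∈ ℝ and assume: (C1) g is C² on an open neighborhood of A; (C2) ∫_{(1,∞)} Π(du) · max_{A−u ≤ ζ ≤ A} |g(ζ) − g(A)| < ∞. Then there exists a finite constant C_A, independent of x, such that for every x > A: ∫_{(0,∞)} Π(du) ∫_0^{min(u, x−A)} W'(x−z−A) |g(z+A−u) − g(A)| dz ≤ e^{Φ(x−A)} C_A. -/
open MeasureTheory Real Set Filter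

set_option maxHeartbeats 2000000 in
/-- under (C1)-(C2), there is a finite constant `C_A`, independent
of `x`, such that for every `x > A`,
`∫_{(0,∞)} ν(du) ∫_0^{min(u,x−A)} W'(x−z−A)|g(z+A−u) − g(A)| dz ≤ e^{Φ(x−A)} C_A`. -/
theorem phi_deriv_uniform_bound
    (ν : Measure ℝ) (Φ A C L : ℝ) (g W : ℝ → ℝ)
    (hν : ∫⁻ z in Set.Ioi (0:ℝ), ENNReal.ofReal (min 1 (z ^ 2)) ∂ν < ⊤)
    (hΦ : 0 < Φ)
    (hgm : Measurable g)
    (hgb : ∀ K : Set ℝ, IsCompact K → ∃ M : ℝ, ∀ y ∈ K, |g y| ≤ M)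
    (hW0 : ∀ y < (0:ℝ), W y = 0)
    (hWc : ContinuousOn W (Set.Ici 0))
    (hWm : MonotoneOn W (Set.Ici 0))
    (hWd : ∀ y ∈ Set.Ioi (0:ℝ), DifferentiableAt ℝ W y)
    (hWd' : ContinuousOn (deriv W) (Set.Ioi 0))
    (hWΦm : MonotoneOn (fun y => Real.exp (-Φ * y) * W y) (Set.Ici 0))
    (hWΦb : ∀ y ∈ Set.Ici (0:ℝ), Real.exp (-Φ * y) * W y ≤ C)
    (hL : ∀ y ∈ Set.Ioi (0:ℝ), deriv (fun t => Real.exp (-Φ * t) * W t) y ≤ L)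
    (hC1 : ∃ ε > (0:ℝ), ContDiffOn ℝ 2 g (Set.Ioo (A - ε) (A + ε)))
    (hC2 : ∫⁻ u in Set.Ioi (1:ℝ),
        ENNReal.ofReal (sSup ((fun ζ => |g ζ - g A|) '' Set.Icc (A - u) A)) ∂ν < ⊤) :
    ∃ CA : ℝ, ∀ x > A,
      (∫⁻ u in Set.Ioi (0:ℝ),
        (∫⁻ z in Set.Ioo (0:ℝ) (min u (x - A)),
          ENNReal.ofReal (deriv W (x - z - A) * |g (z + A - u) - g A|)) ∂ν)
      ≤ ENNReal.ofReal (Real.exp (Φ * (x - A)) * CA) := by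
  classical
  obtain ⟨ε, hε, hg2⟩ := hC1
  set M : ℝ → ℝ := fun u => sSup ((fun ζ => |g ζ - g A|) '' Set.Icc (A - u) A) with hMdef
  -- basic facts about M
  have hBdd : ∀ u : ℝ, BddAbove ((fun ζ => |g ζ - g A|) '' Set.Icc (A - u) A) := by
    intro u
    obtain ⟨Mu, hMu⟩ := hgb (Set.Icc (A - u) A) isCompact_Icc
    refine ⟨Mu + |g A|, ?_⟩
    rintro _ ⟨ζ, hζ, rfl⟩
    calc |g ζ - g A| ≤ |g ζ| + |g A| := abs_sub _ _
      _ ≤ Mu + |g A| := by linarith [hMu ζ hζ]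
  have hMle : ∀ u : ℝ, ∀ ζ ∈ Set.Icc (A - u) A, |g ζ - g A| ≤ M u := by
    intro u ζ hζ
    exact le_csSup (hBdd u) ⟨ζ, hζ, rfl⟩
  have hM0 : ∀ u : ℝ, 0 ≤ u → 0 ≤ M u := by
    intro u hu
    have := hMle u A ⟨by linarith, le_refl A⟩
    simpa using this
  have hMmono : ∀ u v : ℝ, 0 ≤ u → u ≤ v → M u ≤ M v := by
    intro u v hu huv
    refine csSup_le_csSup (hBdd v) ?_ (Set.image_mono (Set.Icc_subset_Icc (by linarith) le_rfl))
    exact (Set.nonempty_Icc.2 (by linarith)).image _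
  -- bound on deriv W
  set K₂ : ℝ := max (L + Φ * C) 0 with hK₂def
  have hK₂0 : 0 ≤ K₂ := le_max_right _ _
  have hW' : ∀ y : ℝ, 0 < y → deriv W y ≤ K₂ * Real.exp (Φ * y) := by
    intro y hy
    have hdW := (hWd y hy).hasDerivAt
    have h1 : HasDerivAt (fun t : ℝ => Real.exp (-Φ * t)) (Real.exp (-Φ * y) * (-Φ)) y := by
      have : HasDerivAt (fun t : ℝ => -Φ * t) (-Φ) y := by
        simpa using (hasDerivAt_id y).const_mul (-Φ)
      exact this.exp
    have h2 : HasDerivAt (fun t : ℝ => Real.exp (-Φ * t) * W t)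
        (Real.exp (-Φ * y) * (-Φ) * W y + Real.exp (-Φ * y) * deriv W y) y := h1.mul hdW
    have h3 := h2.deriv
    have h4 := hL y hy
    rw [h3] at h4
    have h5 := hWΦb y (le_of_lt hy)
    have hE : Real.exp (Φ * y) * Real.exp (-Φ * y) = 1 := by
      rw [← Real.exp_add]; ring_nf; exact Real.exp_zero
    have hEpos : 0 < Real.exp (Φ * y) := Real.exp_pos _
    have hepos : 0 < Real.exp (-Φ * y) := Real.exp_pos _
    have hK₂ge : L + Φ * C ≤ K₂ := le_max_left _ _
    nlinarith [mul_le_mul_of_nonneg_left h4 hEpos.le, mul_le_mul_of_nonneg_left h5 hΦ.le]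
  -- local Lipschitz bound near A
  set δ : ℝ := min (ε / 2) 1 with hδdef
  have hδ0 : 0 < δ := lt_min (by linarith) one_pos
  have hδ1 : δ ≤ 1 := min_le_right _ _
  have hsub : Set.Icc (A - δ) A ⊆ Set.Ioo (A - ε) (A + ε) := by
    intro t ht
    constructor
    · have := ht.1
      have : A - δ ≤ t := ht.1
      have hδε : δ < ε := lt_of_le_of_lt (min_le_left _ _) (by linarith)
      linarith
    · have := ht.2; linarith
  have hdiff : ∀ t ∈ Set.Icc (A - δ) A, DifferentiableAt ℝ g t := by
    intro t ht
    have hopen : Set.Ioo (A - ε) (A + ε) ∈ nhds t := isOpen_Ioo.mem_nhds (hsub ht)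
    exact ((hg2.differentiableOn (by norm_num)) t (hsub ht)).differentiableAt hopen
  have hdc : ContinuousOn (deriv g) (Set.Icc (A - δ) A) := by
    have := hg2.continuousOn_deriv_of_isOpen isOpen_Ioo (by norm_num)
    exact this.mono hsub
  obtain ⟨K₃', hK₃'⟩ := isCompact_Icc.exists_bound_of_continuousOn hdc
  set K₃ : ℝ := max K₃' 0 with hK₃def
  have hK₃0 : 0 ≤ K₃ := le_max_right _ _
  have hLip : ∀ ζ ∈ Set.Icc (A - δ) A, |g ζ - g A| ≤ K₃ * |ζ - A| := by
    intro ζ hζ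
    have hA : A ∈ Set.Icc (A - δ) A := ⟨by linarith, le_refl A⟩
    have hbound : ∀ t ∈ Set.Icc (A - δ) A, ‖deriv g t‖ ≤ K₃ :=
      fun t ht => le_trans (hK₃' t ht) (le_max_left _ _)
    have := Convex.norm_image_sub_le_of_norm_deriv_le hdiff hbound (convex_Icc _ _) hA hζ
    simpa [Real.norm_eq_abs] using this
  have hMlin : ∀ u : ℝ, 0 < u → u ≤ δ → M u ≤ K₃ * u := by
    intro u hu huδ
    refine csSup_le ((Set.nonempty_Icc.2 (by linarith)).image _) ?_
    rintro _ ⟨ζ, hζ, rfl⟩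
    have hζ' : ζ ∈ Set.Icc (A - δ) A := ⟨by linarith [hζ.1], hζ.2⟩
    have h1 := hLip ζ hζ'
    have h2 : |ζ - A| ≤ u := by
      rw [abs_le]; constructor <;> [linarith [hζ.1]; linarith [hζ.2]]
    calc |g ζ - g A| ≤ K₃ * |ζ - A| := h1
      _ ≤ K₃ * u := by nlinarith
  set M₁ : ℝ := M 1 with hM₁def
  have hM₁0 : 0 ≤ M₁ := hM0 1 one_pos.le
  -- the dominating function
  set F : ℝ → ENNReal := fun u => ENNReal.ofReal (K₂ * M u * min u (1 / Φ)) with hFdef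
  set T : ENNReal := ∫⁻ u in Set.Ioi (0:ℝ), F u ∂ν with hTdef
  -- T is finite
  set K₆ : ℝ := K₂ * K₃ + K₂ * M₁ / δ ^ 2 with hK₆def
  have hK₆0 : 0 ≤ K₆ := by positivity
  have hTfin : T < ⊤ := by
    have hsplit : Set.Ioi (0:ℝ) = Set.Ioc 0 1 ∪ Set.Ioi 1 := (Set.Ioc_union_Ioi_eq_Ioi one_pos.le).symm
    have hdisj : Disjoint (Set.Ioc (0:ℝ) 1) (Set.Ioi 1) := Set.Ioc_disjoint_Ioi_same
    rw [hTdef, hsplit, lintegral_union measurableSet_Ioi hdisj]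
    have hhead : (∫⁻ u in Set.Ioc (0:ℝ) 1, F u ∂ν) < ⊤ := by
      have hb : ∀ u ∈ Set.Ioc (0:ℝ) 1, F u ≤ ENNReal.ofReal K₆ * ENNReal.ofReal (min 1 (u ^ 2)) := by
        intro u hu
        rw [← ENNReal.ofReal_mul hK₆0]
        apply ENNReal.ofReal_le_ofReal
        have hu0 : 0 < u := hu.1
        have hu1 : u ≤ 1 := hu.2
        have hmin : min 1 (u ^ 2) = u ^ 2 := min_eq_right (by nlinarith)
        rw [hmin]
        have hminu : min u (1 / Φ) ≤ u := min_le_left _ _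
        have hmin0 : 0 ≤ min u (1 / Φ) := le_min hu0.le (by positivity)
        have hMu0 : 0 ≤ M u := hM0 u hu0.le
        have hfirst : K₂ * M u * min u (1 / Φ) ≤ K₂ * M u * u :=
          mul_le_mul_of_nonneg_left hminu (mul_nonneg hK₂0 hMu0)
        rcases le_or_gt u δ with hcase | hcase
        · have h1 := hMlin u hu0 hcase
          calc K₂ * M u * min u (1 / Φ) ≤ K₂ * M u * u := hfirst
            _ ≤ K₂ * (K₃ * u) * u :=
              mul_le_mul_of_nonneg_right (mul_le_mul_of_nonneg_left h1 hK₂0) hu0.le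
            _ = K₂ * K₃ * u ^ 2 := by ring
            _ ≤ K₆ * u ^ 2 :=
              mul_le_mul_of_nonneg_right (le_add_of_nonneg_right (by positivity)) (sq_nonneg u)
        · have h1 : M u ≤ M₁ := hMmono u 1 hu0.le hu1
          calc K₂ * M u * min u (1 / Φ) ≤ K₂ * M u * u := hfirst
            _ ≤ K₂ * M₁ * u :=
              mul_le_mul_of_nonneg_right (mul_le_mul_of_nonneg_left h1 hK₂0) hu0.le
            _ ≤ K₂ * M₁ * 1 :=
              mul_le_mul_of_nonneg_left hu1 (mul_nonneg hK₂0 hM₁0)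
            _ ≤ K₂ * M₁ / δ ^ 2 * u ^ 2 := by
              rw [div_mul_eq_mul_div, le_div_iff₀ (by positivity)]
              have hδu : δ ^ 2 ≤ u ^ 2 := by nlinarith
              nlinarith [mul_nonneg hK₂0 hM₁0]
            _ ≤ K₆ * u ^ 2 :=
              mul_le_mul_of_nonneg_right (le_add_of_nonneg_left (by positivity)) (sq_nonneg u)
      calc (∫⁻ u in Set.Ioc (0:ℝ) 1, F u ∂ν)
          ≤ ∫⁻ u in Set.Ioc (0:ℝ) 1, ENNReal.ofReal K₆ * ENNReal.ofReal (min 1 (u ^ 2)) ∂ν :=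
            setLIntegral_mono' measurableSet_Ioc hb
        _ = ENNReal.ofReal K₆ * ∫⁻ u in Set.Ioc (0:ℝ) 1, ENNReal.ofReal (min 1 (u ^ 2)) ∂ν :=
            lintegral_const_mul' _ _ ENNReal.ofReal_ne_top
        _ ≤ ENNReal.ofReal K₆ * ∫⁻ u in Set.Ioi (0:ℝ), ENNReal.ofReal (min 1 (u ^ 2)) ∂ν := by
            gcongr
            exact Set.Ioc_subset_Ioi_self
        _ < ⊤ := ENNReal.mul_lt_top ENNReal.ofReal_lt_top hν
    have htail : (∫⁻ u in Set.Ioi (1:ℝ), F u ∂ν) < ⊤ := by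
      have hb : ∀ u ∈ Set.Ioi (1:ℝ), F u ≤ ENNReal.ofReal (K₂ / Φ) * ENNReal.ofReal (M u) := by
        intro u hu
        have hu1 : (1:ℝ) < u := hu
        have hMu0 : 0 ≤ M u := hM0 u (by linarith)
        rw [← ENNReal.ofReal_mul (by positivity)]
        apply ENNReal.ofReal_le_ofReal
        have h1 : min u (1 / Φ) ≤ 1 / Φ := min_le_right _ _
        have h2 : 0 ≤ min u (1 / Φ) := le_min (by linarith) (by positivity)
        have : K₂ * M u * min u (1 / Φ) ≤ K₂ * M u * (1 / Φ) := by nlinarith [mul_nonneg hK₂0 hMu0]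
        calc K₂ * M u * min u (1 / Φ) ≤ K₂ * M u * (1 / Φ) := this
          _ = K₂ / Φ * M u := by ring
      calc (∫⁻ u in Set.Ioi (1:ℝ), F u ∂ν)
          ≤ ∫⁻ u in Set.Ioi (1:ℝ), ENNReal.ofReal (K₂ / Φ) * ENNReal.ofReal (M u) ∂ν :=
            setLIntegral_mono' measurableSet_Ioi hb
        _ = ENNReal.ofReal (K₂ / Φ) * ∫⁻ u in Set.Ioi (1:ℝ), ENNReal.ofReal (M u) ∂ν :=
            lintegral_const_mul' _ _ ENNReal.ofReal_ne_top
        _ < ⊤ := ENNReal.mul_lt_top ENNReal.ofReal_lt_top hC2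
    exact ENNReal.add_lt_top.2 ⟨hhead, htail⟩
  -- the constant
  refine ⟨T.toReal, ?_⟩
  intro x hx
  set X : ℝ := x - A with hXdef
  have hX0 : 0 < X := by simp [hXdef]; linarith
  -- the integral of the exponential
  have hexpint : (∫⁻ z in Set.Ioi (0:ℝ), ENNReal.ofReal (Real.exp (-Φ * z))) =
      ENNReal.ofReal (1 / Φ) := by
    rw [← ofReal_integral_eq_lintegral_ofReal (exp_neg_integrableOn_Ioi 0 hΦ)
      (Filter.Eventually.of_forall fun z => (Real.exp_pos _).le)]
    congr 1
    have : ∀ z : ℝ, Real.exp (-Φ * z) = Real.exp (-(Φ * z)) := fun z => by ring_nf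
    calc (∫ z in Set.Ioi (0:ℝ), Real.exp (-Φ * z))
        = ∫ z in Set.Ioi (0:ℝ), Real.exp (-(Φ * z)) := by
          refine integral_congr_ae (Filter.Eventually.of_forall fun z => ?_)
          ring_nf
      _ = Φ⁻¹ • ∫ z in Set.Ioi (Φ * 0), Real.exp (-z) :=
          MeasureTheory.integral_comp_mul_left_Ioi (fun z => Real.exp (-z)) 0 hΦ
      _ = 1 / Φ := by
          rw [mul_zero, integral_exp_neg_Ioi_zero]
          simp [one_div]
  -- pointwise bound for the inner integral
  have hpt : ∀ u ∈ Set.Ioi (0:ℝ),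
      (∫⁻ z in Set.Ioo (0:ℝ) (min u X),
        ENNReal.ofReal (deriv W (x - z - A) * |g (z + A - u) - g A|))
      ≤ ENNReal.ofReal (Real.exp (Φ * X)) * F u := by
    intro u hu
    have hu0 : 0 < u := hu
    set m : ℝ := min u X with hmdef
    have hmu : m ≤ u := min_le_left _ _
    have hmX : m ≤ X := min_le_right _ _
    have hMu0 : 0 ≤ M u := hM0 u hu0.le
    -- first, a pointwise bound on the integrand
    have hint1 : ∀ z ∈ Set.Ioo (0:ℝ) m,
        ENNReal.ofReal (deriv W (x - z - A) * |g (z + A - u) - g A|)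
        ≤ ENNReal.ofReal (K₂ * M u * Real.exp (Φ * X) * Real.exp (-Φ * z)) := by
      intro z hz
      apply ENNReal.ofReal_le_ofReal
      have hz0 : 0 < z := hz.1
      have hzm : z < m := hz.2
      have hy : 0 < x - z - A := by
        have : z < X := lt_of_lt_of_le hzm hmX
        simp only [hXdef] at this
        linarith
      have hWb : deriv W (x - z - A) ≤ K₂ * Real.exp (Φ * (x - z - A)) := hW' _ hy
      have hgbnd : |g (z + A - u) - g A| ≤ M u := by
        apply hMle u
        constructor
        · have : z ≤ u := le_of_lt (lt_of_lt_of_le hzm hmu)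
          linarith
        · linarith
      have hexp : Real.exp (Φ * (x - z - A)) = Real.exp (Φ * X) * Real.exp (-Φ * z) := by
        rw [← Real.exp_add]; congr 1; simp only [hXdef]; ring
      calc deriv W (x - z - A) * |g (z + A - u) - g A|
          ≤ (K₂ * Real.exp (Φ * (x - z - A))) * |g (z + A - u) - g A| := by
            apply mul_le_mul_of_nonneg_right hWb (abs_nonneg _)
        _ ≤ (K₂ * Real.exp (Φ * (x - z - A))) * M u := by
            apply mul_le_mul_of_nonneg_left hgbnd (by positivity)
        _ = K₂ * M u * Real.exp (Φ * X) * Real.exp (-Φ * z) := by rw [hexp]; ring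
    have hstep : (∫⁻ z in Set.Ioo (0:ℝ) m,
        ENNReal.ofReal (deriv W (x - z - A) * |g (z + A - u) - g A|))
        ≤ ∫⁻ z in Set.Ioo (0:ℝ) m,
          ENNReal.ofReal (K₂ * M u * Real.exp (Φ * X) * Real.exp (-Φ * z)) :=
      setLIntegral_mono' measurableSet_Ioo hint1
    rcases le_or_gt u (1 / Φ) with hcase | hcase
    · -- small u : use the length of the interval
      have hminu : min u (1 / Φ) = u := min_eq_left hcase
      have hbound2 : ∀ z ∈ Set.Ioo (0:ℝ) m,
          ENNReal.ofReal (K₂ * M u * Real.exp (Φ * X) * Real.exp (-Φ * z))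
          ≤ ENNReal.ofReal (K₂ * M u * Real.exp (Φ * X)) := by
        intro z hz
        apply ENNReal.ofReal_le_ofReal
        have h1 : Real.exp (-Φ * z) ≤ 1 := by
          rw [Real.exp_le_one_iff]
          nlinarith [hz.1]
        exact mul_le_of_le_one_right (by positivity) h1
      calc (∫⁻ z in Set.Ioo (0:ℝ) m,
          ENNReal.ofReal (deriv W (x - z - A) * |g (z + A - u) - g A|))
          ≤ ∫⁻ z in Set.Ioo (0:ℝ) m,
            ENNReal.ofReal (K₂ * M u * Real.exp (Φ * X)) :=
            le_trans hstep (setLIntegral_mono' measurableSet_Ioo hbound2)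
        _ = ENNReal.ofReal (K₂ * M u * Real.exp (Φ * X)) * volume (Set.Ioo (0:ℝ) m) :=
            setLIntegral_const _ _
        _ ≤ ENNReal.ofReal (K₂ * M u * Real.exp (Φ * X)) * ENNReal.ofReal u := by
            gcongr
            rw [Real.volume_Ioo]
            exact ENNReal.ofReal_le_ofReal (by simp [hmdef])
        _ = ENNReal.ofReal (Real.exp (Φ * X)) * F u := by
            rw [hFdef, ← ENNReal.ofReal_mul (by positivity), ← ENNReal.ofReal_mul (Real.exp_pos _).le]
            congr 1
            rw [hminu]; ring
    · -- large u : integrate the exponential over all of (0,∞)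
      have hminu : min u (1 / Φ) = 1 / Φ := min_eq_right hcase.le
      calc (∫⁻ z in Set.Ioo (0:ℝ) m,
          ENNReal.ofReal (deriv W (x - z - A) * |g (z + A - u) - g A|))
          ≤ ∫⁻ z in Set.Ioo (0:ℝ) m,
            ENNReal.ofReal (K₂ * M u * Real.exp (Φ * X) * Real.exp (-Φ * z)) := hstep
        _ ≤ ∫⁻ z in Set.Ioi (0:ℝ),
            ENNReal.ofReal (K₂ * M u * Real.exp (Φ * X) * Real.exp (-Φ * z)) :=
            lintegral_mono_set (fun z hz => hz.1)
        _ = ∫⁻ z in Set.Ioi (0:ℝ),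
            ENNReal.ofReal (K₂ * M u * Real.exp (Φ * X)) * ENNReal.ofReal (Real.exp (-Φ * z)) := by
            refine lintegral_congr fun z => ?_
            rw [← ENNReal.ofReal_mul (by positivity)]
        _ = ENNReal.ofReal (K₂ * M u * Real.exp (Φ * X)) *
            ∫⁻ z in Set.Ioi (0:ℝ), ENNReal.ofReal (Real.exp (-Φ * z)) :=
            lintegral_const_mul' _ _ ENNReal.ofReal_ne_top
        _ = ENNReal.ofReal (K₂ * M u * Real.exp (Φ * X)) * ENNReal.ofReal (1 / Φ) := by
            rw [hexpint]
        _ = ENNReal.ofReal (Real.exp (Φ * X)) * F u := by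
            rw [hFdef, ← ENNReal.ofReal_mul (by positivity), ← ENNReal.ofReal_mul (Real.exp_pos _).le]
            congr 1
            rw [hminu]; ring
  -- put everything together
  calc (∫⁻ u in Set.Ioi (0:ℝ),
        (∫⁻ z in Set.Ioo (0:ℝ) (min u (x - A)),
          ENNReal.ofReal (deriv W (x - z - A) * |g (z + A - u) - g A|)) ∂ν)
      ≤ ∫⁻ u in Set.Ioi (0:ℝ), ENNReal.ofReal (Real.exp (Φ * X)) * F u ∂ν :=
        setLIntegral_mono' measurableSet_Ioi hpt
    _ = ENNReal.ofReal (Real.exp (Φ * X)) * T :=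
        lintegral_const_mul' _ _ ENNReal.ofReal_ne_top
    _ = ENNReal.ofReal (Real.exp (Φ * (x - A)) * T.toReal) := by
        rw [ENNReal.ofReal_mul (Real.exp_pos _).le, ENNReal.ofReal_toReal hTfin.ne]
end

section
/- Fix A ∈ ℝ and assume: (C1) g is C² on an open neighborhood of A; (C2) ∫_{(1,∞)} Π(du) · max_{A−u ≤ ζ ≤ A} |g(ζ) − g(A)| < ∞. Then lim_{x↓A} U_A'(x) = W'(0+)·Ψ(A). In particular, if W'(0+) = 2/σ² for a constant σ > 0, then the smooth-fit condition lim_{x↓A} U_A'(x) = g'(A) holds if and only if Ψ(A) = (σ²/2) g'(A). -/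
open MeasureTheory Real Set Filter
open scoped Topology


variable {W : ℝ → ℝ}

lemma Wcont (hW0 : ∀ y < (0:ℝ), W y = 0) (hWzero : W 0 = 0)
    (hWc : ContinuousOn W (Set.Ici 0)) : Continuous W := by
  rw [continuous_iff_continuousAt]
  intro x
  rcases lt_trichotomy x 0 with hx | rfl | hx
  · have h : W =ᶠ[𝓝 x] fun _ => 0 :=
      eventually_of_mem (Iio_mem_nhds hx) (fun y hy => hW0 y hy)
    exact ContinuousAt.congr continuousAt_const h.symm
  · rw [continuousAt_iff_continuous_left_right]
    constructor
    · have : ∀ y ∈ Iic (0:ℝ), W y = (fun _ => (0:ℝ)) y := by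
        intro y hy
        rcases lt_or_eq_of_le (mem_Iic.mp hy) with h | h
        · exact hW0 y h
        · rw [h]; exact hWzero
      exact (continuousWithinAt_const (b := (0:ℝ))).congr this hWzero
    · exact hWc 0 (mem_Ici.mpr le_rfl)
  · exact (hWc x hx.le).continuousAt (Ici_mem_nhds hx)

lemma derivW_neg (hW0 : ∀ y < (0:ℝ), W y = 0) {s : ℝ} (hs : s < 0) : deriv W s = 0 := by
  have h : W =ᶠ[𝓝 s] fun _ => 0 :=
    eventually_of_mem (Iio_mem_nhds hs) (fun y hy => hW0 y hy)
  rw [h.deriv_eq, deriv_const]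

lemma hasDerivW_neg (hW0 : ∀ y < (0:ℝ), W y = 0) {s : ℝ} (hs : s < 0) :
    HasDerivAt W 0 s := by
  have h : W =ᶠ[𝓝 s] fun _ => 0 :=
    eventually_of_mem (Iio_mem_nhds hs) (fun y hy => hW0 y hy)
  exact (hasDerivAt_const s 0).congr_of_eventuallyEq h

lemma derivW_bound_s12 {W'0 : ℝ}
    (hWd' : ContinuousOn (deriv W) (Set.Ioi 0))
    (hW'0 : Filter.Tendsto (deriv W) (nhdsWithin 0 (Set.Ioi 0)) (nhds W'0)) :
    ∃ M : ℝ, 0 ≤ M ∧ ∀ s ∈ Set.Ioc (0:ℝ) 1, |deriv W s| ≤ M := by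
  have h1 : ∀ᶠ s in nhdsWithin 0 (Set.Ioi 0), |deriv W s - W'0| < 1 := by
    have := hW'0.eventually (Metric.ball_mem_nhds W'0 one_pos)
    filter_upwards [this] with s hs
    simpa [Real.dist_eq] using hs
  rw [Filter.Eventually, mem_nhdsGT_iff_exists_Ioc_subset] at h1
  obtain ⟨δ, hδ0, hδ⟩ := h1
  have hδ0 : (0:ℝ) < δ := hδ0
  set δ' := min δ 1 with hδ'
  have hδ'0 : 0 < δ' := lt_min hδ0 one_pos
  obtain ⟨M₂, hM₂⟩ := (isCompact_Icc (a := δ') (b := 1)).exists_bound_of_continuousOn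
    (hWd'.mono (fun x hx => lt_of_lt_of_le hδ'0 hx.1))
  refine ⟨max (|W'0| + 1) M₂, le_trans (by positivity) (le_max_left _ _), ?_⟩
  intro s hs
  rcases lt_or_ge s δ' with h | h
  · have : |deriv W s - W'0| < 1 := hδ ⟨hs.1, le_of_lt (lt_of_lt_of_le h (min_le_left _ _))⟩
    calc |deriv W s| ≤ |deriv W s - W'0| + |W'0| := by
          have := abs_sub_abs_le_abs_sub (deriv W s) W'0; linarith [abs_sub_abs_le_abs_sub (deriv W s) W'0]
      _ ≤ |W'0| + 1 := by linarith
      _ ≤ _ := le_max_left _ _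
  · exact le_trans (by simpa using hM₂ s ⟨h, hs.2⟩) (le_max_right _ _)


lemma Wlip (hW0 : ∀ y < (0:ℝ), W y = 0) (hWzero : W 0 = 0)
    (hWc : ContinuousOn W (Set.Ici 0))
    (hWd : ∀ y ∈ Set.Ioi (0:ℝ), DifferentiableAt ℝ W y)
    {M : ℝ} (hM0 : 0 ≤ M) (hM : ∀ s ∈ Set.Ioc (0:ℝ) 1, |deriv W s| ≤ M) :
    ∀ a b : ℝ, a ≤ b → b ≤ 1 → |W b - W a| ≤ M * (b - a) := by
  have hcont := Wcont hW0 hWzero hWc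
  -- first the case 0 ≤ a
  have key : ∀ a b : ℝ, 0 ≤ a → a ≤ b → b ≤ 1 → |W b - W a| ≤ M * (b - a) := by
    intro a b ha hab hb1
    rcases eq_or_lt_of_le hab with rfl | hab
    · simp
    · obtain ⟨c, hc, hc'⟩ := exists_hasDerivAt_eq_slope W (deriv W) hab
        (hcont.continuousOn)
        (fun x hx => (hWd x (lt_of_le_of_lt ha hx.1)).hasDerivAt)
      have : (W b - W a) / (b - a) = deriv W c := hc'.symm
      have hder : |deriv W c| ≤ M := hM c ⟨lt_of_le_of_lt ha hc.1, le_trans hc.2.le hb1⟩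
      have hba : (0:ℝ) < b - a := by linarith
      calc |W b - W a| = |deriv W c| * (b - a) := by
            rw [hc', abs_div, abs_of_pos hba]; field_simp
        _ ≤ M * (b - a) := by nlinarith [abs_nonneg (deriv W c)]
  intro a b hab hb1
  rcases le_or_gt 0 a with ha | ha
  · exact key a b ha hab hb1
  rcases le_or_gt b 0 with hb | hb
  · have hWb : W b = 0 := by rcases eq_or_lt_of_le hb with rfl | h; exacts [hWzero, hW0 b h]
    rw [hWb, hW0 a ha]
    simp; nlinarith
  · have := key 0 b le_rfl hb.le hb1
    rw [hWzero, hW0 a ha] at *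
    simp only [sub_zero] at this ⊢
    nlinarith
lemma meas_param {f : ℝ × ℝ → ℝ} (hf : Measurable f) {c : ℝ → ℝ} (hc : Measurable c) :
    Measurable (fun u => ∫ z in Set.Ioc (0:ℝ) (c u), f (u, z)) := by
  have hF : Measurable (fun p : ℝ × ℝ => if 0 < p.2 ∧ p.2 ≤ c p.1 then f p else 0) := by
    refine Measurable.ite ?_ hf measurable_const
    exact MeasurableSet.inter (measurableSet_lt measurable_const measurable_snd)
      (measurableSet_le measurable_snd (hc.comp measurable_fst))
  have := (hF.stronglyMeasurable).integral_prod_right'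
    (ν := (volume : Measure ℝ))
  have heq : (fun u => ∫ z in Set.Ioc (0:ℝ) (c u), f (u, z))
      = fun u => ∫ z, (fun p : ℝ × ℝ => if 0 < p.2 ∧ p.2 ≤ c p.1 then f p else 0) (u, z) := by
    funext u
    rw [← integral_indicator measurableSet_Ioc]
    congr 1
    funext z
    simp [Set.indicator_apply, Set.mem_Ioc]
  rw [heq]
  exact this.measurable
lemma abs_setIntegral_le {μ : Measure ℝ} {s : Set ℝ} {f b : ℝ → ℝ}
    (hb : IntegrableOn b s μ) (h : ∀ᵐ z ∂μ.restrict s, |f z| ≤ b z) :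
    |∫ z in s, f z ∂μ| ≤ ∫ z in s, b z ∂μ := by
  calc |∫ z in s, f z ∂μ| ≤ ∫ z in s, |f z| ∂μ := by
        simpa [Real.norm_eq_abs] using
          norm_integral_le_integral_norm (μ := μ.restrict s) (f := f)
    _ ≤ ∫ z in s, b z ∂μ :=
        integral_mono_of_nonneg (Eventually.of_forall fun z => abs_nonneg _) hb h

lemma intOn_of_bound {μ : Measure ℝ} {s : Set ℝ} (hμ : μ s < ⊤) {f : ℝ → ℝ}
    (hf : AEStronglyMeasurable f (μ.restrict s)) (c : ℝ)
    (h : ∀ᵐ z ∂μ.restrict s, |f z| ≤ c) : IntegrableOn f s μ :=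
  Integrable.mono' (integrableOn_const hμ.ne) hf
    (by simpa [Real.norm_eq_abs] using h)

lemma lip_of_deriv {f : ℝ → ℝ} {a b K : ℝ} (hc : ContinuousOn f (Set.Icc a b))
    (hd : ∀ x ∈ Set.Ioo a b, DifferentiableAt ℝ f x)
    (hK : ∀ x ∈ Set.Ioo a b, |deriv f x| ≤ K) :
    ∀ x ∈ Set.Icc a b, ∀ y ∈ Set.Icc a b, x ≤ y → |f y - f x| ≤ K * (y - x) := by
  intro x hx y hy hxy
  rcases eq_or_lt_of_le hxy with rfl | hlt
  · simp
  obtain ⟨c, hc', hceq⟩ := exists_hasDerivAt_eq_slope f (deriv f) hlt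
    (hc.mono (Icc_subset_Icc hx.1 hy.2))
    (fun z hz => (hd z ⟨lt_of_le_of_lt hx.1 hz.1, lt_of_lt_of_le hz.2 hy.2⟩).hasDerivAt)
  have hcmem : c ∈ Set.Ioo a b := ⟨lt_of_le_of_lt hx.1 hc'.1, lt_of_lt_of_le hc'.2 hy.2⟩
  have h1 : |deriv f c| ≤ K := hK c hcmem
  have hyx : (0:ℝ) < y - x := by linarith
  calc |f y - f x| = |deriv f c| * (y - x) := by
        rw [hceq, abs_div, abs_of_pos hyx]; field_simp
    _ ≤ K * (y - x) := by nlinarith [abs_nonneg (deriv f c)]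


lemma WlipAbs (hW0 : ∀ y < (0:ℝ), W y = 0) (hWzero : W 0 = 0)
    (hWc : ContinuousOn W (Set.Ici 0))
    (hWd : ∀ y ∈ Set.Ioi (0:ℝ), DifferentiableAt ℝ W y)
    {M : ℝ} (hM0 : 0 ≤ M) (hM : ∀ s ∈ Set.Ioc (0:ℝ) 1, |deriv W s| ≤ M) :
    ∀ p q : ℝ, p ≤ 1 → q ≤ 1 → |W p - W q| ≤ M * |p - q| := by
  intro p q hp hq
  rcases le_total q p with h | h
  · have := Wlip hW0 hWzero hWc hWd hM0 hM q p h hp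
    rwa [abs_of_nonneg (by linarith : (0:ℝ) ≤ p - q)]
  · have := Wlip hW0 hWzero hWc hWd hM0 hM p q h hq
    rw [abs_sub_comm, abs_of_nonpos (by linarith : p - q ≤ 0)]
    linarith

lemma Wnonneg (hW0 : ∀ y < (0:ℝ), W y = 0) (hWzero : W 0 = 0)
    (hWm : MonotoneOn W (Set.Ici 0)) : ∀ s : ℝ, 0 ≤ W s := by
  intro s
  rcases lt_or_ge s 0 with h | h
  · rw [hW0 s h]
  · rw [← hWzero]; exact hWm (Set.mem_Ici.mpr le_rfl) (Set.mem_Ici.mpr h) h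

lemma Wle (hW0 : ∀ y < (0:ℝ), W y = 0) (hWzero : W 0 = 0)
    (hWm : MonotoneOn W (Set.Ici 0)) : ∀ s : ℝ, s ≤ 1 → |W s| ≤ W 1 := by
  intro s hs
  rw [abs_of_nonneg (Wnonneg hW0 hWzero hWm s)]
  rcases lt_or_ge s 0 with h | h
  · rw [hW0 s h]; exact Wnonneg hW0 hWzero hWm 1
  · exact hWm (Set.mem_Ici.mpr h) (Set.mem_Ici.mpr zero_le_one) hs
lemma ae_ne_vol {s : Set ℝ} (c : ℝ) : ∀ᵐ z ∂(volume : Measure ℝ).restrict s, z ≠ c := by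
  refine ae_iff.mpr ?_
  have : {z : ℝ | ¬ z ≠ c} = {c} := by ext z; simp
  rw [this]
  exact le_antisymm (le_trans (Measure.restrict_le_self _) (by simp)) (zero_le)

lemma Wshift_hasDeriv (hW0 : ∀ y < (0:ℝ), W y = 0)
    (hWd : ∀ y ∈ Set.Ioi (0:ℝ), DifferentiableAt ℝ W y)
    {c x₀ : ℝ} (hne : x₀ - c ≠ 0) :
    HasDerivAt (fun x => W (x - c)) (deriv W (x₀ - c)) x₀ := by
  rcases lt_or_gt_of_ne hne with h | h
  · -- x₀ - c < 0 : W vanishes near x₀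
    have hev : (fun x => W (x - c)) =ᶠ[𝓝 x₀] fun _ => 0 := by
      have : ∀ᶠ x in 𝓝 x₀, x - c < 0 := by
        have : ContinuousAt (fun x => x - c) x₀ := by fun_prop
        exact this.eventually_lt continuousAt_const h
      filter_upwards [this] with x hx using hW0 _ hx
    rw [derivW_neg hW0 h]
    exact (hasDerivAt_const x₀ (0:ℝ)).congr_of_eventuallyEq hev
  · have h1 : HasDerivAt W (deriv W (x₀ - c)) (x₀ - c) :=
      (hWd _ (Set.mem_Ioi.mpr h)).hasDerivAt
    have h2 : HasDerivAt (fun x : ℝ => x - c) 1 x₀ := (hasDerivAt_id x₀).sub_const c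
    simpa [Function.comp_def] using h1.comp x₀ h2

lemma innerJ_hasDeriv {g : ℝ → ℝ} {A M r x₀ u : ℝ}
    (hW0 : ∀ y < (0:ℝ), W y = 0) (hWzero : W 0 = 0)
    (hWc : ContinuousOn W (Set.Ici 0))
    (hWd : ∀ y ∈ Set.Ioi (0:ℝ), DifferentiableAt ℝ W y)
    (hWm : MonotoneOn W (Set.Ici 0))
    (hM0 : 0 ≤ M) (hM : ∀ s ∈ Set.Ioc (0:ℝ) 1, |deriv W s| ≤ M)
    (hgm : Measurable g)
    (hgb : ∀ K : Set ℝ, IsCompact K → ∃ Mg : ℝ, ∀ y ∈ K, |g y| ≤ Mg)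
    (hr1 : r ≤ 1) (hu : 0 < u) (hx₀ : x₀ ∈ Set.Ioo A (A + r)) :
    HasDerivAt (fun x => ∫ z in Set.Ioc (0:ℝ) u, W (x - A - z) * (g (z + A - u) - g A))
      (∫ z in Set.Ioc (0:ℝ) u, deriv W (x₀ - A - z) * (g (z + A - u) - g A)) x₀ := by
  obtain ⟨Mg, hMg⟩ := hgb (Set.Icc (A - u) A) isCompact_Icc
  set Δ : ℝ → ℝ := fun z => g (z + A - u) - g A with hΔ
  have hΔb : ∀ z ∈ Set.Ioc (0:ℝ) u, |Δ z| ≤ Mg + |g A| := by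
    intro z hz
    have : z + A - u ∈ Set.Icc (A - u) A := by
      constructor <;> [linarith [hz.1]; linarith [hz.2]]
    calc |Δ z| ≤ |g (z + A - u)| + |g A| := abs_sub _ _
      _ ≤ Mg + |g A| := by linarith [hMg _ this]
  have hΔm : Measurable Δ := by
    apply (hgm.comp (by fun_prop)).sub measurable_const
  set ε : ℝ := min (x₀ - A) (A + r - x₀) with hε
  have hε0 : 0 < ε := lt_min (by linarith [hx₀.1]) (by linarith [hx₀.2])
  have hball : Metric.ball x₀ ε ⊆ Set.Ioo A (A + r) := by
    intro x hx
    rw [Metric.mem_ball, Real.dist_eq, abs_lt] at hx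
    constructor
    · have := min_le_left (x₀ - A) (A + r - x₀); linarith [hx.1]
    · have := min_le_right (x₀ - A) (A + r - x₀); linarith [hx.2]
  have hμfin : (volume : Measure ℝ) (Set.Ioc (0:ℝ) u) < ⊤ := by simp
  have hmeasW : ∀ x : ℝ, AEStronglyMeasurable (fun z => W (x - A - z) * Δ z)
      ((volume : Measure ℝ).restrict (Set.Ioc (0:ℝ) u)) := by
    intro x
    exact (((Wcont hW0 hWzero hWc).measurable.comp (by fun_prop)).mul hΔm).aestronglyMeasurable
  refine (hasDerivAt_integral_of_dominated_loc_of_lip (F := fun x z => W (x - A - z) * Δ z)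
    (F' := fun z => deriv W (x₀ - A - z) * Δ z)
    (bound := fun z => M * |Δ z|) (Metric.ball_mem_nhds x₀ hε0)
    (Eventually.of_forall hmeasW) ?hFint ?hF'meas ?hlip ?hbint ?hdiff).2
  case hFint =>
    refine intOn_of_bound hμfin (hmeasW x₀) (W 1 * (Mg + |g A|)) ?_
    refine (ae_restrict_iff' measurableSet_Ioc).mpr (Eventually.of_forall ?_)
    intro z hz
    rw [abs_mul]
    have h1 : |W (x₀ - A - z)| ≤ W 1 := by
      refine Wle hW0 hWzero hWm _ ?_
      have := hx₀.2; have := hz.1; linarith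
    exact mul_le_mul h1 (hΔb z hz) (abs_nonneg _) (Wnonneg hW0 hWzero hWm 1)
  case hF'meas =>
    exact (((measurable_deriv W).comp (by fun_prop)).mul hΔm).aestronglyMeasurable
  case hlip =>
    refine (ae_restrict_iff' measurableSet_Ioc).mpr (Eventually.of_forall ?_)
    intro z hz
    rw [lipschitzOnWith_iff_dist_le_mul]
    intro x hx y hy
    rw [Real.dist_eq, Real.dist_eq]
    have hx' := hball hx; have hy' := hball hy
    have h1 : |W (x - A - z) * Δ z - W (y - A - z) * Δ z|
        = |W (x - A - z) - W (y - A - z)| * |Δ z| := by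
      rw [← sub_mul, abs_mul]
    rw [h1]
    have h2 : |W (x - A - z) - W (y - A - z)| ≤ M * |x - y| := by
      have := WlipAbs hW0 hWzero hWc hWd hM0 hM (x - A - z) (y - A - z)
        (by have := hx'.2; have := hz.1; linarith)
        (by have := hy'.2; have := hz.1; linarith)
      have heq : x - A - z - (y - A - z) = x - y := by ring
      rwa [heq] at this
    have h3 : ((Real.nnabs (M * |Δ z|)) : ℝ) = M * |Δ z| := by
      rw [Real.coe_nnabs, abs_of_nonneg (by positivity)]
    rw [h3]
    calc |W (x - A - z) - W (y - A - z)| * |Δ z| ≤ M * |x - y| * |Δ z| :=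
          mul_le_mul_of_nonneg_right h2 (abs_nonneg _)
      _ = M * |Δ z| * |x - y| := by ring
  case hbint =>
    refine intOn_of_bound hμfin ?_ (M * (Mg + |g A|)) ?_
    · exact ((measurable_const.mul hΔm.abs)).aestronglyMeasurable
    · refine (ae_restrict_iff' measurableSet_Ioc).mpr (Eventually.of_forall ?_)
      intro z hz
      rw [abs_of_nonneg (by positivity)]
      exact mul_le_mul_of_nonneg_left (hΔb z hz) hM0
  case hdiff =>
    filter_upwards [ae_ne_vol (x₀ - A)] with z hz
    have hne : x₀ - (A + z) ≠ 0 := by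
      intro h; apply hz; linarith [sub_eq_zero.mp h]
    have := (Wshift_hasDeriv hW0 hWd (c := A + z) hne).mul_const (Δ z)
    have heq : ∀ x : ℝ, x - (A + z) = x - A - z := by intro x; ring
    simpa [heq] using this
lemma J_bound {V Δf : ℝ → ℝ} {u m c bigM : ℝ} (hm0 : 0 ≤ m) (hmu : m ≤ u)
    (hVΔm : AEStronglyMeasurable (fun z => V z * Δf z)
      ((volume : Measure ℝ).restrict (Set.Ioc (0:ℝ) u)))
    (hΔm : Measurable Δf)
    (hΔb : ∀ z ∈ Set.Ioc (0:ℝ) u, |Δf z| ≤ bigM)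
    (hc : 0 ≤ c)
    (hb : ∀ᵐ z ∂(volume : Measure ℝ).restrict (Set.Ioc (0:ℝ) u),
      |V z| ≤ if z ≤ m then c else 0) :
    |∫ z in Set.Ioc (0:ℝ) u, V z * Δf z| ≤ c * ∫ z in Set.Ioc (0:ℝ) m, |Δf z| := by
  set b : ℝ → ℝ := fun z => c * Set.indicator (Set.Ioc (0:ℝ) m) (fun z => |Δf z|) z with hbdef
  have hbint : IntegrableOn b (Set.Ioc (0:ℝ) u) volume := by
    refine intOn_of_bound (by simp) ?_ (c * max bigM 0) ?_
    · exact (measurable_const.mul (hΔm.abs.indicator measurableSet_Ioc)).aestronglyMeasurable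
    · refine (ae_restrict_iff' measurableSet_Ioc).mpr (Eventually.of_forall ?_)
      intro z hz
      rw [hbdef]
      simp only [abs_mul, abs_of_nonneg hc]
      refine mul_le_mul_of_nonneg_left ?_ hc
      rcases Set.indicator_eq_zero_or_self (Set.Ioc (0:ℝ) m) (fun z => |Δf z|) z with h | h
      · rw [h]; simp [le_max_iff]
      · rw [h, abs_abs]
        rcases le_or_gt z m with hzm | hzm
        · exact le_trans (hΔb z hz) (le_max_left _ _)
        · have : z ∉ Set.Ioc (0:ℝ) m := by simp [hzm, not_le]
          rw [Set.indicator_of_notMem this] at h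
          rw [h]; simp [le_max_iff]
  have hle : ∀ᵐ z ∂(volume : Measure ℝ).restrict (Set.Ioc (0:ℝ) u), |V z * Δf z| ≤ b z := by
    filter_upwards [hb, (ae_restrict_iff' measurableSet_Ioc).mpr
      (Eventually.of_forall (fun z (hz : z ∈ Set.Ioc (0:ℝ) u) => hz))] with z h1 h2
    show |V z * Δf z| ≤ c * Set.indicator (Set.Ioc (0:ℝ) m) (fun z => |Δf z|) z
    rw [abs_mul]
    rcases le_or_gt z m with hzm | hzm
    · rw [if_pos hzm] at h1
      rw [Set.indicator_of_mem (Set.mem_Ioc.mpr ⟨h2.1, hzm⟩)]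
      exact mul_le_mul_of_nonneg_right h1 (abs_nonneg _)
    · rw [if_neg (not_le.mpr hzm)] at h1
      have hV : |V z| = 0 := le_antisymm h1 (abs_nonneg _)
      rw [hV, zero_mul]
      have : (0:ℝ) ≤ Set.indicator (Set.Ioc (0:ℝ) m) (fun z => |Δf z|) z :=
        Set.indicator_nonneg (fun z _ => abs_nonneg _) z
      positivity
  calc |∫ z in Set.Ioc (0:ℝ) u, V z * Δf z| ≤ ∫ z in Set.Ioc (0:ℝ) u, b z :=
        abs_setIntegral_le hbint hle
    _ = c * ∫ z in Set.Ioc (0:ℝ) m, |Δf z| := by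
        rw [hbdef, integral_const_mul]
        congr 1
        rw [integral_indicator measurableSet_Ioc, Measure.restrict_restrict measurableSet_Ioc]
        congr 1
        rw [Set.Ioc_inter_Ioc]
        simp [min_eq_left hmu]
section cors
variable {g : ℝ → ℝ} {A r u m : ℝ}

lemma Δmeas (hgm : Measurable g) : Measurable (fun z => g (z + A - u) - g A) :=
  (hgm.comp (by fun_prop)).sub measurable_const

lemma Δbound (hgb : ∀ K : Set ℝ, IsCompact K → ∃ Mg : ℝ, ∀ y ∈ K, |g y| ≤ Mg) (hu : 0 < u) :
    ∃ bigM : ℝ, 0 ≤ bigM ∧ ∀ z ∈ Set.Ioc (0:ℝ) u, |g (z + A - u) - g A| ≤ bigM := by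
  obtain ⟨Mg, hMg⟩ := hgb (Set.Icc (A - u) A) isCompact_Icc
  refine ⟨Mg + |g A|, ?_, ?_⟩
  · have := hMg A (by constructor <;> [linarith; linarith])
    have := abs_nonneg (g A); linarith
  · intro z hz
    have hmem : z + A - u ∈ Set.Icc (A - u) A := by
      constructor <;> [linarith [hz.1]; linarith [hz.2]]
    calc |g (z + A - u) - g A| ≤ |g (z + A - u)| + |g A| := abs_sub _ _
      _ ≤ Mg + |g A| := by linarith [hMg _ hmem]

variable (hW0 : ∀ y < (0:ℝ), W y = 0) (hWzero : W 0 = 0)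
    (hWc : ContinuousOn W (Set.Ici 0))
    (hWd : ∀ y ∈ Set.Ioi (0:ℝ), DifferentiableAt ℝ W y)
    (hWm : MonotoneOn W (Set.Ici 0))
    (hgm : Measurable g)
    (hgb : ∀ K : Set ℝ, IsCompact K → ∃ Mg : ℝ, ∀ y ∈ K, |g y| ≤ Mg)

include hW0 hWzero hWc hWm hgm hgb in
lemma corW {x : ℝ} (hr1 : r ≤ 1) (hu : 0 < u) (hx : x ∈ Set.Ioo A (A + r))
    (hm0 : 0 ≤ m) (hmu : m ≤ u) (hmx : x - A ≤ m ∨ m = u) :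
    |∫ z in Set.Ioc (0:ℝ) u, W (x - A - z) * (g (z + A - u) - g A)|
      ≤ W 1 * ∫ z in Set.Ioc (0:ℝ) m, |g (z + A - u) - g A| := by
  obtain ⟨bigM, _, hbigM⟩ := Δbound hgb hu
  refine J_bound hm0 hmu ?_ (Δmeas hgm) hbigM (Wnonneg hW0 hWzero hWm 1) ?_
  · exact (((Wcont hW0 hWzero hWc).measurable.comp (by fun_prop)).mul
      (Δmeas hgm)).aestronglyMeasurable
  · refine (ae_restrict_iff' measurableSet_Ioc).mpr (Eventually.of_forall ?_)
    intro z hz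
    rcases le_or_gt z m with hzm | hzm
    · rw [if_pos hzm]
      exact Wle hW0 hWzero hWm _ (by have := hx.2; have := hz.1; linarith)
    · rw [if_neg (not_le.mpr hzm)]
      rcases hmx with h | rfl
      · rw [hW0 _ (by have := hx.2; linarith)]; simp
      · exact absurd hz.2 (not_le.mpr hzm)

include hW0 hWzero hWc hWd hgm hgb in
lemma corW' {x M : ℝ} (hM0 : 0 ≤ M) (hM : ∀ s ∈ Set.Ioc (0:ℝ) 1, |deriv W s| ≤ M)
    (hr1 : r ≤ 1) (hu : 0 < u) (hx : x ∈ Set.Ioo A (A + r))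
    (hm0 : 0 ≤ m) (hmu : m ≤ u) (hmx : x - A ≤ m ∨ m = u) :
    |∫ z in Set.Ioc (0:ℝ) u, deriv W (x - A - z) * (g (z + A - u) - g A)|
      ≤ M * ∫ z in Set.Ioc (0:ℝ) m, |g (z + A - u) - g A| := by
  obtain ⟨bigM, _, hbigM⟩ := Δbound hgb hu
  refine J_bound hm0 hmu ?_ (Δmeas hgm) hbigM hM0 ?_
  · exact (((measurable_deriv W).comp (by fun_prop)).mul (Δmeas hgm)).aestronglyMeasurable
  · filter_upwards [ae_ne_vol (x - A), (ae_restrict_iff' measurableSet_Ioc).mpr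
      (Eventually.of_forall (fun z (hz : z ∈ Set.Ioc (0:ℝ) u) => hz))] with z hne hz
    rcases le_or_gt z m with hzm | hzm
    · rw [if_pos hzm]
      rcases lt_trichotomy (x - A - z) 0 with h | h | h
      · rw [derivW_neg hW0 h]; simpa using hM0
      · exact absurd (by linarith : x - A = z) (fun hh => hne hh.symm)
      · exact hM _ ⟨h, by have := hx.2; have := hz.1; linarith⟩
    · rw [if_neg (not_le.mpr hzm)]
      rcases hmx with h | rfl
      · rw [derivW_neg hW0 (by linarith)]; simp
      · exact absurd hz.2 (not_le.mpr hzm)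

include hW0 hWzero hWc hWd hgm hgb in
lemma corWdiff {x y M : ℝ} (hM0 : 0 ≤ M) (hM : ∀ s ∈ Set.Ioc (0:ℝ) 1, |deriv W s| ≤ M)
    (hr1 : r ≤ 1) (hu : 0 < u) (hx : x ∈ Set.Ioo A (A + r)) (hy : y ∈ Set.Ioo A (A + r))
    (hm0 : 0 ≤ m) (hmu : m ≤ u) (hmx : (x - A ≤ m ∧ y - A ≤ m) ∨ m = u) :
    |∫ z in Set.Ioc (0:ℝ) u, (W (x - A - z) - W (y - A - z)) * (g (z + A - u) - g A)|
      ≤ (M * |x - y|) * ∫ z in Set.Ioc (0:ℝ) m, |g (z + A - u) - g A| := by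
  obtain ⟨bigM, _, hbigM⟩ := Δbound hgb hu
  refine J_bound hm0 hmu ?_ (Δmeas hgm) hbigM (by positivity) ?_
  · have hWme := (Wcont hW0 hWzero hWc).measurable
    exact (((hWme.comp (by fun_prop)).sub (hWme.comp (by fun_prop))).mul
      (Δmeas hgm)).aestronglyMeasurable
  · refine (ae_restrict_iff' measurableSet_Ioc).mpr (Eventually.of_forall ?_)
    intro z hz
    rcases le_or_gt z m with hzm | hzm
    · rw [if_pos hzm]
      have := WlipAbs hW0 hWzero hWc hWd hM0 hM (x - A - z) (y - A - z)
        (by have := hx.2; have := hz.1; linarith)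
        (by have := hy.2; have := hz.1; linarith)
      have heq : x - A - z - (y - A - z) = x - y := by ring
      rwa [heq] at this
    · rw [if_neg (not_le.mpr hzm)]
      rcases hmx with ⟨h1, h2⟩ | rfl
      · rw [hW0 _ (by linarith), hW0 _ (by linarith)]; simp
      · exact absurd hz.2 (not_le.mpr hzm)

end cors
section phi
variable {g : ℝ → ℝ} {A r : ℝ} {ν : Measure ℝ}

variable (hW0 : ∀ y < (0:ℝ), W y = 0) (hWzero : W 0 = 0)
    (hWc : ContinuousOn W (Set.Ici 0))
    (hWd : ∀ y ∈ Set.Ioi (0:ℝ), DifferentiableAt ℝ W y)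
    (hWm : MonotoneOn W (Set.Ici 0))
    (hgm : Measurable g)
    (hgb : ∀ K : Set ℝ, IsCompact K → ∃ Mg : ℝ, ∀ y ∈ K, |g y| ≤ Mg)

include hW0 hWzero hWc hWm hgm hgb in
lemma innerInt {x u : ℝ} (hx1 : x - A ≤ 1) (hu : 0 < u) :
    IntegrableOn (fun z => W (x - A - z) * (g (z + A - u) - g A)) (Set.Ioc (0:ℝ) u) := by
  obtain ⟨bigM, hbigM0, hbigM⟩ := Δbound (A := A) hgb hu
  refine intOn_of_bound (by simp) ?_ (W 1 * bigM) ?_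
  · exact (((Wcont hW0 hWzero hWc).measurable.comp (by fun_prop)).mul
      (Δmeas hgm)).aestronglyMeasurable
  · refine (ae_restrict_iff' measurableSet_Ioc).mpr (Eventually.of_forall ?_)
    intro z hz
    rw [abs_mul]
    exact mul_le_mul (Wle hW0 hWzero hWm _ (by have := hz.1; linarith)) (hbigM z hz)
      (abs_nonneg _) (Wnonneg hW0 hWzero hWm 1)

include hW0 hWzero hWc hWd hWm hgm hgb in
lemma phi_hasDeriv {M x₀ : ℝ} (hM0 : 0 ≤ M) (hM : ∀ s ∈ Set.Ioc (0:ℝ) 1, |deriv W s| ≤ M)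
    (hr1 : r ≤ 1) (hx₀ : x₀ ∈ Set.Ioo A (A + r))
    (hBint : Integrable (fun u => ∫ z in Set.Ioc (0:ℝ) (min u r), |g (z + A - u) - g A|)
      (ν.restrict (Set.Ioi 0))) :
    HasDerivAt (fun x => ∫ u in Set.Ioi (0:ℝ),
        (∫ z in Set.Ioc (0:ℝ) u, W (x - A - z) * (g (z + A - u) - g A)) ∂ν)
      (∫ u in Set.Ioi (0:ℝ),
        (∫ z in Set.Ioc (0:ℝ) u, deriv W (x₀ - A - z) * (g (z + A - u) - g A)) ∂ν) x₀ := by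
  have hBnn : ∀ u : ℝ, 0 ≤ ∫ z in Set.Ioc (0:ℝ) (min u r), |g (z + A - u) - g A| :=
    fun u => integral_nonneg (fun z => abs_nonneg _)
  set ε : ℝ := min (x₀ - A) (A + r - x₀) with hε
  have hε0 : 0 < ε := lt_min (by linarith [hx₀.1]) (by linarith [hx₀.2])
  have hball : Metric.ball x₀ ε ⊆ Set.Ioo A (A + r) := by
    intro x hx
    rw [Metric.mem_ball, Real.dist_eq, abs_lt] at hx
    constructor
    · have := min_le_left (x₀ - A) (A + r - x₀); linarith [hx.1]
    · have := min_le_right (x₀ - A) (A + r - x₀); linarith [hx.2]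
  have hmem : ∀ u : ℝ, 0 < u → 0 ≤ min u r ∧ min u r ≤ u ∧ (x₀ - A ≤ min u r ∨ min u r = u) := by
    intro u hu
    refine ⟨le_min hu.le (by linarith [hx₀.1, hx₀.2]), min_le_left _ _, ?_⟩
    rcases le_total r u with h | h
    · exact Or.inl (by rw [min_eq_right h]; linarith [hx₀.2])
    · exact Or.inr (min_eq_left h)
  have hFmeas : ∀ x : ℝ, AEStronglyMeasurable
      (fun u => ∫ z in Set.Ioc (0:ℝ) u, W (x - A - z) * (g (z + A - u) - g A))
      (ν.restrict (Set.Ioi 0)) := by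
    intro x
    have hf : Measurable (fun p : ℝ × ℝ => W (x - A - p.2) * (g (p.2 + A - p.1) - g A)) :=
      ((Wcont hW0 hWzero hWc).measurable.comp (by fun_prop)).mul
        ((hgm.comp (by fun_prop)).sub measurable_const)
    exact (meas_param hf measurable_id).aestronglyMeasurable
  refine (hasDerivAt_integral_of_dominated_loc_of_lip
    (F := fun x u => ∫ z in Set.Ioc (0:ℝ) u, W (x - A - z) * (g (z + A - u) - g A))
    (F' := fun u => ∫ z in Set.Ioc (0:ℝ) u, deriv W (x₀ - A - z) * (g (z + A - u) - g A))
    (bound := fun u => M * ∫ z in Set.Ioc (0:ℝ) (min u r), |g (z + A - u) - g A|)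
    (Metric.ball_mem_nhds x₀ hε0) (Eventually.of_forall hFmeas) ?hFint ?hF'meas ?hlip ?hbint ?hdiff).2
  case hFint =>
    refine Integrable.mono' (hBint.const_mul (W 1)) (hFmeas x₀) ?_
    refine (ae_restrict_iff' measurableSet_Ioi).mpr (Eventually.of_forall ?_)
    intro u hu
    obtain ⟨h1, h2, h3⟩ := hmem u hu
    rw [Real.norm_eq_abs]
    exact corW hW0 hWzero hWc hWm hgm hgb hr1 hu hx₀ h1 h2 h3
  case hF'meas =>
    have hf : Measurable (fun p : ℝ × ℝ => deriv W (x₀ - A - p.2) * (g (p.2 + A - p.1) - g A)) :=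
      ((measurable_deriv W).comp (by fun_prop)).mul
        ((hgm.comp (by fun_prop)).sub measurable_const)
    exact (meas_param hf measurable_id).aestronglyMeasurable
  case hlip =>
    refine (ae_restrict_iff' measurableSet_Ioi).mpr (Eventually.of_forall ?_)
    intro u hu
    obtain ⟨h1, h2, h3⟩ := hmem u hu
    rw [lipschitzOnWith_iff_dist_le_mul]
    intro x hx y hy
    have hx' := hball hx; have hy' := hball hy
    rw [Real.dist_eq, Real.dist_eq]
    have hsub : (∫ z in Set.Ioc (0:ℝ) u, W (x - A - z) * (g (z + A - u) - g A))
        - (∫ z in Set.Ioc (0:ℝ) u, W (y - A - z) * (g (z + A - u) - g A))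
        = ∫ z in Set.Ioc (0:ℝ) u, (W (x - A - z) - W (y - A - z)) * (g (z + A - u) - g A) := by
      rw [← integral_sub (innerInt hW0 hWzero hWc hWm hgm hgb (by linarith [hx'.2]) hu)
        (innerInt hW0 hWzero hWc hWm hgm hgb (by linarith [hy'.2]) hu)]
      congr 1; funext z; ring
    rw [hsub]
    have h3' : x - A ≤ min u r ∧ y - A ≤ min u r ∨ min u r = u := by
      rcases le_total r u with h | h
      · rw [min_eq_right h]; exact Or.inl ⟨by linarith [hx'.2], by linarith [hy'.2]⟩
      · exact Or.inr (min_eq_left h)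
    have hcd := corWdiff hW0 hWzero hWc hWd hgm hgb hM0 hM hr1 hu hx' hy' h1 h2 h3'
    have hco : ((Real.nnabs (M * ∫ z in Set.Ioc (0:ℝ) (min u r), |g (z + A - u) - g A|)) : ℝ)
        = M * ∫ z in Set.Ioc (0:ℝ) (min u r), |g (z + A - u) - g A| := by
      rw [Real.coe_nnabs, abs_of_nonneg (mul_nonneg hM0 (hBnn u))]
    rw [hco]
    calc _ ≤ (M * |x - y|) * ∫ z in Set.Ioc (0:ℝ) (min u r), |g (z + A - u) - g A| := hcd
      _ = _ := by ring
  case hbint => exact hBint.const_mul M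
  case hdiff =>
    refine (ae_restrict_iff' measurableSet_Ioi).mpr (Eventually.of_forall ?_)
    intro u hu
    exact innerJ_hasDeriv hW0 hWzero hWc hWd hWm (le_trans hM0 (le_refl M)) hM hgm hgb hr1 hu hx₀
end phi
lemma split_zero_tail {f : ℝ → ℝ} {a m b : ℝ} (ham : a ≤ m) (hmb : m ≤ b)
    (hint : IntegrableOn f (Set.Ioc a b)) (hzero : ∀ y ∈ Set.Ioc m b, f y = 0) :
    ∫ y in Set.Ioc a b, f y = ∫ y in Set.Ioc a m, f y := by
  rw [← Set.Ioc_union_Ioc_eq_Ioc ham hmb]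
  rw [setIntegral_union (Set.Ioc_disjoint_Ioc_of_le le_rfl) measurableSet_Ioc
    (hint.mono_set (by rw [← Set.Ioc_union_Ioc_eq_Ioc ham hmb]; exact Set.subset_union_left))
    (hint.mono_set (by rw [← Set.Ioc_union_Ioc_eq_Ioc ham hmb]; exact Set.subset_union_right))]
  rw [setIntegral_congr_fun measurableSet_Ioc hzero]
  simp

section hterm
variable {h : ℝ → ℝ} {A r : ℝ}
variable (hW0 : ∀ y < (0:ℝ), W y = 0) (hWzero : W 0 = 0)
    (hWc : ContinuousOn W (Set.Ici 0))
    (hWd : ∀ y ∈ Set.Ioi (0:ℝ), DifferentiableAt ℝ W y)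
    (hWm : MonotoneOn W (Set.Ici 0))
    (hhm : Measurable h)
    (hhb : ∀ K : Set ℝ, IsCompact K → ∃ Mh : ℝ, ∀ y ∈ K, |h y| ≤ Mh)

include hW0 hWzero hWc hWm hhm hhb in
lemma hterm_int {x : ℝ} (hx1 : x - A ≤ 1) :
    IntegrableOn (fun y => W (x - y) * h y) (Set.Ioc A (A + 1)) := by
  obtain ⟨Mh, hMh⟩ := hhb (Set.Icc A (A + 1)) isCompact_Icc
  refine intOn_of_bound (by simp) ?_ (W 1 * max Mh 0) ?_
  · exact (((Wcont hW0 hWzero hWc).measurable.comp (by fun_prop)).mul hhm).aestronglyMeasurable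
  · refine (ae_restrict_iff' measurableSet_Ioc).mpr (Eventually.of_forall ?_)
    intro y hy
    rw [abs_mul]
    refine mul_le_mul (Wle hW0 hWzero hWm _ (by have := hy.1; linarith)) ?_
      (abs_nonneg _) (Wnonneg hW0 hWzero hWm 1)
    exact le_trans (hMh y ⟨hy.1.le, hy.2⟩) (le_max_left _ _)

include hW0 hWzero hWc hWm hhm hhb in
lemma hterm_eq {x : ℝ} (hxA : A < x) (hx1 : x - A ≤ 1) :
    ∫ y in A..x, W (x - y) * h y = ∫ y in Set.Ioc A (A + 1), W (x - y) * h y := by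
  rw [intervalIntegral.integral_of_le hxA.le]
  refine (split_zero_tail hxA.le (by linarith) (hterm_int hW0 hWzero hWc hWm hhm hhb hx1) ?_).symm
  intro y hy
  rw [hW0 (x - y) (by linarith [hy.1]), zero_mul]

include hW0 hWzero hWc hWd hWm hhm hhb in
lemma hterm_hasDeriv {M x₀ : ℝ} (hM0 : 0 ≤ M) (hM : ∀ s ∈ Set.Ioc (0:ℝ) 1, |deriv W s| ≤ M)
    (hr1 : r ≤ 1) (hx₀ : x₀ ∈ Set.Ioo A (A + r)) :
    HasDerivAt (fun x => ∫ y in Set.Ioc A (A + 1), W (x - y) * h y)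
      (∫ y in Set.Ioc A (A + 1), deriv W (x₀ - y) * h y) x₀ := by
  obtain ⟨Mh, hMh⟩ := hhb (Set.Icc A (A + 1)) isCompact_Icc
  have hMh' : ∀ y ∈ Set.Ioc A (A + 1), |h y| ≤ max Mh 0 :=
    fun y hy => le_trans (hMh y ⟨hy.1.le, hy.2⟩) (le_max_left _ _)
  set ε : ℝ := min (x₀ - A) (A + r - x₀) with hε
  have hε0 : 0 < ε := lt_min (by linarith [hx₀.1]) (by linarith [hx₀.2])
  have hball : Metric.ball x₀ ε ⊆ Set.Ioo A (A + r) := by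
    intro x hx
    rw [Metric.mem_ball, Real.dist_eq, abs_lt] at hx
    constructor
    · have := min_le_left (x₀ - A) (A + r - x₀); linarith [hx.1]
    · have := min_le_right (x₀ - A) (A + r - x₀); linarith [hx.2]
  have hmeas : ∀ x : ℝ, AEStronglyMeasurable (fun y => W (x - y) * h y)
      ((volume : Measure ℝ).restrict (Set.Ioc A (A + 1))) := fun x =>
    (((Wcont hW0 hWzero hWc).measurable.comp (by fun_prop)).mul hhm).aestronglyMeasurable
  refine (hasDerivAt_integral_of_dominated_loc_of_lip
    (F := fun x y => W (x - y) * h y) (F' := fun y => deriv W (x₀ - y) * h y)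
    (bound := fun y => M * |h y|) (Metric.ball_mem_nhds x₀ hε0) (Eventually.of_forall hmeas)
    (hterm_int hW0 hWzero hWc hWm hhm hhb (by linarith [hx₀.2])) ?hF'meas ?hlip ?hbint ?hdiff).2
  case hF'meas =>
    exact (((measurable_deriv W).comp (by fun_prop)).mul hhm).aestronglyMeasurable
  case hlip =>
    refine (ae_restrict_iff' measurableSet_Ioc).mpr (Eventually.of_forall ?_)
    intro y hy
    rw [lipschitzOnWith_iff_dist_le_mul]
    intro x hx x' hx'
    have hxm := hball hx; have hxm' := hball hx'
    rw [Real.dist_eq, Real.dist_eq]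
    have h1 : W (x - y) * h y - W (x' - y) * h y = (W (x - y) - W (x' - y)) * h y := by ring
    rw [h1, abs_mul]
    have h2 : |W (x - y) - W (x' - y)| ≤ M * |x - x'| := by
      have := WlipAbs hW0 hWzero hWc hWd hM0 hM (x - y) (x' - y)
        (by have := hxm.2; have := hy.1; linarith)
        (by have := hxm'.2; have := hy.1; linarith)
      have heq : x - y - (x' - y) = x - x' := by ring
      rwa [heq] at this
    have h3 : ((Real.nnabs (M * |h y|)) : ℝ) = M * |h y| := by
      rw [Real.coe_nnabs, abs_of_nonneg (by positivity)]
    rw [h3]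
    calc |W (x - y) - W (x' - y)| * |h y| ≤ M * |x - x'| * |h y| :=
          mul_le_mul_of_nonneg_right h2 (abs_nonneg _)
      _ = M * |h y| * |x - x'| := by ring
  case hbint =>
    refine intOn_of_bound (by simp) (measurable_const.mul hhm.abs).aestronglyMeasurable
      (M * max Mh 0) ?_
    refine (ae_restrict_iff' measurableSet_Ioc).mpr (Eventually.of_forall ?_)
    intro y hy
    rw [abs_of_nonneg (by positivity)]
    exact mul_le_mul_of_nonneg_left (hMh' y hy) hM0
  case hdiff =>
    filter_upwards [ae_ne_vol x₀] with y hy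
    exact (Wshift_hasDeriv hW0 hWd (c := y) (sub_ne_zero.mpr (Ne.symm hy))).mul_const (h y)

include hW0 hhm hhb in
lemma hterm_deriv_bound {M x : ℝ} (hM0 : 0 ≤ M) (hM : ∀ s ∈ Set.Ioc (0:ℝ) 1, |deriv W s| ≤ M)
    {Mh : ℝ} (hMh : ∀ y ∈ Set.Icc A (A + 1), |h y| ≤ Mh)
    (hx : A < x) (hx1 : x - A ≤ 1) :
    |∫ y in Set.Ioc A (A + 1), deriv W (x - y) * h y| ≤ M * max Mh 0 * (x - A) := by
  have hMh0 : 0 ≤ max Mh 0 := le_max_right _ _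
  set b : ℝ → ℝ := fun y => Set.indicator (Set.Ioc A x) (fun _ => M * max Mh 0) y with hb
  have hbint : IntegrableOn b (Set.Ioc A (A + 1)) := by
    refine intOn_of_bound (by simp) ?_ (M * max Mh 0) ?_
    · exact ((measurable_const.indicator measurableSet_Ioc)).aestronglyMeasurable
    · refine (ae_restrict_iff' measurableSet_Ioc).mpr (Eventually.of_forall ?_)
      intro y _
      rcases Set.indicator_eq_zero_or_self (Set.Ioc A x) (fun _ => M * max Mh 0) y with hh | hh <;>
        (rw [hb]; simp only; rw [hh])
      · simp; positivity
      · rw [abs_of_nonneg (by positivity)]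
  have hle : ∀ᵐ y ∂(volume : Measure ℝ).restrict (Set.Ioc A (A + 1)),
      |deriv W (x - y) * h y| ≤ b y := by
    filter_upwards [ae_ne_vol x, (ae_restrict_iff' measurableSet_Ioc).mpr
      (Eventually.of_forall (fun y (hy : y ∈ Set.Ioc A (A + 1)) => hy))] with y hne hy
    rw [abs_mul]
    rcases lt_or_ge y x with hyx | hyx
    · have harg : 0 < x - y := by linarith
      have h1 : |deriv W (x - y)| ≤ M := hM _ ⟨harg, by have := hy.1; linarith⟩
      have : b y = M * max Mh 0 := Set.indicator_of_mem (Set.mem_Ioc.mpr ⟨hy.1, hyx.le⟩) _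
      rw [this]
      exact mul_le_mul h1 (le_trans (hMh y ⟨hy.1.le, hy.2⟩) (le_max_left _ _))
        (abs_nonneg _) hM0
    · have hyx' : x < y := lt_of_le_of_ne hyx (fun hh => hne hh.symm)
      rw [derivW_neg hW0 (by linarith), abs_zero, zero_mul]
      exact Set.indicator_nonneg (fun _ _ => by positivity) y
  calc |∫ y in Set.Ioc A (A + 1), deriv W (x - y) * h y|
      ≤ ∫ y in Set.Ioc A (A + 1), b y := abs_setIntegral_le hbint hle
    _ = M * max Mh 0 * (x - A) := by
        rw [hb]
        rw [integral_indicator measurableSet_Ioc, Measure.restrict_restrict measurableSet_Ioc]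
        rw [setIntegral_const]
        have : Set.Ioc A x ∩ Set.Ioc A (A + 1) = Set.Ioc A x := by
          rw [Set.Ioc_inter_Ioc]
          simp [min_eq_left (by linarith : x ≤ A + 1)]
        rw [this]
        simp [Real.volume_Ioc, ENNReal.toReal_ofReal (by linarith : (0:ℝ) ≤ x - A)]
        rw [max_eq_left (by linarith : (0:ℝ) ≤ x - A)]
        ring

set_option maxHeartbeats 2000000

/-- Smooth fit: under (C1)-(C2), `lim_{x↓A} U_A'(x) = W'(0+)Ψ(A)`;
in particular if `W'(0+) = 2/σ²` for some `σ > 0`, then the smooth-fit condition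
`lim_{x↓A} U_A'(x) = g'(A)` holds iff `Ψ(A) = (σ²/2)g'(A)`. -/
theorem smooth_fit
    (ν : Measure ℝ) (q Φ A C L W'0 : ℝ) (g W h : ℝ → ℝ)
    (hν : ∫⁻ z in Set.Ioi (0:ℝ), ENNReal.ofReal (min 1 (z ^ 2)) ∂ν < ⊤)
    (hq : 0 < q) (hΦ : 0 < Φ)
    (hgm : Measurable g)
    (hgb : ∀ K : Set ℝ, IsCompact K → ∃ M : ℝ, ∀ y ∈ K, |g y| ≤ M)
    (hW0 : ∀ y < (0:ℝ), W y = 0)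
    (hWzero : W 0 = 0)
    (hWc : ContinuousOn W (Set.Ici 0))
    (hWm : MonotoneOn W (Set.Ici 0))
    (hWd : ∀ y ∈ Set.Ioi (0:ℝ), DifferentiableAt ℝ W y)
    (hWd' : ContinuousOn (deriv W) (Set.Ioi 0))
    (hW'0 : Filter.Tendsto (deriv W) (nhdsWithin 0 (Set.Ioi 0)) (nhds W'0))
    (hWΦm : MonotoneOn (fun y => Real.exp (-Φ * y) * W y) (Set.Ici 0))
    (hWΦb : ∀ y ∈ Set.Ici (0:ℝ), Real.exp (-Φ * y) * W y ≤ C)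
    (hL : ∀ y ∈ Set.Ioi (0:ℝ), deriv (fun t => Real.exp (-Φ * t) * W t) y ≤ L)
    (hC1 : ∃ ε > (0:ℝ), ContDiffOn ℝ 2 g (Set.Ioo (A - ε) (A + ε)))
    (hC2 : ∫⁻ u in Set.Ioi (1:ℝ),
        ENNReal.ofReal (sSup ((fun ζ => |g ζ - g A|) '' Set.Icc (A - u) A)) ∂ν < ⊤)
    (hhm : Measurable h)
    (hhb : ∀ K : Set ℝ, IsCompact K → ∃ M : ℝ, ∀ y ∈ K, |h y| ≤ M)
    (hhint : IntegrableOn (fun y => Real.exp (-Φ * y) * h (y + A)) (Set.Ioi 0)) :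
    Filter.Tendsto (fun x => deriv (Ufun q Φ ν W g h A) x) (nhdsWithin A (Set.Ioi A))
        (nhds (W'0 * PsiFun q Φ ν g h A))
    ∧ ∀ σ : ℝ, 0 < σ → W'0 = 2 / σ ^ 2 →
        (Filter.Tendsto (fun x => deriv (Ufun q Φ ν W g h A) x)
            (nhdsWithin A (Set.Ioi A)) (nhds (deriv g A)) ↔
          PsiFun q Φ ν g h A = σ ^ 2 / 2 * deriv g A) := by
  -- ## Setup
  obtain ⟨ε, hε0, hg2⟩ := hC1
  obtain ⟨M, hM0, hM⟩ := derivW_bound_s12 hWd' hW'0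
  set r : ℝ := min (ε / 2) 1 with hrdef
  have hr0 : 0 < r := lt_min (by linarith) one_pos
  have hr1 : r ≤ 1 := min_le_right _ _
  have hrε : r < ε := lt_of_le_of_lt (min_le_left _ _) (by linarith)
  have hIccIoo : Set.Icc (A - r) A ⊆ Set.Ioo (A - ε) (A + ε) := by
    intro x hx; exact ⟨by linarith [hx.1], by linarith [hx.2]⟩
  -- Lipschitz bound for g near A
  have hgd : ∀ x ∈ Set.Ioo (A - r) A, DifferentiableAt ℝ g x := by
    intro x hx
    have hx' : x ∈ Set.Ioo (A - ε) (A + ε) := hIccIoo ⟨hx.1.le, hx.2.le⟩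
    exact (hg2.differentiableOn (by norm_num)).differentiableAt (isOpen_Ioo.mem_nhds hx')
  obtain ⟨K, hK⟩ := (isCompact_Icc (a := A - r) (b := A)).exists_bound_of_continuousOn
    ((hg2.continuousOn_deriv_of_isOpen isOpen_Ioo (by norm_num)).mono hIccIoo)
  set K' : ℝ := max K 0 with hK'def
  have hK'0 : 0 ≤ K' := le_max_right _ _
  have hKabs : ∀ x ∈ Set.Ioo (A - r) A, |deriv g x| ≤ K' := by
    intro x hx
    exact le_trans (by simpa [Real.norm_eq_abs] using hK x ⟨hx.1.le, hx.2.le⟩) (le_max_left _ _)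
  have hglip : ∀ ζ ∈ Set.Icc (A - r) A, |g A - g ζ| ≤ K' * (A - ζ) :=
    fun ζ hζ => lip_of_deriv (hg2.continuousOn.mono hIccIoo) hgd hKabs ζ hζ
      A ⟨by linarith [hr0], le_rfl⟩ hζ.2
  -- global bound on [A-1, A]
  obtain ⟨Mg1, hMg1⟩ := hgb (Set.Icc (A - 1) A) isCompact_Icc
  set M₁ : ℝ := Mg1 + |g A| with hM₁def
  have hM₁0 : 0 ≤ M₁ := by
    have hA1 : |g A| ≤ Mg1 := hMg1 A ⟨by linarith, le_rfl⟩
    rw [hM₁def]; linarith [abs_nonneg (g A)]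
  -- the dominating function B
  set B : ℝ → ℝ := fun u => ∫ z in Set.Ioc (0:ℝ) (min u r), |g (z + A - u) - g A| with hBdef
  have hBnn : ∀ u, 0 ≤ B u := fun u => integral_nonneg (fun z => abs_nonneg _)
  have hBmeas : Measurable B := by
    have hf : Measurable (fun p : ℝ × ℝ => |g (p.2 + A - p.1) - g A|) :=
      ((hgm.comp (by fun_prop)).sub measurable_const).abs
    exact meas_param hf (measurable_id.min measurable_const)
  have hBle : ∀ u : ℝ, 0 < u → ∀ c : ℝ, 0 ≤ c →
      (∀ z ∈ Set.Ioc (0:ℝ) (min u r), |g (z + A - u) - g A| ≤ c) → B u ≤ c * min u r := by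
    intro u hu c hc hpt
    have hfin : (volume : Measure ℝ) (Set.Ioc (0:ℝ) (min u r)) < ⊤ := by simp
    have := norm_setIntegral_le_of_norm_le_const (μ := (volume : Measure ℝ))
      (s := Set.Ioc (0:ℝ) (min u r)) (f := fun z => |g (z + A - u) - g A|) hfin
      (fun z hz => by rw [Real.norm_eq_abs, abs_abs]; exact hpt z hz)
    rw [Real.norm_eq_abs, Measure.real] at this
    have hmin0 : 0 ≤ min u r := le_min hu.le hr0.le
    have hvol : ((volume : Measure ℝ) (Set.Ioc (0:ℝ) (min u r))).toReal = min u r := by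
      rw [Real.volume_Ioc, ENNReal.toReal_ofReal (by linarith)]
      ring
    rw [hvol] at this
    exact le_trans (le_abs_self _) this
  have hb1 : ∀ u ∈ Set.Ioc (0:ℝ) r, B u ≤ K' * u ^ 2 := by
    intro u hu
    have := hBle u hu.1 (K' * u) (mul_nonneg hK'0 hu.1.le) ?_
    · calc B u ≤ K' * u * min u r := this
        _ ≤ K' * u ^ 2 := by
            have h2 : (K' * u) * (u ⊓ r) ≤ (K' * u) * u :=
              mul_le_mul_of_nonneg_left (min_le_left u r) (mul_nonneg hK'0 hu.1.le)
            nlinarith [h2]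
    · intro z hz
      have hz1 := hz.1; have hz2 := le_trans hz.2 (min_le_left _ _)
      have hmem : z + A - u ∈ Set.Icc (A - r) A := by
        constructor
        · have := hu.2; linarith
        · linarith
      calc |g (z + A - u) - g A| = |g A - g (z + A - u)| := abs_sub_comm _ _
        _ ≤ K' * (A - (z + A - u)) := hglip _ hmem
        _ = K' * (u - z) := by ring_nf
        _ ≤ K' * u := by nlinarith
  have hb2 : ∀ u ∈ Set.Ioc r 1, B u ≤ M₁ := by
    intro u hu
    have := hBle u (lt_trans hr0 hu.1) M₁ hM₁0 ?_
    · calc B u ≤ M₁ * min u r := this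
        _ ≤ M₁ * 1 := by
            refine mul_le_mul_of_nonneg_left ?_ hM₁0
            exact le_trans (min_le_right _ _) hr1
        _ = M₁ := mul_one _
    · intro z hz
      have hz1 := hz.1; have hz2 := le_trans hz.2 (min_le_left _ _)
      have hmem : z + A - u ∈ Set.Icc (A - 1) A := by
        constructor
        · have := hu.2; linarith
        · linarith
      calc |g (z + A - u) - g A| ≤ |g (z + A - u)| + |g A| := abs_sub _ _
        _ ≤ M₁ := by rw [hM₁def]; linarith [hMg1 _ hmem]
  have hb3 : ∀ u ∈ Set.Ioi (1:ℝ), B u ≤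
      sSup ((fun ζ => |g ζ - g A|) '' Set.Icc (A - u) A) := by
    intro u hu
    have hu1 : (1:ℝ) < u := hu
    obtain ⟨Mgu, hMgu⟩ := hgb (Set.Icc (A - u) A) isCompact_Icc
    have hbdd : BddAbove ((fun ζ => |g ζ - g A|) '' Set.Icc (A - u) A) := by
      refine ⟨Mgu + |g A|, ?_⟩
      rintro v ⟨ζ, hζ, rfl⟩
      calc |g ζ - g A| ≤ |g ζ| + |g A| := abs_sub _ _
        _ ≤ Mgu + |g A| := by linarith [hMgu ζ hζ]
    have hS0 : 0 ≤ sSup ((fun ζ => |g ζ - g A|) '' Set.Icc (A - u) A) := by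
      have : (0:ℝ) ∈ (fun ζ => |g ζ - g A|) '' Set.Icc (A - u) A := by
        refine ⟨A, ⟨by linarith, le_rfl⟩, by simp⟩
      exact le_csSup hbdd this
    have := hBle u (by linarith) _ hS0 ?_
    · calc B u ≤ _ * min u r := this
        _ ≤ _ * 1 := by
            refine mul_le_mul_of_nonneg_left (le_trans (min_le_right _ _) hr1) hS0
        _ = _ := mul_one _
    · intro z hz
      have hz1 := hz.1
      have hz2 : z ≤ u := le_trans hz.2 (min_le_left _ _)
      have hz3 : z ≤ r := le_trans hz.2 (min_le_right _ _)
      have hmem : z + A - u ∈ Set.Icc (A - u) A := by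
        constructor
        · linarith
        · linarith
      exact le_csSup hbdd ⟨z + A - u, hmem, rfl⟩
  -- B is ν-integrable on (0,∞)
  have hBint : Integrable B (ν.restrict (Set.Ioi 0)) := by
    refine ⟨hBmeas.aestronglyMeasurable, ?_⟩
    rw [hasFiniteIntegral_iff_norm]
    have heqn : ∀ u : ℝ, ENNReal.ofReal ‖B u‖ = ENNReal.ofReal (B u) := fun u => by
      rw [Real.norm_eq_abs, abs_of_nonneg (hBnn u)]
    simp_rw [heqn]
    have hmin : Measurable (fun u : ℝ => ENNReal.ofReal (min 1 (u ^ 2))) := by fun_prop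
    have hdisj1 : Disjoint (Set.Ioc (0:ℝ) r) (Set.Ioi r) := Set.Ioc_disjoint_Ioi le_rfl
    have hdisj2 : Disjoint (Set.Ioc r 1) (Set.Ioi 1) := Set.Ioc_disjoint_Ioi le_rfl
    have hsplit1 : Set.Ioc (0:ℝ) r ∪ Set.Ioi r = Set.Ioi 0 := Set.Ioc_union_Ioi_eq_Ioi hr0.le
    have hsplit2 : Set.Ioc r 1 ∪ Set.Ioi 1 = Set.Ioi r := Set.Ioc_union_Ioi_eq_Ioi hr1
    have hres : (ν.restrict (Set.Ioi 0)) = ν.restrict (Set.Ioi 0) := rfl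
    have key : ∫⁻ u in Set.Ioi (0:ℝ), ENNReal.ofReal (B u) ∂ν
        = (∫⁻ u in Set.Ioc (0:ℝ) r, ENNReal.ofReal (B u) ∂ν)
          + ((∫⁻ u in Set.Ioc r 1, ENNReal.ofReal (B u) ∂ν)
            + (∫⁻ u in Set.Ioi (1:ℝ), ENNReal.ofReal (B u) ∂ν)) := by
      rw [← hsplit1, lintegral_union measurableSet_Ioi hdisj1, ← hsplit2,
        lintegral_union measurableSet_Ioi hdisj2]
    have hxt : ∫⁻ u, ENNReal.ofReal (B u) ∂(ν.restrict (Set.Ioi 0))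
        = ∫⁻ u in Set.Ioi (0:ℝ), ENNReal.ofReal (B u) ∂ν := rfl
    rw [hxt, key]
    have t1 : (∫⁻ u in Set.Ioc (0:ℝ) r, ENNReal.ofReal (B u) ∂ν) < ⊤ := by
      have hle : (∫⁻ u in Set.Ioc (0:ℝ) r, ENNReal.ofReal (B u) ∂ν)
          ≤ ∫⁻ u in Set.Ioc (0:ℝ) r, ENNReal.ofReal K' * ENNReal.ofReal (min 1 (u ^ 2)) ∂ν := by
        refine lintegral_mono_ae ((ae_restrict_iff' measurableSet_Ioc).mpr
          (Eventually.of_forall ?_))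
        intro u hu
        have h1 : B u ≤ K' * u ^ 2 := hb1 u hu
        have h2 : min 1 (u ^ 2) = u ^ 2 := min_eq_right (by nlinarith [hu.1, le_trans hu.2 hr1])
        rw [← ENNReal.ofReal_mul hK'0, h2]
        exact ENNReal.ofReal_le_ofReal h1
      have : (∫⁻ u in Set.Ioc (0:ℝ) r, ENNReal.ofReal K' * ENNReal.ofReal (min 1 (u^2)) ∂ν)
          = ENNReal.ofReal K' * ∫⁻ u in Set.Ioc (0:ℝ) r, ENNReal.ofReal (min 1 (u^2)) ∂ν := by
        rw [lintegral_const_mul _ hmin]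
      rw [this] at hle
      refine lt_of_le_of_lt hle (ENNReal.mul_lt_top ENNReal.ofReal_lt_top ?_)
      exact lt_of_le_of_lt (lintegral_mono_set (fun x hx => hx.1)) hν
    have hνfin : ν (Set.Ioc r 1) < ⊤ := by
      have hlow : ENNReal.ofReal (r ^ 2) * ν (Set.Ioc r 1)
          ≤ ∫⁻ u in Set.Ioi (0:ℝ), ENNReal.ofReal (min 1 (u ^ 2)) ∂ν := by
        calc ENNReal.ofReal (r ^ 2) * ν (Set.Ioc r 1)
            = ∫⁻ _ in Set.Ioc r 1, ENNReal.ofReal (r ^ 2) ∂ν := by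
              rw [setLIntegral_const]
          _ ≤ ∫⁻ u in Set.Ioc r 1, ENNReal.ofReal (min 1 (u ^ 2)) ∂ν := by
              refine lintegral_mono_ae ((ae_restrict_iff' measurableSet_Ioc).mpr
                (Eventually.of_forall ?_))
              intro u hu
              refine ENNReal.ofReal_le_ofReal ?_
              have : min 1 (u ^ 2) = u ^ 2 := min_eq_right (by nlinarith [hu.1, hu.2, hr0])
              rw [this]
              nlinarith [hu.1.le, hr0.le]
          _ ≤ _ := lintegral_mono_set (fun x hx => lt_trans hr0 hx.1)
      by_contra hcon
      rw [not_lt, top_le_iff] at hcon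
      rw [hcon, ENNReal.mul_top (by simp [ENNReal.ofReal_eq_zero]; nlinarith)] at hlow
      exact absurd (lt_of_le_of_lt hlow hν) (lt_irrefl _)
    have t2 : (∫⁻ u in Set.Ioc r 1, ENNReal.ofReal (B u) ∂ν) < ⊤ := by
      have hle : (∫⁻ u in Set.Ioc r 1, ENNReal.ofReal (B u) ∂ν)
          ≤ ∫⁻ _ in Set.Ioc r 1, ENNReal.ofReal M₁ ∂ν := by
        refine lintegral_mono_ae ((ae_restrict_iff' measurableSet_Ioc).mpr
          (Eventually.of_forall ?_))
        intro u hu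
        exact ENNReal.ofReal_le_ofReal (hb2 u hu)
      rw [setLIntegral_const] at hle
      exact lt_of_le_of_lt hle (ENNReal.mul_lt_top ENNReal.ofReal_lt_top hνfin)
    have t3 : (∫⁻ u in Set.Ioi (1:ℝ), ENNReal.ofReal (B u) ∂ν) < ⊤ := by
      have hle : (∫⁻ u in Set.Ioi (1:ℝ), ENNReal.ofReal (B u) ∂ν)
          ≤ ∫⁻ u in Set.Ioi (1:ℝ),
            ENNReal.ofReal (sSup ((fun ζ => |g ζ - g A|) '' Set.Icc (A - u) A)) ∂ν := by
        refine lintegral_mono_ae ((ae_restrict_iff' measurableSet_Ioi).mpr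
          (Eventually.of_forall ?_))
        intro u hu
        exact ENNReal.ofReal_le_ofReal (hb3 u hu)
      exact lt_of_le_of_lt hle hC2
    exact ENNReal.add_lt_top.mpr ⟨t1, ENNReal.add_lt_top.mpr ⟨t2, t3⟩⟩
  -- ## names for constants
  set ρ : ℝ := rhoFun ν Φ g A with hρdef
  set H : ℝ := hInt Φ h A with hHdef
  obtain ⟨Mh, hMh⟩ := hhb (Set.Icc A (A + 1)) isCompact_Icc
  -- ## alternative representation of U on (A, A+r)
  set Gφ : ℝ → ℝ := fun x => ∫ u in Set.Ioi (0:ℝ),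
    (∫ z in Set.Ioc (0:ℝ) u, W (x - A - z) * (g (z + A - u) - g A)) ∂ν with hGφdef
  set Dφ : ℝ → ℝ := fun x => ∫ u in Set.Ioi (0:ℝ),
    (∫ z in Set.Ioc (0:ℝ) u, deriv W (x - A - z) * (g (z + A - u) - g A)) ∂ν with hDφdef
  set Hterm : ℝ → ℝ := fun x => ∫ y in Set.Ioc A (A + 1), W (x - y) * h y with hHtermdef
  set Dh : ℝ → ℝ := fun x => ∫ y in Set.Ioc A (A + 1), deriv W (x - y) * h y with hDhdef
  set Ualt : ℝ → ℝ := fun x => g A * ((1 + q * ∫ y in (0:ℝ)..(x - A), W y) - q / Φ * W (x - A))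
    + W (x - A) * ρ - Gφ x + W (x - A) * H - Hterm x with hUaltdef
  have hUeqOn : ∀ x ∈ Set.Ioo A (A + r), Ufun q Φ ν W g h A x = Ualt x := by
    intro x hx
    have hxA : A < x := hx.1
    have hx1 : x - A ≤ 1 := by have := hx.2; linarith
    have hZeq : Zfun q W (x - A) = 1 + q * ∫ y in (0:ℝ)..(x - A), W y := by
      rw [Zfun, max_eq_left (by linarith : (0:ℝ) ≤ x - A)]
    have hφeq : phiFun ν W g A x = Gφ x := by
      rw [phiFun, hGφdef]
      refine setIntegral_congr_fun measurableSet_Ioi ?_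
      intro u hu
      have hu0 : (0:ℝ) < u := hu
      have hmin0 : 0 ≤ min u (x - A) := le_min hu0.le (by linarith)
      have hminu : min u (x - A) ≤ u := min_le_left _ _
      simp only
      rw [intervalIntegral.integral_of_le hmin0]
      have hfeq : (fun z => W (x - z - A) * (g (z + A - u) - g A))
          = fun z => W (x - A - z) * (g (z + A - u) - g A) := by
        funext z; rw [sub_right_comm]
      rw [hfeq]
      refine (split_zero_tail hmin0 hminu
        (innerInt hW0 hWzero hWc hWm hgm hgb hx1 hu0) ?_).symm
      intro z hz
      have : x - A - z < 0 := by
        rcases min_cases u (x - A) with ⟨hmeq, hle⟩ | ⟨hmeq, hle⟩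
        · rw [hmeq] at hz; linarith [hz.1, hz.2]
        · rw [hmeq] at hz; linarith [hz.1]
      rw [hW0 _ this, zero_mul]
    have hheq : (∫ y in A..x, W (x - y) * h y)
        = ∫ y in Set.Ioc A (A + 1), W (x - y) * h y :=
      hterm_eq hW0 hWzero hWc hWm hhm hhb hxA hx1
    rw [Ufun, hZeq, hφeq, hheq, hUaltdef, hρdef, hHdef, hHtermdef]
  -- ## derivative of Ualt on (A, A + r)
  have hUderiv : ∀ x₀ ∈ Set.Ioo A (A + r),
      HasDerivAt (Ufun q Φ ν W g h A)
        (g A * (q * W (x₀ - A) - q / Φ * deriv W (x₀ - A)) + deriv W (x₀ - A) * ρ - Dφ x₀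
          + deriv W (x₀ - A) * H - Dh x₀) x₀ := by
    intro x₀ hx₀
    have hx₀A : A < x₀ := hx₀.1
    -- derivative of the Z-part
    have hZ1 : HasDerivAt (fun t => ∫ y in (0:ℝ)..t, W y) (W (x₀ - A)) (x₀ - A) := by
      refine intervalIntegral.integral_hasDerivAt_right
        ((Wcont hW0 hWzero hWc).intervalIntegrable _ _)
        ⟨Set.univ, Filter.univ_mem, ?_⟩ (Wcont hW0 hWzero hWc).continuousAt
      exact ((Wcont hW0 hWzero hWc).stronglyMeasurable).aestronglyMeasurable.restrict
    have hsubA : HasDerivAt (fun x : ℝ => x - A) 1 x₀ := (hasDerivAt_id x₀).sub_const A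
    have hZ2 : HasDerivAt (fun x => ∫ y in (0:ℝ)..(x - A), W y) (W (x₀ - A)) x₀ := by
      simpa [Function.comp_def] using hZ1.comp x₀ hsubA
    have hWx : HasDerivAt (fun x => W (x - A)) (deriv W (x₀ - A)) x₀ :=
      Wshift_hasDeriv hW0 hWd (c := A) (by intro hc; rw [sub_eq_zero] at hc; exact absurd hc (ne_of_gt hx₀A))
    have hφ : HasDerivAt Gφ (Dφ x₀) x₀ :=
      phi_hasDeriv hW0 hWzero hWc hWd hWm hgm hgb hM0 hM hr1 hx₀ hBint
    have hHt : HasDerivAt Hterm (Dh x₀) x₀ :=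
      hterm_hasDeriv hW0 hWzero hWc hWd hWm hhm hhb hM0 hM hr1 hx₀
    have hAlt : HasDerivAt Ualt
        (g A * (q * W (x₀ - A) - q / Φ * deriv W (x₀ - A)) + deriv W (x₀ - A) * ρ - Dφ x₀
          + deriv W (x₀ - A) * H - Dh x₀) x₀ := by
      have h1 : HasDerivAt (fun x => (1 + q * ∫ y in (0:ℝ)..(x - A), W y) - q / Φ * W (x - A))
          (q * W (x₀ - A) - q / Φ * deriv W (x₀ - A)) x₀ :=
        ((hZ2.const_mul q).const_add 1).sub (hWx.const_mul (q / Φ))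
      exact ((((h1.const_mul (g A)).add (hWx.mul_const ρ)).sub hφ).add
        (hWx.mul_const H)).sub hHt
    refine hAlt.congr_of_eventuallyEq ?_
    exact eventually_of_mem (isOpen_Ioo.mem_nhds hx₀) hUeqOn
  -- ## the limit of the derivative
  have hmap : Tendsto (fun x => x - A) (nhdsWithin A (Set.Ioi A)) (nhdsWithin 0 (Set.Ioi 0)) := by
    refine tendsto_nhdsWithin_iff.mpr ⟨?_, ?_⟩
    · have : Tendsto (fun x : ℝ => x - A) (nhds A) (nhds (A - A)) :=
        (continuous_id.sub continuous_const).tendsto A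
      rw [sub_self] at this
      exact this.mono_left nhdsWithin_le_nhds
    · filter_upwards [self_mem_nhdsWithin] with x hx
      exact sub_pos.mpr (Set.mem_Ioi.mp hx)
  have hWtend : Tendsto (fun x => W (x - A)) (nhdsWithin A (Set.Ioi A)) (nhds 0) := by
    have := ((Wcont hW0 hWzero hWc).tendsto 0).comp (hmap.mono_right nhdsWithin_le_nhds)
    rwa [hWzero] at this
  have hW'tend : Tendsto (fun x => deriv W (x - A)) (nhdsWithin A (Set.Ioi A)) (nhds W'0) :=
    hW'0.comp hmap
  have hIoomem : Set.Ioo A (A + r) ∈ nhdsWithin A (Set.Ioi A) :=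
    Ioo_mem_nhdsGT_of_mem ⟨le_rfl, by linarith⟩
  have hmapn : Tendsto (fun x => x - A) (nhdsWithin A (Set.Ioi A)) (nhds 0) :=
    hmap.mono_right nhdsWithin_le_nhds
  have hDφtend : Tendsto Dφ (nhdsWithin A (Set.Ioi A)) (nhds 0) := by
    rw [hDφdef]
    have hkey := tendsto_integral_filter_of_dominated_convergence
      (μ := ν.restrict (Set.Ioi 0)) (l := nhdsWithin A (Set.Ioi A))
      (F := fun x u => ∫ z in Set.Ioc (0:ℝ) u, deriv W (x - A - z) * (g (z + A - u) - g A))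
      (f := fun _ => (0:ℝ)) (bound := fun u => M * B u) ?_ ?_ (hBint.const_mul M) ?_
    · simpa using hkey
    · refine Eventually.of_forall ?_
      intro x
      have hf : Measurable (fun p : ℝ × ℝ => deriv W (x - A - p.2) * (g (p.2 + A - p.1) - g A)) :=
        ((measurable_deriv W).comp (by fun_prop)).mul
          ((hgm.comp (by fun_prop)).sub measurable_const)
      exact (meas_param hf measurable_id).aestronglyMeasurable
    · filter_upwards [hIoomem] with x hx
      refine (ae_restrict_iff' measurableSet_Ioi).mpr (Eventually.of_forall ?_)
      intro u hu
      have hu0 : (0:ℝ) < u := hu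
      have hmm : x - A ≤ min u r ∨ min u r = u := by
        rcases le_total r u with hh | hh
        · exact Or.inl (by rw [min_eq_right hh]; linarith [hx.2])
        · exact Or.inr (min_eq_left hh)
      rw [Real.norm_eq_abs]
      exact corW' hW0 hWzero hWc hWd hgm hgb hM0 hM hr1 hu0 hx
        (le_min hu0.le hr0.le) (min_le_left _ _) hmm
    · refine (ae_restrict_iff' measurableSet_Ioi).mpr (Eventually.of_forall ?_)
      intro u hu
      have hu0 : (0:ℝ) < u := hu
      obtain ⟨bigM, hbigM0, hbigM⟩ := Δbound (A := A) hgb hu0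
      refine squeeze_zero_norm' (a := fun x => M * bigM * (x - A)) ?_ ?_
      · filter_upwards [hIoomem] with x hx
        have hmm : x - A ≤ min u (x - A) ∨ min u (x - A) = u := by
          rcases le_total u (x - A) with hh | hh
          · exact Or.inr (min_eq_left hh)
          · exact Or.inl (by rw [min_eq_right hh])
        have hmin0 : 0 ≤ min u (x - A) := le_min hu0.le (by linarith [hx.1])
        have hc1 := corW' hW0 hWzero hWc hWd hgm hgb hM0 hM hr1 hu0 hx
          hmin0 (min_le_left _ _) hmm
        rw [Real.norm_eq_abs]
        refine le_trans hc1 ?_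
        have hI : (∫ z in Set.Ioc (0:ℝ) (min u (x - A)), |g (z + A - u) - g A|)
            ≤ bigM * (x - A) := by
          have hfin : (volume : Measure ℝ) (Set.Ioc (0:ℝ) (min u (x - A))) < ⊤ := by simp
          have hb := norm_setIntegral_le_of_norm_le_const (μ := (volume : Measure ℝ))
            (s := Set.Ioc (0:ℝ) (min u (x - A))) (f := fun z => |g (z + A - u) - g A|) hfin
            (fun z hz => by
              rw [Real.norm_eq_abs, abs_abs]
              exact hbigM z ⟨hz.1, le_trans hz.2 (min_le_left _ _)⟩)
          rw [Real.norm_eq_abs, Measure.real] at hb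
          have hvol : ((volume : Measure ℝ) (Set.Ioc (0:ℝ) (min u (x - A)))).toReal
              = min u (x - A) := by
            rw [Real.volume_Ioc, ENNReal.toReal_ofReal (by linarith)]
            ring
          rw [hvol] at hb
          refine le_trans (le_abs_self _) (le_trans hb ?_)
          exact mul_le_mul_of_nonneg_left (min_le_right _ _) hbigM0
        calc M * ∫ z in Set.Ioc (0:ℝ) (min u (x - A)), |g (z + A - u) - g A|
            ≤ M * (bigM * (x - A)) := by
              refine mul_le_mul_of_nonneg_left hI hM0
          _ = M * bigM * (x - A) := by ring
      · have : Tendsto (fun x => M * bigM * (x - A)) (nhdsWithin A (Set.Ioi A))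
            (nhds (M * bigM * 0)) := hmapn.const_mul (M * bigM)
        rwa [mul_zero] at this
  have hDhtend : Tendsto Dh (nhdsWithin A (Set.Ioi A)) (nhds 0) := by
    refine squeeze_zero_norm' (a := fun x => M * max Mh 0 * (x - A)) ?_ ?_
    · filter_upwards [hIoomem] with x hx
      rw [Real.norm_eq_abs, hDhdef]
      exact hterm_deriv_bound hW0 hhm hhb hM0 hM hMh hx.1 (by linarith [hx.2])
    · have : Tendsto (fun x => M * max Mh 0 * (x - A)) (nhdsWithin A (Set.Ioi A))
          (nhds (M * max Mh 0 * 0)) := hmapn.const_mul (M * max Mh 0)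
      rwa [mul_zero] at this
  have hmain : Tendsto (fun x => deriv (Ufun q Φ ν W g h A) x) (nhdsWithin A (Set.Ioi A))
      (nhds (W'0 * PsiFun q Φ ν g h A)) := by
    have hEtend : Tendsto (fun x =>
        g A * (q * W (x - A) - q / Φ * deriv W (x - A)) + deriv W (x - A) * ρ - Dφ x
          + deriv W (x - A) * H - Dh x) (nhdsWithin A (Set.Ioi A))
        (nhds (g A * (q * 0 - q / Φ * W'0) + W'0 * ρ - 0 + W'0 * H - 0)) := by
      exact (((((hWtend.const_mul q).sub (hW'tend.const_mul (q / Φ))).const_mul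
        (g A)).add (hW'tend.mul_const ρ)).sub hDφtend).add (hW'tend.mul_const H) |>.sub hDhtend
    have hval : g A * (q * 0 - q / Φ * W'0) + W'0 * ρ - 0 + W'0 * H - 0
        = W'0 * PsiFun q Φ ν g h A := by
      rw [PsiFun, ← hρdef, ← hHdef]; ring
    rw [hval] at hEtend
    refine hEtend.congr' ?_
    filter_upwards [hIoomem] with x hx
    exact ((hUderiv x hx).deriv).symm
  refine ⟨hmain, ?_⟩
  intro σ hσ hWσ
  have hσ2 : (0:ℝ) < σ ^ 2 := by positivity
  constructor
  · intro hlim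
    have huniq : W'0 * PsiFun q Φ ν g h A = deriv g A := tendsto_nhds_unique hmain hlim
    rw [hWσ] at huniq
    field_simp at huniq
    nlinarith [huniq]
  · intro hPsi
    have : W'0 * PsiFun q Φ ν g h A = deriv g A := by
      rw [hWσ, hPsi]
      field_simp
    rwa [this] at hmain
end hterm
end
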